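/- arXiv:1102.5380 — 4 statements merged into one kernel-verified Lean document; each statement's English description precedes it below -/
import Mathlib

section
/- Let (a^k)_k and (b^k)_k be two sequences of vectors belonging to the class 𝒮. Then for every n ∈ ℕ, Trace[J(a^k,b^k)^n] = Σ_{j=0}^{⌊n/2⌋} n!/((j!)² (n−2j)!) · Σ_{i=1}^k (a_i^k)^{n−2j}(b_i^k)^{2j} + o(k) as k → ∞. -/
open Filter MeasureTheory

noncomputable section

/-- The `k × k` Jacobi (real symmetric tridiagonal) matrix with diagonal entries
`a 0, …, a (k-1)` and sub/super-diagonal entries `b 0, …, b (k-2)` (0-indexed). -/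
def jacobiMatrix (k : ℕ) (a b : ℕ → ℝ) : Matrix (Fin k) (Fin k) ℝ :=
  Matrix.of fun i j =>
    if (i : ℕ) = (j : ℕ) then a i
    else if (i : ℕ) + 1 = (j : ℕ) then b i
    else if (j : ℕ) + 1 = (i : ℕ) then b j
    else 0

theorem jacobiMatrix_isHermitian (k : ℕ) (a b : ℕ → ℝ) :
    (jacobiMatrix k a b).IsHermitian := by
  show _ = _
  ext i j
  simp only [Matrix.conjTranspose_apply, jacobiMatrix, Matrix.of_apply, star_trivial]
  by_cases h1 : (i : ℕ) = (j : ℕ)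
  · have h : i = j := Fin.ext h1
    subst h
    rfl
  · have h1' : ¬ (j : ℕ) = (i : ℕ) := fun h => h1 h.symm
    by_cases h2 : (i : ℕ) + 1 = (j : ℕ)
    · have h3 : ¬ (j : ℕ) + 1 = (i : ℕ) := by omega
      simp [h1, h1', h2, h3]
    · by_cases h3 : (j : ℕ) + 1 = (i : ℕ) <;> simp [h1, h1', h2, h3]

/-- `Trace[φ(J(a,b))] = ∑ⱼ φ(λⱼ)`, the sum of `φ` over the eigenvalues of the Jacobi matrix. -/
def jacobiTrace (k : ℕ) (a b : ℕ → ℝ) (φ : ℝ → ℝ) : ℝ :=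
  ∑ i, φ ((jacobiMatrix_isHermitian k a b).eigenvalues i)

/-- The class `𝒮`: small deviations `∑ᵢ |a_{i+1}^k − a_i^k| = o(k)` and entries in `[0,1]`. -/
def MemS (a : ℕ → ℕ → ℝ) : Prop :=
  ((fun k : ℕ => ∑ i ∈ Finset.range (k - 1), |a k (i + 1) - a k i|)
      =o[Filter.atTop] fun k : ℕ => (k : ℝ)) ∧
  ∀ k : ℕ, ∀ i < k, a k i ∈ Set.Icc (0 : ℝ) 1

/-- The class `𝒮′`: for every `δ ∈ (0,1)`, `∑ᵢ |a_{i+1}^k − a_i^k| = O(k^{1−δ})`, and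
`maxᵢ |a_i^k| = O(log k)`. -/
def MemS' (a : ℕ → ℕ → ℝ) : Prop :=
  (∀ δ : ℝ, δ ∈ Set.Ioo (0 : ℝ) 1 →
    ((fun k : ℕ => ∑ i ∈ Finset.range (k - 1), |a k (i + 1) - a k i|)
        =O[Filter.atTop] fun k : ℕ => (k : ℝ) ^ (1 - δ))) ∧
  ∃ C : ℝ, ∀ᶠ k : ℕ in Filter.atTop, ∀ i < k, |a k i| ≤ C * Real.log k

/-- `μ`-distributed on `I² = [0,1]²`. -/
def MuDistributedI (a b : ℕ → ℕ → ℝ) (μ : Measure (ℝ × ℝ)) : Prop :=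
  ∀ ψ : ℝ × ℝ → ℝ, ContinuousOn ψ (Set.Icc (0 : ℝ) 1 ×ˢ Set.Icc (0 : ℝ) 1) →
    Filter.Tendsto (fun k : ℕ => (1 / (k : ℝ)) * ∑ j ∈ Finset.range k, ψ (a k j, b k j))
      Filter.atTop (nhds (∫ p, ψ p ∂μ))

/-- `μ`-distributed on `ℝ²` (test functions: bounded continuous). -/
def MuDistributedR (a b : ℕ → ℕ → ℝ) (μ : Measure (ℝ × ℝ)) : Prop :=
  ∀ ψ : ℝ × ℝ → ℝ, Continuous ψ → (∃ C : ℝ, ∀ p, |ψ p| ≤ C) →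
    Filter.Tendsto (fun k : ℕ => (1 / (k : ℝ)) * ∑ j ∈ Finset.range k, ψ (a k j, b k j))
      Filter.atTop (nhds (∫ p, ψ p ∂μ))

/-- Tightness via closed bounded rectangles. -/
def TightRect (μ : Measure (ℝ × ℝ)) : Prop :=
  ∀ ε : ℝ, 0 < ε → ∃ x₁ x₂ y₁ y₂ : ℝ,
    μ ((Set.Icc x₁ x₂ ×ˢ Set.Icc y₁ y₂)ᶜ) < ENNReal.ofReal ε

/-- Almost everywhere increasing sequence of vectors. -/
def AEIncreasing (a : ℕ → ℕ → ℝ) : Prop :=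
  Filter.Tendsto
    (fun k : ℕ => (((Finset.range (k - 1)).filter fun i => a k i ≤ a k (i + 1)).card : ℝ) / k)
    Filter.atTop (nhds 1)

/-- Almost everywhere decreasing sequence of vectors. -/
def AEDecreasing (a : ℕ → ℕ → ℝ) : Prop :=
  Filter.Tendsto
    (fun k : ℕ => (((Finset.range (k - 1)).filter fun i => a k (i + 1) ≤ a k i).card : ℝ) / k)
    Filter.atTop (nhds 1)

/-- Almost everywhere monotone sequence of vectors. -/
def AEMonotone (a : ℕ → ℕ → ℝ) : Prop :=
  AEIncreasing a ∨ AEDecreasing a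

namespace JAux

open Finset

/-! ### Walk counts -/

/-- number of ±1 walks of length m from 0 ending at x -/
def d : ℕ → ℤ → ℕ
  | 0, x => if x = 0 then 1 else 0
  | (m+1), x => d m (x - 1) + d m (x + 1)

lemma d_zero_of_range (m : ℕ) : ∀ x : ℤ, ((m:ℤ) < x ∨ x < -(m:ℤ)) → d m x = 0 := by
  induction m with
  | zero => intro x h; simp [d]; omega
  | succ m ih =>
    intro x h
    simp only [d, Nat.add_eq_zero]
    constructor <;> apply ih <;> push_cast at h ⊢ <;> omega

lemma d_zero_of_odd (m : ℕ) : ∀ x : ℤ, ¬ (2 ∣ ((m:ℤ) + x)) → d m x = 0 := by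
  induction m with
  | zero => intro x h; simp [d]; omega
  | succ m ih =>
    intro x h
    simp only [d, Nat.add_eq_zero]
    constructor <;> apply ih <;> push_cast at h ⊢ <;> omega

lemma d_eq_choose (m : ℕ) : ∀ u : ℕ, u ≤ m → d m (2*(u:ℤ) - m) = m.choose u := by
  induction m with
  | zero => intro u hu; interval_cases u; simp [d]
  | succ m ih =>
    intro u hu
    simp only [d]
    rcases Nat.eq_zero_or_pos u with rfl | hu0
    · have h1 : (2*((0:ℕ):ℤ) - (m+1:ℕ)) - 1 < -(m:ℤ) := by push_cast; omega
      rw [d_zero_of_range m _ (Or.inr h1)]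
      have h2 : (2*((0:ℕ):ℤ) - (m+1:ℕ)) + 1 = 2*((0:ℕ):ℤ) - m := by push_cast; ring
      rw [h2, ih 0 (Nat.zero_le _)]
      simp
    · rcases Nat.lt_or_ge m.succ u with h | h
      · omega
      rcases Nat.eq_or_lt_of_le hu with rfl | hu'
      · have h1 : (2*((m+1:ℕ):ℤ) - (m+1:ℕ)) + 1 > (m:ℤ) := by push_cast; omega
        rw [d_zero_of_range m _ (Or.inl h1)]
        have h2 : (2*((m+1:ℕ):ℤ) - (m+1:ℕ)) - 1 = 2*((m:ℕ):ℤ) - m := by push_cast; ring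
        rw [h2, ih m le_rfl]
        simp
      · have hum : u ≤ m := by omega
        obtain ⟨v, rfl⟩ : ∃ v, u = v + 1 := ⟨u - 1, by omega⟩
        have h1 : (2*((v+1:ℕ):ℤ) - (m+1:ℕ)) - 1 = 2*((v:ℕ):ℤ) - m := by push_cast; ring
        have h2 : (2*((v+1:ℕ):ℤ) - (m+1:ℕ)) + 1 = 2*((v+1:ℕ):ℤ) - m := by push_cast; ring
        rw [h1, h2, ih v (by omega), ih (v+1) (by omega)]
        rw [Nat.choose_succ_succ]

lemma d_self (m : ℕ) : d m 0 = if m % 2 = 0 then m.choose (m/2) else 0 := by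
  rcases Nat.even_or_odd m with ⟨j, hj⟩ | ⟨j, hj⟩
  · have h0 : (0:ℤ) = 2*((j:ℕ):ℤ) - m := by omega
    rw [h0, d_eq_choose m j (by omega)]
    have hm : m % 2 = 0 := by omega
    simp only [hm, if_pos]
    congr 1
    omega
  · rw [d_zero_of_odd m 0 (by omega)]
    have hm : m % 2 = 1 := by omega
    simp [hm]

/-! ### basic bounds on Jacobi matrices -/

lemma sum_ind_le {k : ℕ} (w : ℝ) (hw : 0 ≤ w) (P : Fin k → Prop) [DecidablePred P]
    (hP : ∀ q r, P q → P r → q = r) : (∑ q, if P q then w else 0) ≤ w := by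
  by_cases hex : ∃ q, P q
  · obtain ⟨q0, hq0⟩ := hex
    have he : ∀ q : Fin k, (if P q then w else 0) = if q = q0 then w else 0 := by
      intro q; by_cases h : P q
      · rw [if_pos h, if_pos (hP q q0 h hq0)]
      · rw [if_neg h, if_neg]; rintro rfl; exact h hq0
    rw [Finset.sum_congr rfl (fun q _ => he q), Finset.sum_ite_eq' Finset.univ]
    simp
  · push_neg at hex
    have h0 : ∀ q : Fin k, (if P q then w else 0) = 0 := fun q => if_neg (hex q)
    rw [Finset.sum_congr rfl (fun q _ => h0 q)]
    simpa using hw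

variable {k : ℕ} {a b : ℕ → ℝ}

lemma jac_apply_ne (i j : Fin k) (h1 : ¬ (i:ℕ) = j) (h2 : ¬ (i:ℕ)+1 = j) (h3 : ¬ (j:ℕ)+1 = i) :
    jacobiMatrix k a b i j = 0 := by
  simp [jacobiMatrix, h1, h2, h3]

/-- band structure of powers -/
lemma band (m : ℕ) : ∀ i p : Fin k, (jacobiMatrix k a b ^ m) i p ≠ 0 →
    (p:ℕ) ≤ (i:ℕ) + m ∧ (i:ℕ) ≤ (p:ℕ) + m := by
  induction m with
  | zero =>
    intro i p h
    rw [pow_zero] at h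
    by_cases hip : i = p
    · subst hip; omega
    · simp [Matrix.one_apply, hip] at h
  | succ m ih =>
    intro i p h
    rw [pow_succ, Matrix.mul_apply] at h
    obtain ⟨r, hr⟩ := Finset.exists_ne_zero_of_sum_ne_zero h
    have h1 := ih i r (left_ne_zero_of_mul hr.2)
    have h2 : (jacobiMatrix k a b) r p ≠ 0 := right_ne_zero_of_mul hr.2
    by_contra hc
    apply h2
    apply jac_apply_ne <;> omega

/-- pointwise bound on entries of the Jacobi matrix itself -/
lemma abs_jac_le (ha : ∀ i < k, |a i| ≤ 1) (hb : ∀ i < k, |b i| ≤ 1) (p q : Fin k) :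
    |jacobiMatrix k a b p q| ≤
      (if (p:ℕ) = (q:ℕ) then 1 else 0) + (if (p:ℕ)+1 = (q:ℕ) then 1 else 0)
        + (if (q:ℕ)+1 = (p:ℕ) then (1:ℝ) else 0) := by
  by_cases h1 : (p:ℕ) = (q:ℕ)
  · have h2 : ¬ (p:ℕ)+1 = (q:ℕ) := by omega
    have h3 : ¬ (q:ℕ)+1 = (p:ℕ) := by omega
    simp only [jacobiMatrix, Matrix.of_apply, if_pos h1, if_neg h2, if_neg h3]
    have := ha p p.2; linarith
  · by_cases h2 : (p:ℕ)+1 = (q:ℕ)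
    · have h3 : ¬ (q:ℕ)+1 = (p:ℕ) := by omega
      simp only [jacobiMatrix, Matrix.of_apply, if_neg h1, if_pos h2, if_neg h3]
      have := hb p p.2; linarith
    · by_cases h3 : (q:ℕ)+1 = (p:ℕ)
      · simp only [jacobiMatrix, Matrix.of_apply, if_neg h1, if_neg h2, if_pos h3]
        have := hb q q.2; linarith
      · simp only [jacobiMatrix, Matrix.of_apply, if_neg h1, if_neg h2, if_pos h3, if_neg h3]
        norm_num

/-- row ℓ¹ bound -/
lemma rowsum_one (ha : ∀ i < k, |a i| ≤ 1) (hb : ∀ i < k, |b i| ≤ 1) (p : Fin k) :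
    ∑ q, |jacobiMatrix k a b p q| ≤ 3 := by
  calc ∑ q, |jacobiMatrix k a b p q| ≤
      ∑ q : Fin k, ((if (p:ℕ) = (q:ℕ) then 1 else 0) + (if (p:ℕ)+1 = (q:ℕ) then 1 else 0)
        + (if (q:ℕ)+1 = (p:ℕ) then (1:ℝ) else 0)) :=
        Finset.sum_le_sum fun q _ => abs_jac_le ha hb p q
    _ ≤ 1 + 1 + 1 := by
        rw [Finset.sum_add_distrib, Finset.sum_add_distrib]
        gcongr
        · exact sum_ind_le 1 one_pos.le _ (fun q r hq hr => Fin.ext (by omega))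
        · exact sum_ind_le 1 one_pos.le _ (fun q r hq hr => Fin.ext (by omega))
        · exact sum_ind_le 1 one_pos.le _ (fun q r hq hr => Fin.ext (by omega))
    _ ≤ 3 := by norm_num

lemma rowsum_pow (ha : ∀ i < k, |a i| ≤ 1) (hb : ∀ i < k, |b i| ≤ 1) (m : ℕ) (p : Fin k) :
    ∑ q, |(jacobiMatrix k a b ^ m) p q| ≤ 3 ^ m := by
  induction m generalizing p with
  | zero =>
    rw [pow_zero]
    calc ∑ q, |(1 : Matrix (Fin k) (Fin k) ℝ) p q|
        = ∑ q : Fin k, (if p = q then (1:ℝ) else 0) := by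
          apply Finset.sum_congr rfl; intro q _
          rw [Matrix.one_apply]
          split_ifs <;> simp
      _ ≤ 1 := sum_ind_le 1 one_pos.le _ (fun q r hq hr => by omega)
      _ ≤ 3 ^ 0 := by norm_num
  | succ m ih =>
    rw [pow_succ]
    calc ∑ q, |(jacobiMatrix k a b ^ m * jacobiMatrix k a b) p q|
        ≤ ∑ q : Fin k, ∑ r : Fin k, |(jacobiMatrix k a b ^ m) p r| * |jacobiMatrix k a b r q| := by
          apply Finset.sum_le_sum; intro q _
          rw [Matrix.mul_apply]
          calc |∑ r, (jacobiMatrix k a b ^ m) p r * jacobiMatrix k a b r q|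
              ≤ ∑ r, |(jacobiMatrix k a b ^ m) p r * jacobiMatrix k a b r q| :=
                Finset.abs_sum_le_sum_abs _ _
            _ = ∑ r, |(jacobiMatrix k a b ^ m) p r| * |jacobiMatrix k a b r q| := by
                simp [abs_mul]
      _ = ∑ r : Fin k, |(jacobiMatrix k a b ^ m) p r| * ∑ q : Fin k, |jacobiMatrix k a b r q| := by
          rw [Finset.sum_comm]; simp [Finset.mul_sum]
      _ ≤ ∑ r : Fin k, |(jacobiMatrix k a b ^ m) p r| * 3 := by
          apply Finset.sum_le_sum; intro r _
          exact mul_le_mul_of_nonneg_left (rowsum_one ha hb r) (abs_nonneg _)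
      _ = (∑ r, |(jacobiMatrix k a b ^ m) p r|) * 3 := by rw [← Finset.sum_mul]
      _ ≤ 3 ^ m * 3 := mul_le_mul_of_nonneg_right (ih p) (by norm_num)
      _ = 3 ^ (m+1) := by ring

lemma abs_pow_entry (ha : ∀ i < k, |a i| ≤ 1) (hb : ∀ i < k, |b i| ≤ 1) (m : ℕ) (p q : Fin k) :
    |(jacobiMatrix k a b ^ m) p q| ≤ 3 ^ m :=
  le_trans (Finset.single_le_sum (f := fun q => |(jacobiMatrix k a b ^ m) p q|)
    (fun _ _ => abs_nonneg _) (Finset.mem_univ q)) (rowsum_pow ha hb m p)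

end JAux

namespace JAux
open Finset
variable {k : ℕ}

/-! ### constant Jacobi matrices -/

lemma natCast_matrix (c : ℕ) : (c : Matrix (Fin k) (Fin k) ℝ) = (c:ℝ) • 1 := by
  rw [← Matrix.diagonal_natCast]
  ext i j
  simp [Matrix.diagonal, Matrix.one_apply]

/-- the free shift part -/
def S (k : ℕ) : Matrix (Fin k) (Fin k) ℝ := jacobiMatrix k (fun _ => 0) (fun _ => 1)

lemma S_pow_apply (m : ℕ) : ∀ i q : Fin k, m ≤ (i:ℕ) → (i:ℕ) + m < k →
    ((S k) ^ m) i q = (d m ((q:ℤ) - (i:ℤ)) : ℝ) := by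
  induction m with
  | zero =>
    intro i q _ _
    rw [pow_zero, Matrix.one_apply]
    by_cases h : i = q
    · subst h; simp [d]
    · have h' : ¬ ((q:ℤ) - (i:ℤ) = 0) := by
        simp only [sub_eq_zero]
        intro hc
        exact h (Fin.ext (by exact_mod_cast hc.symm))
      simp [d, h, h']
  | succ m ih =>
    intro i q him hik
    obtain ⟨im, hvm⟩ : ∃ im : Fin k, (im:ℕ) = (i:ℕ) - 1 := ⟨⟨(i:ℕ)-1, by omega⟩, rfl⟩
    obtain ⟨ip, hvp⟩ : ∃ ip : Fin k, (ip:ℕ) = (i:ℕ) + 1 := ⟨⟨(i:ℕ)+1, by omega⟩, rfl⟩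
    have hne : im ≠ ip := by
      intro hc; rw [hc] at hvm; omega
    rw [pow_succ', Matrix.mul_apply]
    have hzero : ∀ p ∈ (univ : Finset (Fin k)), p ∉ ({im, ip} : Finset (Fin k)) →
        (S k) i p * ((S k) ^ m) p q = 0 := by
      intro p _ hp
      simp only [mem_insert, mem_singleton] at hp
      push_neg at hp
      have hp1 : (p:ℕ) ≠ (i:ℕ) - 1 := fun hc => hp.1 (Fin.ext (by omega))
      have hp2 : (p:ℕ) ≠ (i:ℕ) + 1 := fun hc => hp.2 (Fin.ext (by omega))
      have h1 : ¬ (i:ℕ) + 1 = (p:ℕ) := by omega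
      have h3 : ¬ (p:ℕ) + 1 = (i:ℕ) := by omega
      by_cases h0 : (i:ℕ) = (p:ℕ)
      · simp [S, jacobiMatrix, h0]
      · simp [S, jacobiMatrix, h0, h1, h3]
    rw [← Finset.sum_subset (Finset.subset_univ ({im, ip} : Finset (Fin k))) hzero,
      Finset.sum_pair hne]
    have e1 : (S k) i im = 1 := by
      have h0 : ¬ (i:ℕ) = (im:ℕ) := by omega
      have h1 : ¬ (i:ℕ) + 1 = (im:ℕ) := by omega
      have h2 : (im:ℕ) + 1 = (i:ℕ) := by omega
      simp [S, jacobiMatrix, h0, h1, h2]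
    have e2 : (S k) i ip = 1 := by
      have h0 : ¬ (i:ℕ) = (ip:ℕ) := by omega
      have h1 : (i:ℕ) + 1 = (ip:ℕ) := by omega
      simp [S, jacobiMatrix, h0, h1]
    rw [e1, e2, one_mul, one_mul,
      ih im q (by omega) (by omega), ih ip q (by omega) (by omega)]
    have hc1 : ((q:ℤ) - (im:ℤ)) = ((q:ℤ) - (i:ℤ)) + 1 := by
      have h4 : ((im:ℕ):ℤ) = ((i:ℕ):ℤ) - 1 := by omega
      rw [h4]; ring
    have hc2 : ((q:ℤ) - (ip:ℤ)) = ((q:ℤ) - (i:ℤ)) - 1 := by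
      have h4 : ((ip:ℕ):ℤ) = ((i:ℕ):ℤ) + 1 := by omega
      rw [h4]; ring
    rw [hc1, hc2,
      show d (m+1) ((q:ℤ) - (i:ℤ)) = d m (((q:ℤ) - (i:ℤ)) - 1) + d m (((q:ℤ) - (i:ℤ)) + 1) from rfl]
    push_cast
    ring

/-- the constant Jacobi matrix decomposes -/
lemma const_jac_eq (x y : ℝ) :
    jacobiMatrix k (fun _ => x) (fun _ => y) = x • (1 : Matrix (Fin k) (Fin k) ℝ) + y • S k := by
  ext i j
  simp only [Matrix.add_apply, Matrix.smul_apply, Matrix.one_apply, S, jacobiMatrix,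
    Matrix.of_apply, smul_eq_mul]
  by_cases h1 : (i:ℕ) = (j:ℕ)
  · have h : i = j := Fin.ext h1
    subst h
    simp [h1]
  · have h : ¬ i = j := fun hc => h1 (by rw [hc])
    by_cases h2 : (i:ℕ) + 1 = (j:ℕ)
    · have h3 : ¬ (j:ℕ) + 1 = (i:ℕ) := by omega
      simp [h1, h2, h3, h]
    · by_cases h3 : (j:ℕ) + 1 = (i:ℕ) <;> simp [h1, h2, h3, h]

lemma const_jac_pow_diag (x y : ℝ) (n : ℕ) (i : Fin k) (hin : n ≤ (i:ℕ)) (hik : (i:ℕ) + n < k) :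
    ((jacobiMatrix k (fun _ => x) (fun _ => y)) ^ n) i i =
      ∑ j ∈ range (n/2 + 1), ((n.choose (2*j) : ℝ) * ((2*j).choose j : ℝ)) * x^(n - 2*j) * y^(2*j) := by
  rw [const_jac_eq]
  have hcomm : Commute (x • (1 : Matrix (Fin k) (Fin k) ℝ)) (y • S k) :=
    ((Commute.one_left (S k)).smul_left x).smul_right y
  rw [Commute.add_pow hcomm, Matrix.sum_apply]
  have hterm : ∀ m ∈ range (n+1),
      ((x • (1 : Matrix (Fin k) (Fin k) ℝ)) ^ m * (y • S k) ^ (n - m) * (n.choose m : ℕ)) i i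
        = (n.choose m : ℝ) * x ^ m * y ^ (n-m) * (d (n-m) 0 : ℝ) := by
    intro m hm
    rw [smul_pow, smul_pow, one_pow, smul_mul_smul_comm, one_mul, natCast_matrix,
      mul_smul_comm, mul_one, smul_smul, Matrix.smul_apply, smul_eq_mul]
    rw [S_pow_apply (n-m) i i (by omega) (by omega), sub_self]
    ring
  rw [Finset.sum_congr rfl hterm]
  have hreflect : ∑ m ∈ range (n+1), (n.choose m : ℝ) * x ^ m * y ^ (n-m) * (d (n-m) 0 : ℝ)
      = ∑ m ∈ range (n+1), (n.choose m : ℝ) * x ^ (n-m) * y ^ m * (d m 0 : ℝ) := by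
    rw [← Finset.sum_range_reflect]
    apply Finset.sum_congr rfl
    intro m hm
    simp only [mem_range] at hm
    have h1 : n + 1 - 1 - m = n - m := by omega
    have h2 : n - (n - m) = m := by omega
    rw [h1, h2, Nat.choose_symm (by omega)]
  rw [hreflect]
  have hd : ∀ m ∈ range (n+1), (n.choose m : ℝ) * x^(n-m) * y^m * (d m 0 : ℝ)
      = if m % 2 = 0 then ((n.choose m : ℝ) * ((m.choose (m/2)) : ℝ)) * x^(n-m) * y^m else 0 := by
    intro m _
    rw [d_self]
    split_ifs with h
    · ring
    · simp
  rw [Finset.sum_congr rfl hd, ← Finset.sum_filter]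
  apply Finset.sum_nbij' (i := fun m => m / 2) (j := fun j => 2 * j)
  · intro m hm
    simp only [mem_filter, mem_range] at hm
    simp only [mem_range]
    omega
  · intro j hj
    simp only [mem_range] at hj
    simp only [mem_filter, mem_range]
    omega
  · intro m hm
    simp only [mem_filter, mem_range] at hm
    omega
  · intro j hj
    omega
  · intro m hm
    simp only [mem_filter, mem_range] at hm
    have h2 : 2 * (m / 2) = m := by omega
    rw [h2]

/-! ### telescoping and counting -/

lemma tele {R : Type*} [Ring R] (A B : R) (n : ℕ) :
    A ^ n - B ^ n = ∑ m ∈ range n, A ^ m * (A - B) * B ^ (n - 1 - m) := by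
  induction n with
  | zero => simp
  | succ n ih =>
    rw [Finset.sum_range_succ]
    have h1 : ∀ m ∈ range n, A ^ m * (A - B) * B ^ (n + 1 - 1 - m)
        = (A ^ m * (A - B) * B ^ (n - 1 - m)) * B := by
      intro m hm
      simp only [mem_range] at hm
      rw [show n + 1 - 1 - m = (n - 1 - m) + 1 from by omega, pow_succ]
      rw [mul_assoc, mul_assoc, mul_assoc]
    rw [Finset.sum_congr rfl h1, ← Finset.sum_mul, ← ih]
    have h0 : n + 1 - 1 - n = 0 := by omega
    rw [h0, pow_zero, mul_one]
    noncomm_ring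

lemma choose_cast_identity (n j : ℕ) (h : 2*j ≤ n) :
    ((n.choose (2*j) : ℝ) * (((2*j).choose j) : ℝ))
      = (n.factorial : ℝ) / (((j.factorial : ℝ))^2 * (((n - 2*j).factorial : ℝ))) := by
  have h1 : n.choose (2*j) * (2*j).factorial * (n - 2*j).factorial = n.factorial :=
    Nat.choose_mul_factorial_mul_factorial h
  have h2 : (2*j).choose j * j.factorial * (2*j - j).factorial = (2*j).factorial :=
    Nat.choose_mul_factorial_mul_factorial (by omega)
  have h3 : 2*j - j = j := by omega
  rw [h3] at h2
  have hne : ((j.factorial : ℝ))^2 * (((n - 2*j).factorial : ℝ)) ≠ 0 := by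
    positivity
  rw [eq_div_iff hne]
  have hkey : n.choose (2*j) * (2*j).choose j * (j.factorial * j.factorial * (n-2*j).factorial)
      = n.factorial := by
    calc n.choose (2*j) * (2*j).choose j * (j.factorial * j.factorial * (n-2*j).factorial)
        = n.choose (2*j) * ((2*j).choose j * j.factorial * j.factorial) * (n-2*j).factorial := by
          ring
      _ = n.choose (2*j) * (2*j).factorial * (n-2*j).factorial := by rw [h2]
      _ = n.factorial := h1
  calc (n.choose (2*j) : ℝ) * (((2*j).choose j) : ℝ) * (((j.factorial:ℝ))^2 * ((n-2*j).factorial : ℝ))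
      = ((n.choose (2*j) * (2*j).choose j * (j.factorial * j.factorial * (n-2*j).factorial) : ℕ) : ℝ) := by
        push_cast; ring
    _ = (n.factorial : ℝ) := by rw [hkey]

/-- telescoping variation bound -/
lemma abs_diff_le_tv (c : ℕ → ℝ) (i p : ℕ) (h : i ≤ p) :
    |c p - c i| ≤ ∑ l ∈ Ico i p, |c (l+1) - c l| := by
  have h0 : c p - c i = ∑ l ∈ Ico i p, (c (l+1) - c l) := by
    rw [Finset.sum_Ico_eq_sub _ h, Finset.sum_range_sub (fun l => c l),
      Finset.sum_range_sub (fun l => c l)]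
    ring
  rw [h0]
  exact Finset.abs_sum_le_sum_abs _ _

/-- variation within the window -/
lemma abs_diff_le_window (n k : ℕ) (c : ℕ → ℝ) (i p : ℕ) (hik : i < k) (hpk : p < k)
    (hp1 : p ≤ i + n) (hp2 : i ≤ p + n) :
    |c p - c i| ≤ ∑ l ∈ (range (k-1)).filter (fun l => i ≤ l + n ∧ l + 1 ≤ i + n),
      |c (l+1) - c l| := by
  rcases le_total i p with h | h
  · refine le_trans (abs_diff_le_tv c i p h) ?_
    apply Finset.sum_le_sum_of_subset_of_nonneg
    · intro l hl
      simp only [mem_Ico] at hl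
      simp only [mem_filter, mem_range]
      omega
    · intro l _ _; exact abs_nonneg _
  · rw [abs_sub_comm]
    refine le_trans (abs_diff_le_tv c p i h) ?_
    apply Finset.sum_le_sum_of_subset_of_nonneg
    · intro l hl
      simp only [mem_Ico] at hl
      simp only [mem_filter, mem_range]
      omega
    · intro l _ _; exact abs_nonneg _

/-- local variation in a window of size `n` around `i` -/
def winVar (n k : ℕ) (a b : ℕ → ℝ) (i : ℕ) : ℝ :=
  ∑ l ∈ (range (k-1)).filter (fun l => i ≤ l + n ∧ l + 1 ≤ i + n),
    (|a (l+1) - a l| + |b (l+1) - b l|)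

/-- boundary cardinality bound -/
lemma boundary_card (n k : ℕ) :
    ((univ : Finset (Fin k)).filter (fun i : Fin k => ¬(n ≤ (i:ℕ) ∧ (i:ℕ) + n < k))).card ≤ 2 * n := by
  have hsub : (univ : Finset (Fin k)).filter (fun i : Fin k => ¬(n ≤ (i:ℕ) ∧ (i:ℕ) + n < k))
      ⊆ (univ.filter (fun i : Fin k => (i:ℕ) < n)) ∪ (univ.filter (fun i : Fin k => k ≤ (i:ℕ) + n)) := by
    intro i hi
    simp only [mem_filter, mem_univ, true_and] at hi
    simp only [mem_union, mem_filter, mem_univ, true_and]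
    omega
  refine le_trans (Finset.card_le_card hsub) (le_trans (Finset.card_union_le _ _) ?_)
  have h1 : (univ.filter (fun i : Fin k => (i:ℕ) < n)).card ≤ n := by
    have := Finset.card_le_card_of_injOn (f := fun i : Fin k => (i:ℕ))
      (s := univ.filter (fun i : Fin k => (i:ℕ) < n)) (t := range n)
      (by intro i hi; simp only [mem_coe, mem_filter] at hi; simp [hi.2])
      (by intro x _ y _ h; exact Fin.ext h)
    simpa using this
  have h2 : (univ.filter (fun i : Fin k => k ≤ (i:ℕ) + n)).card ≤ n := by
    have := Finset.card_le_card_of_injOn (f := fun i : Fin k => (i:ℕ) + n - k)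
      (s := univ.filter (fun i : Fin k => k ≤ (i:ℕ) + n)) (t := range n)
      (by intro i hi
          simp only [mem_coe, mem_filter, mem_univ, true_and] at hi
          simp only [mem_coe, mem_range]
          have := i.2
          omega)
      (by intro x hx y hy h
          dsimp only at h
          simp only [coe_filter, Set.mem_setOf_eq] at hx hy
          exact Fin.ext (by omega))
    simpa using this
  omega

/-- window double-counting -/
lemma window_sum_le (n k : ℕ) (f : ℕ → ℝ) (hf : ∀ l, 0 ≤ f l) :
    ∑ i : Fin k, ∑ l ∈ (range (k-1)).filter (fun l => (i:ℕ) ≤ l + n ∧ l + 1 ≤ (i:ℕ) + n), f l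
      ≤ (2*n : ℝ) * ∑ l ∈ range (k-1), f l := by
  have step1 : ∀ i : Fin k,
      ∑ l ∈ (range (k-1)).filter (fun l => (i:ℕ) ≤ l + n ∧ l + 1 ≤ (i:ℕ) + n), f l
        = ∑ l ∈ range (k-1), if (i:ℕ) ≤ l + n ∧ l + 1 ≤ (i:ℕ) + n then f l else 0 := by
    intro i; rw [Finset.sum_filter]
  calc ∑ i : Fin k, ∑ l ∈ (range (k-1)).filter (fun l => (i:ℕ) ≤ l + n ∧ l + 1 ≤ (i:ℕ) + n), f l
      = ∑ l ∈ range (k-1), ∑ i : Fin k, if (i:ℕ) ≤ l + n ∧ l + 1 ≤ (i:ℕ) + n then f l else 0 := by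
        rw [Finset.sum_congr rfl (fun i _ => step1 i), Finset.sum_comm]
    _ ≤ ∑ l ∈ range (k-1), (2*n : ℝ) * f l := by
        apply Finset.sum_le_sum
        intro l _
        rw [← Finset.sum_filter, Finset.sum_const, nsmul_eq_mul]
        have hcard : ((univ : Finset (Fin k)).filter
            (fun i : Fin k => (i:ℕ) ≤ l + n ∧ l + 1 ≤ (i:ℕ) + n)).card ≤ 2*n := by
          have := Finset.card_le_card_of_injOn (f := fun i : Fin k => (i:ℕ) + n - (l + 1))
            (s := (univ : Finset (Fin k)).filter (fun i : Fin k => (i:ℕ) ≤ l + n ∧ l + 1 ≤ (i:ℕ) + n))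
            (t := range (2*n))
            (by intro i hi
                simp only [mem_coe, mem_filter, mem_univ, true_and] at hi
                simp only [mem_coe, mem_range]
                omega)
            (by intro x hx y hy h
                dsimp only at h
                simp only [coe_filter, Set.mem_setOf_eq] at hx hy
                exact Fin.ext (by omega))
          simpa using this
        exact mul_le_mul_of_nonneg_right (by exact_mod_cast hcard) (hf l)
    _ = (2*n : ℝ) * ∑ l ∈ range (k-1), f l := by rw [Finset.mul_sum]

end JAux

namespace JAux
open Finset

lemma diag_diff (n k : ℕ) (a b : ℕ → ℝ) (ha : ∀ l < k, |a l| ≤ 1) (hb : ∀ l < k, |b l| ≤ 1)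
    (i : Fin k) :
    |(jacobiMatrix k a b ^ n) i i
        - (jacobiMatrix k (fun _ => a (i:ℕ)) (fun _ => b (i:ℕ)) ^ n) i i|
      ≤ ((n : ℝ) * 3 ^ n) * winVar n k a b (i:ℕ) := by
  set A := jacobiMatrix k a b with hA
  set B := jacobiMatrix k (fun _ => a (i:ℕ)) (fun _ => b (i:ℕ)) with hB
  set W := winVar n k a b (i:ℕ) with hWdef
  have hW0 : 0 ≤ W := Finset.sum_nonneg (fun l _ => add_nonneg (abs_nonneg _) (abs_nonneg _))
  have hBa : ∀ l < k, |(fun _ : ℕ => a (i:ℕ)) l| ≤ 1 := fun l _ => ha i i.2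
  have hBb : ∀ l < k, |(fun _ : ℕ => b (i:ℕ)) l| ≤ 1 := fun l _ => hb i i.2
  have haw : ∀ pp : Fin k, (pp:ℕ) ≤ (i:ℕ) + n → (i:ℕ) ≤ (pp:ℕ) + n → |a pp - a (i:ℕ)| ≤ W := by
    intro pp h1 h2
    refine le_trans (abs_diff_le_window n k a (i:ℕ) (pp:ℕ) i.2 pp.2 h1 h2) ?_
    rw [hWdef]
    apply Finset.sum_le_sum
    intro l _
    exact le_add_of_nonneg_right (abs_nonneg _)
  have hbw : ∀ pp : Fin k, (pp:ℕ) ≤ (i:ℕ) + n → (i:ℕ) ≤ (pp:ℕ) + n → |b pp - b (i:ℕ)| ≤ W := by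
    intro pp h1 h2
    refine le_trans (abs_diff_le_window n k b (i:ℕ) (pp:ℕ) i.2 pp.2 h1 h2) ?_
    rw [hWdef]
    apply Finset.sum_le_sum
    intro l _
    exact le_add_of_nonneg_left (abs_nonneg _)
  have hsub : ∀ p q : Fin k, (p:ℕ) ≤ (i:ℕ) + (n-1) → (i:ℕ) ≤ (p:ℕ) + (n-1) → 1 ≤ n →
      |(A - B) p q| ≤ (if (p:ℕ) = (q:ℕ) then W else 0) + (if (p:ℕ)+1 = (q:ℕ) then W else 0)
        + (if (q:ℕ)+1 = (p:ℕ) then W else 0) := by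
    intro p q hp1 hp2 hn1
    rw [Matrix.sub_apply]
    by_cases h1 : (p:ℕ) = (q:ℕ)
    · have h2 : ¬ (p:ℕ)+1 = (q:ℕ) := by omega
      have h3 : ¬ (q:ℕ)+1 = (p:ℕ) := by omega
      rw [if_pos h1, if_neg h2, if_neg h3]
      have he : A p q - B p q = a p - a (i:ℕ) := by
        rw [hA, hB]
        simp only [jacobiMatrix, Matrix.of_apply, if_pos h1]
      rw [he]
      have := haw p (by omega) (by omega)
      linarith
    · by_cases h2 : (p:ℕ)+1 = (q:ℕ)
      · have h3 : ¬ (q:ℕ)+1 = (p:ℕ) := by omega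
        rw [if_neg h1, if_pos h2, if_neg h3]
        have he : A p q - B p q = b p - b (i:ℕ) := by
          rw [hA, hB]
          simp only [jacobiMatrix, Matrix.of_apply, if_neg h1, if_pos h2]
        rw [he]
        have := hbw p (by omega) (by omega)
        linarith
      · by_cases h3 : (q:ℕ)+1 = (p:ℕ)
        · rw [if_neg h1, if_neg h2, if_pos h3]
          have he : A p q - B p q = b q - b (i:ℕ) := by
            rw [hA, hB]
            simp only [jacobiMatrix, Matrix.of_apply, if_neg h1, if_neg h2, if_pos h3]
          rw [he]
          have := hbw q (by omega) (by omega)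
          linarith
        · rw [if_neg h1, if_neg h2, if_neg h3]
          have he : A p q - B p q = 0 := by
            rw [hA, hB]
            simp only [jacobiMatrix, Matrix.of_apply, if_neg h1, if_neg h2, if_neg h3]
            ring
          rw [he]
          simp
  have hrowAB : ∀ p : Fin k, (p:ℕ) ≤ (i:ℕ) + (n-1) → (i:ℕ) ≤ (p:ℕ) + (n-1) → 1 ≤ n →
      ∑ q, |(A - B) p q| ≤ 3 * W := by
    intro p hp1 hp2 hn1
    calc ∑ q, |(A - B) p q|
        ≤ ∑ q : Fin k, ((if (p:ℕ) = (q:ℕ) then W else 0) + (if (p:ℕ)+1 = (q:ℕ) then W else 0)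
            + (if (q:ℕ)+1 = (p:ℕ) then W else 0)) :=
          Finset.sum_le_sum fun q _ => hsub p q hp1 hp2 hn1
      _ ≤ W + W + W := by
          rw [Finset.sum_add_distrib, Finset.sum_add_distrib]
          gcongr
          · exact sum_ind_le W hW0 _ (fun q r hq hr => Fin.ext (by omega))
          · exact sum_ind_le W hW0 _ (fun q r hq hr => Fin.ext (by omega))
          · exact sum_ind_le W hW0 _ (fun q r hq hr => Fin.ext (by omega))
      _ = 3 * W := by ring
  have hterm : ∀ m ∈ range n, |(A^m * (A - B) * B^(n-1-m)) i i| ≤ 3^n * W := by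
    intro m hm
    simp only [mem_range] at hm
    rw [mul_assoc, Matrix.mul_apply]
    calc |∑ p, (A^m) i p * ((A - B) * B^(n-1-m)) p i|
        ≤ ∑ p, |(A^m) i p| * |((A - B) * B^(n-1-m)) p i| := by
          refine le_trans (Finset.abs_sum_le_sum_abs _ _) (le_of_eq ?_)
          apply Finset.sum_congr rfl
          intro p _
          rw [abs_mul]
      _ ≤ ∑ p, |(A^m) i p| * (3 * W * 3^(n-1-m)) := by
          apply Finset.sum_le_sum
          intro p _
          by_cases hz : (A^m) i p = 0
          · rw [hz, abs_zero, zero_mul, zero_mul]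
          · have hband := band m i p hz
            apply mul_le_mul_of_nonneg_left _ (abs_nonneg _)
            calc |((A - B) * B^(n-1-m)) p i|
                ≤ ∑ q, |(A - B) p q| * |(B^(n-1-m)) q i| := by
                  rw [Matrix.mul_apply]
                  refine le_trans (Finset.abs_sum_le_sum_abs _ _) (le_of_eq ?_)
                  apply Finset.sum_congr rfl
                  intro q _
                  rw [abs_mul]
              _ ≤ ∑ q, |(A - B) p q| * 3^(n-1-m) :=
                  Finset.sum_le_sum fun q _ =>
                    mul_le_mul_of_nonneg_left (abs_pow_entry hBa hBb (n-1-m) q i) (abs_nonneg _)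
              _ = (∑ q, |(A - B) p q|) * 3^(n-1-m) := by rw [Finset.sum_mul]
              _ ≤ (3 * W) * 3^(n-1-m) :=
                  mul_le_mul_of_nonneg_right
                    (hrowAB p (by omega) (by omega) (by omega)) (by positivity)
              _ = 3 * W * 3^(n-1-m) := rfl
      _ = (∑ p, |(A^m) i p|) * (3 * W * 3^(n-1-m)) := by rw [Finset.sum_mul]
      _ ≤ 3^m * (3 * W * 3^(n-1-m)) :=
          mul_le_mul_of_nonneg_right (rowsum_pow ha hb m i) (by positivity)
      _ = 3^(m + (n-1-m) + 1) * W := by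
          rw [pow_add, pow_add, pow_one]
          ring
      _ = 3^n * W := by
          rw [show m + (n-1-m) + 1 = n from by omega]
  have hkey : (A^n) i i - (B^n) i i = ∑ m ∈ range n, (A^m * (A - B) * B^(n-1-m)) i i := by
    rw [← Matrix.sub_apply, tele, Matrix.sum_apply]
  rw [hkey]
  calc |∑ m ∈ range n, (A^m * (A - B) * B^(n-1-m)) i i|
      ≤ ∑ m ∈ range n, |(A^m * (A - B) * B^(n-1-m)) i i| := Finset.abs_sum_le_sum_abs _ _
    _ ≤ ∑ m ∈ range n, 3^n * W := Finset.sum_le_sum hterm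
    _ = (n : ℝ) * 3^n * W := by
        rw [Finset.sum_const, card_range, nsmul_eq_mul]
        ring
  
lemma main_bound (n k : ℕ) (a b : ℕ → ℝ)
    (ha : ∀ i < k, a i ∈ Set.Icc (0:ℝ) 1) (hb : ∀ i < k, b i ∈ Set.Icc (0:ℝ) 1) :
    |Matrix.trace ((jacobiMatrix k a b) ^ n) -
        ∑ j ∈ range (n / 2 + 1),
          (n.factorial : ℝ) / (((j.factorial : ℝ)) ^ 2 * ((n - 2 * j).factorial : ℝ)) *
            ∑ i ∈ range k, a i ^ (n - 2 * j) * b i ^ (2 * j)|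
      ≤ ((n : ℝ) * 3^n * (2*n)) * (∑ l ∈ range (k-1), (|a (l+1) - a l| + |b (l+1) - b l|))
        + (2*n : ℝ) * (3^n + ((n/2+1 : ℕ) : ℝ) * n.factorial) := by
  have ha1 : ∀ l < k, |a l| ≤ 1 := fun l hl => abs_le.2 ⟨by linarith [(ha l hl).1], (ha l hl).2⟩
  have hb1 : ∀ l < k, |b l| ≤ 1 := fun l hl => abs_le.2 ⟨by linarith [(hb l hl).1], (hb l hl).2⟩
  set A := jacobiMatrix k a b with hA
  -- the main term as a sum over Fin k
  have hmain : ∑ j ∈ range (n / 2 + 1),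
      (n.factorial : ℝ) / (((j.factorial : ℝ)) ^ 2 * ((n - 2 * j).factorial : ℝ)) *
        ∑ i ∈ range k, a i ^ (n - 2 * j) * b i ^ (2 * j)
      = ∑ i : Fin k, ∑ j ∈ range (n / 2 + 1),
          (n.factorial : ℝ) / (((j.factorial : ℝ)) ^ 2 * ((n - 2 * j).factorial : ℝ)) *
            (a (i:ℕ) ^ (n - 2 * j) * b (i:ℕ) ^ (2 * j)) := by
    calc ∑ j ∈ range (n / 2 + 1),
        (n.factorial : ℝ) / (((j.factorial : ℝ)) ^ 2 * ((n - 2 * j).factorial : ℝ)) *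
          ∑ i ∈ range k, a i ^ (n - 2 * j) * b i ^ (2 * j)
        = ∑ j ∈ range (n / 2 + 1), ∑ i ∈ range k,
            (n.factorial : ℝ) / (((j.factorial : ℝ)) ^ 2 * ((n - 2 * j).factorial : ℝ)) *
              (a i ^ (n - 2 * j) * b i ^ (2 * j)) := by
          apply Finset.sum_congr rfl
          intro j _
          rw [Finset.mul_sum]
      _ = ∑ i ∈ range k, ∑ j ∈ range (n / 2 + 1),
            (n.factorial : ℝ) / (((j.factorial : ℝ)) ^ 2 * ((n - 2 * j).factorial : ℝ)) *
              (a i ^ (n - 2 * j) * b i ^ (2 * j)) := Finset.sum_comm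
      _ = ∑ i : Fin k, ∑ j ∈ range (n / 2 + 1),
            (n.factorial : ℝ) / (((j.factorial : ℝ)) ^ 2 * ((n - 2 * j).factorial : ℝ)) *
              (a (i:ℕ) ^ (n - 2 * j) * b (i:ℕ) ^ (2 * j)) :=
          (Fin.sum_univ_eq_sum_range (fun i => ∑ j ∈ range (n / 2 + 1),
            (n.factorial : ℝ) / (((j.factorial : ℝ)) ^ 2 * ((n - 2 * j).factorial : ℝ)) *
              (a i ^ (n - 2 * j) * b i ^ (2 * j))) k).symm
  have htrace : Matrix.trace (A ^ n) = ∑ i : Fin k, (A ^ n) i i := by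
    simp [Matrix.trace, Matrix.diag]
  rw [htrace, hmain, ← Finset.sum_sub_distrib]
  -- split each term
  set P : Fin k → ℝ := fun i => ∑ j ∈ range (n / 2 + 1),
      (n.factorial : ℝ) / (((j.factorial : ℝ)) ^ 2 * ((n - 2 * j).factorial : ℝ)) *
        (a (i:ℕ) ^ (n - 2 * j) * b (i:ℕ) ^ (2 * j)) with hP
  set Bm : Fin k → Matrix (Fin k) (Fin k) ℝ :=
    fun i => jacobiMatrix k (fun _ => a (i:ℕ)) (fun _ => b (i:ℕ)) with hBm
  have hsplit : ∀ i : Fin k, |(A ^ n) i i - P i|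
      ≤ |(A ^ n) i i - (Bm i ^ n) i i| + |(Bm i ^ n) i i - P i| := fun i => abs_sub_le _ _ _
  calc |∑ i : Fin k, ((A ^ n) i i - P i)|
      ≤ ∑ i : Fin k, |(A ^ n) i i - P i| := Finset.abs_sum_le_sum_abs _ _
    _ ≤ ∑ i : Fin k, (|(A ^ n) i i - (Bm i ^ n) i i| + |(Bm i ^ n) i i - P i|) :=
        Finset.sum_le_sum fun i _ => hsplit i
    _ = (∑ i : Fin k, |(A ^ n) i i - (Bm i ^ n) i i|)
        + ∑ i : Fin k, |(Bm i ^ n) i i - P i| := Finset.sum_add_distrib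
    _ ≤ ((n : ℝ) * 3^n * (2*n)) * (∑ l ∈ range (k-1), (|a (l+1) - a l| + |b (l+1) - b l|))
        + (2*n : ℝ) * (3^n + ((n/2+1 : ℕ) : ℝ) * n.factorial) := by
        gcongr ?_ + ?_
        · -- perturbation part
          calc ∑ i : Fin k, |(A ^ n) i i - (Bm i ^ n) i i|
              ≤ ∑ i : Fin k, ((n : ℝ) * 3 ^ n) * winVar n k a b (i:ℕ) :=
                Finset.sum_le_sum fun i _ => diag_diff n k a b ha1 hb1 i
            _ = ((n : ℝ) * 3 ^ n) * ∑ i : Fin k, winVar n k a b (i:ℕ) := by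
                rw [Finset.mul_sum]
            _ ≤ ((n : ℝ) * 3 ^ n) * ((2*n : ℝ) *
                  (∑ l ∈ range (k-1), (|a (l+1) - a l| + |b (l+1) - b l|))) := by
                apply mul_le_mul_of_nonneg_left _ (by positivity)
                exact window_sum_le n k _ (fun l => add_nonneg (abs_nonneg _) (abs_nonneg _))
            _ = ((n : ℝ) * 3^n * (2*n)) *
                  (∑ l ∈ range (k-1), (|a (l+1) - a l| + |b (l+1) - b l|)) := by ring
        · -- boundary part
          have hP_bd : ∀ i : Fin k, |P i| ≤ ((n/2+1 : ℕ) : ℝ) * n.factorial := by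
            intro i
            refine le_trans (Finset.abs_sum_le_sum_abs _ _) ?_
            calc ∑ j ∈ range (n / 2 + 1),
                |(n.factorial : ℝ) / (((j.factorial : ℝ)) ^ 2 * ((n - 2 * j).factorial : ℝ)) *
                  (a (i:ℕ) ^ (n - 2 * j) * b (i:ℕ) ^ (2 * j))|
                ≤ ∑ j ∈ range (n / 2 + 1), (n.factorial : ℝ) := by
                  apply Finset.sum_le_sum
                  intro j _
                  rw [abs_mul]
                  have hc1 : |(n.factorial : ℝ) / (((j.factorial : ℝ)) ^ 2 *
                      ((n - 2 * j).factorial : ℝ))| ≤ (n.factorial : ℝ) := by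
                    rw [abs_of_nonneg (by positivity)]
                    apply div_le_self (by positivity)
                    have h1 : (1:ℝ) ≤ (j.factorial : ℝ) := by exact_mod_cast (Nat.factorial_pos j)
                    have h2 : (1:ℝ) ≤ ((n - 2*j).factorial : ℝ) := by
                      exact_mod_cast (Nat.factorial_pos (n - 2*j))
                    nlinarith
                  have hc2 : |a (i:ℕ) ^ (n - 2 * j) * b (i:ℕ) ^ (2 * j)| ≤ 1 := by
                    rw [abs_mul, abs_pow, abs_pow]
                    have := pow_le_one₀ (abs_nonneg (a (i:ℕ))) (ha1 i i.2) (n := n - 2*j)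
                    have := pow_le_one₀ (abs_nonneg (b (i:ℕ))) (hb1 i i.2) (n := 2*j)
                    have h1 : (0:ℝ) ≤ |a (i:ℕ)| ^ (n - 2*j) := by positivity
                    have h2 : (0:ℝ) ≤ |b (i:ℕ)| ^ (2*j) := by positivity
                    nlinarith
                  calc |(n.factorial : ℝ) / (((j.factorial : ℝ)) ^ 2 *
                      ((n - 2 * j).factorial : ℝ))| * |a (i:ℕ) ^ (n - 2 * j) * b (i:ℕ) ^ (2 * j)|
                      ≤ (n.factorial : ℝ) * 1 := by
                        apply mul_le_mul hc1 hc2 (abs_nonneg _) (by positivity)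
                    _ = (n.factorial : ℝ) := mul_one _
              _ = ((n/2+1 : ℕ) : ℝ) * n.factorial := by
                  rw [Finset.sum_const, card_range, nsmul_eq_mul]
          have hterm2 : ∀ i : Fin k, |(Bm i ^ n) i i - P i|
              ≤ if ¬(n ≤ (i:ℕ) ∧ (i:ℕ) + n < k) then (3^n + ((n/2+1 : ℕ) : ℝ) * n.factorial : ℝ) else 0 := by
            intro i
            by_cases hint : n ≤ (i:ℕ) ∧ (i:ℕ) + n < k
            · rw [if_neg (not_not_intro hint)]
              have he : (Bm i ^ n) i i = P i := by
                rw [hBm, const_jac_pow_diag (a (i:ℕ)) (b (i:ℕ)) n i hint.1 hint.2, hP]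
                apply Finset.sum_congr rfl
                intro j hj
                simp only [mem_range] at hj
                rw [← choose_cast_identity n j (by omega)]
                ring
              rw [he, sub_self, abs_zero]
            · rw [if_pos hint]
              refine le_trans (abs_sub _ _) ?_
              gcongr
              · exact abs_pow_entry (fun l _ => ha1 i i.2) (fun l _ => hb1 i i.2) n i i
              · exact hP_bd i
          calc ∑ i : Fin k, |(Bm i ^ n) i i - P i|
              ≤ ∑ i : Fin k, (if ¬(n ≤ (i:ℕ) ∧ (i:ℕ) + n < k)
                  then (3^n + ((n/2+1 : ℕ) : ℝ) * n.factorial : ℝ) else 0) :=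
                Finset.sum_le_sum fun i _ => hterm2 i
            _ = (((univ : Finset (Fin k)).filter
                  (fun i : Fin k => ¬(n ≤ (i:ℕ) ∧ (i:ℕ) + n < k))).card : ℝ)
                  * (3^n + ((n/2+1 : ℕ) : ℝ) * n.factorial : ℝ) := by
                rw [← Finset.sum_filter, Finset.sum_const, nsmul_eq_mul]
            _ ≤ (2*n : ℝ) * (3^n + ((n/2+1 : ℕ) : ℝ) * n.factorial) := by
                apply mul_le_mul_of_nonneg_right _ (by positivity)
                exact_mod_cast boundary_card n k

end JAux

/-- For `(a^k)ₖ, (b^k)ₖ ∈ 𝒮` and every `n`,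
`Trace[J(a^k,b^k)^n] = ∑_{j=0}^{⌊n/2⌋} n!/((j!)²(n−2j)!) ∑ᵢ (aᵢ^k)^{n−2j}(bᵢ^k)^{2j} + o(k)`. -/
theorem trace_pow_memS (a b : ℕ → ℕ → ℝ) (ha : MemS a) (hb : MemS b) (n : ℕ) :
    (fun k : ℕ =>
        Matrix.trace ((jacobiMatrix k (a k) (b k)) ^ n) -
          ∑ j ∈ Finset.range (n / 2 + 1),
            (n.factorial : ℝ) / (((j.factorial : ℝ)) ^ 2 * ((n - 2 * j).factorial : ℝ)) *
              ∑ i ∈ Finset.range k, a k i ^ (n - 2 * j) * b k i ^ (2 * j))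
      =o[Filter.atTop] fun k : ℕ => (k : ℝ) := by
  have key : ∀ k : ℕ,
      |Matrix.trace ((jacobiMatrix k (a k) (b k)) ^ n) -
          ∑ j ∈ Finset.range (n / 2 + 1),
            (n.factorial : ℝ) / (((j.factorial : ℝ)) ^ 2 * ((n - 2 * j).factorial : ℝ)) *
              ∑ i ∈ Finset.range k, a k i ^ (n - 2 * j) * b k i ^ (2 * j)|
        ≤ ((n : ℝ) * 3^n * (2*n)) * ((∑ i ∈ Finset.range (k-1), |a k (i+1) - a k i|)
            + (∑ i ∈ Finset.range (k-1), |b k (i+1) - b k i|))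
          + (2*n : ℝ) * (3^n + ((n/2+1 : ℕ) : ℝ) * n.factorial) := by
    intro k
    have h := JAux.main_bound n k (a k) (b k) (ha.2 k) (hb.2 k)
    rw [Finset.sum_add_distrib] at h
    exact h
  have hV : (fun k : ℕ => ((n : ℝ) * 3^n * (2*n)) * ((∑ i ∈ Finset.range (k-1), |a k (i+1) - a k i|)
        + (∑ i ∈ Finset.range (k-1), |b k (i+1) - b k i|))
      + (2*n : ℝ) * (3^n + ((n/2+1 : ℕ) : ℝ) * n.factorial)) =o[Filter.atTop] fun k : ℕ => (k : ℝ) := by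
    apply Asymptotics.IsLittleO.add
    · exact (ha.1.add hb.1).const_mul_left _
    · rw [Asymptotics.isLittleO_const_left]
      right
      exact tendsto_norm_atTop_atTop.comp tendsto_natCast_atTop_atTop
  refine Asymptotics.IsBigO.trans_isLittleO ?_ hV
  apply Asymptotics.IsBigO.of_bound 1
  filter_upwards with k
  rw [one_mul, Real.norm_eq_abs, Real.norm_eq_abs]
  exact le_trans (key k) (le_abs_self _)
end
end

section
/- Let (a^k)_k and (b^k)_k be two sequences of vectors belonging to the class 𝒮′. Then for every n ∈ ℕ, Trace[J(a^k,b^k)^n] = Σ_{j=0}^{⌊n/2⌋} n!/((j!)² (n−2j)!) · Σ_{i=1}^k (a_i^k)^{n−2j}(b_i^k)^{2j} + o(k) as k → ∞. -/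
open Filter MeasureTheory

noncomputable section

section JacobiAux
open Polynomial Finset Asymptotics

private def gJ (x y : ℝ) : ℕ → ℤ → ℝ
  | 0, d => if d = 0 then 1 else 0
  | n+1, d => x * gJ x y n d + y * gJ x y n (d-1) + y * gJ x y n (d+1)

lemma gJ_vanish (x y : ℝ) : ∀ (n : ℕ) (d : ℤ), ((n:ℤ) < d ∨ d < -(n:ℤ)) → gJ x y n d = 0 := by
  intro n
  induction n with
  | zero => intro d hd; have : d ≠ 0 := by omega
            simp [gJ, this]
  | succ n ih =>
    intro d hd
    have h1 : gJ x y n d = 0 := ih d (by omega)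
    have h2 : gJ x y n (d-1) = 0 := ih (d-1) (by omega)
    have h3 : gJ x y n (d+1) = 0 := ih (d+1) (by omega)
    simp [gJ, h1, h2, h3]

lemma gJ_bound {x y L : ℝ} (hx : |x| ≤ L) (hy : |y| ≤ L) :
    ∀ (n : ℕ) (d : ℤ), |gJ x y n d| ≤ 3^n * L^n := by
  have hL : 0 ≤ L := le_trans (abs_nonneg x) hx
  intro n
  induction n with
  | zero => intro d; by_cases h : d = 0 <;> simp [gJ, h]
  | succ n ih =>
    intro d
    have key : ∀ d' : ℤ, |gJ x y n d'| ≤ 3^n * L^n := ih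
    have hg : 0 ≤ 3^n * L^n := by positivity
    calc |gJ x y (n+1) d| = |x * gJ x y n d + y * gJ x y n (d-1) + y * gJ x y n (d+1)| := by
          simp [gJ]
      _ ≤ |x * gJ x y n d| + |y * gJ x y n (d-1)| + |y * gJ x y n (d+1)| := by
          exact (abs_add_le _ _).trans (by gcongr; exact abs_add_le _ _)
      _ ≤ L * (3^n * L^n) + L * (3^n * L^n) + L * (3^n * L^n) := by
          have hterm : ∀ (c : ℝ), |c| ≤ L → ∀ d' : ℤ, |c * gJ x y n d'| ≤ L * (3^n * L^n) := by
            intro c hc d'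
            rw [abs_mul]
            exact mul_le_mul hc (key d') (abs_nonneg _) hL
          gcongr <;> [exact hterm x hx d; exact hterm y hy _; exact hterm y hy _]
      _ = 3^(n+1) * L^(n+1) := by ring
  

private lemma gJ_zero (x y : ℝ) (d : ℤ) : gJ x y 0 d = if d = 0 then 1 else 0 := rfl
private lemma gJ_succ (x y : ℝ) (n : ℕ) (d : ℤ) :
    gJ x y (n+1) d = x * gJ x y n d + y * gJ x y n (d-1) + y * gJ x y n (d+1) := rfl

lemma sum_fin_abs_le {k : ℕ} (f : Fin k → ℝ) (t : Finset ℕ) (c : ℝ) (hc : 0 ≤ c)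
    (h0 : ∀ p : Fin k, (p:ℕ) ∉ t → f p = 0) (hb : ∀ p : Fin k, (p:ℕ) ∈ t → |f p| ≤ c) :
    |∑ p, f p| ≤ t.card * c := by
  calc |∑ p, f p| ≤ ∑ p, |f p| := Finset.abs_sum_le_sum_abs _ _
    _ = ∑ p ∈ Finset.univ.filter (fun p : Fin k => (p:ℕ) ∈ t), |f p| := by
        rw [Finset.sum_filter_of_ne]
        intro p _ hne
        by_contra hmem
        exact hne (by rw [h0 p hmem, abs_zero])
    _ ≤ (Finset.univ.filter (fun p : Fin k => (p:ℕ) ∈ t)).card • c :=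
        Finset.sum_le_card_nsmul _ _ _ (fun p hp => hb p (Finset.mem_filter.1 hp).2)
    _ ≤ t.card * c := by
        rw [nsmul_eq_mul]
        apply mul_le_mul_of_nonneg_right _ hc
        have : (Finset.univ.filter (fun p : Fin k => (p:ℕ) ∈ t)).card ≤ t.card := by
          apply Finset.card_le_card_of_injOn Fin.val
          · intro p hp; exact (Finset.mem_filter.1 hp).2
          · exact Fin.val_injective.injOn
        exact_mod_cast this

lemma gJ_coeff (x y : ℝ) : ∀ (n m : ℕ),
    ((C y + C x * X + C y * X^2 : ℝ[X])^n).coeff m = gJ x y n ((m:ℤ) - n) := by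
  intro n
  induction n with
  | zero =>
    intro m
    rw [pow_zero, coeff_one, gJ_zero]
    by_cases h : m = 0 <;> simp [h]
  | succ n ih =>
    intro m
    have hsplit : (C y + C x * X + C y * X^2 : ℝ[X])^(n+1)
        = (C y + C x * X + C y * X^2)^n * C y
          + ((C y + C x * X + C y * X^2)^n * C x) * X^1
          + ((C y + C x * X + C y * X^2)^n * C y) * X^2 := by ring
    rw [hsplit, gJ_succ]
    simp only [coeff_add, coeff_mul_X_pow', coeff_mul_C, ih]
    match m with
    | 0 =>
      rw [if_neg (by omega : ¬ (1:ℕ) ≤ 0), if_neg (by omega : ¬ (2:ℕ) ≤ 0)]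
      rw [gJ_vanish x y n (((0:ℕ):ℤ) - ((n+1:ℕ):ℤ)) (by push_cast; omega),
        gJ_vanish x y n (((0:ℕ):ℤ) - ((n+1:ℕ):ℤ) - 1) (by push_cast; omega),
        show ((0:ℕ):ℤ) - ((n+1:ℕ):ℤ) + 1 = ((0:ℕ):ℤ) - (n:ℤ) by push_cast; ring]
      ring
    | 1 =>
      rw [if_pos (by omega : (1:ℕ) ≤ 1), if_neg (by omega : ¬ (2:ℕ) ≤ 1)]
      rw [gJ_vanish x y n (((1:ℕ):ℤ) - ((n+1:ℕ):ℤ) - 1) (by push_cast; omega),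
        show ((1:ℕ):ℤ) - ((n+1:ℕ):ℤ) = ((1-1:ℕ):ℤ) - (n:ℤ) by push_cast; ring,
        show ((1-1:ℕ):ℤ) - (n:ℤ) + 1 = ((1:ℕ):ℤ) - (n:ℤ) by push_cast; ring]
      ring
    | (m+2) =>
      rw [if_pos (by omega : (1:ℕ) ≤ m+2), if_pos (by omega : (2:ℕ) ≤ m+2)]
      rw [show ((m+2:ℕ):ℤ) - ((n+1:ℕ):ℤ) = ((m+2-1:ℕ):ℤ) - (n:ℤ) by push_cast; ring,
        show ((m+2-1:ℕ):ℤ) - (n:ℤ) - 1 = ((m+2-2:ℕ):ℤ) - (n:ℤ) by push_cast; ring,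
        show ((m+2-1:ℕ):ℤ) - (n:ℤ) + 1 = ((m+2:ℕ):ℤ) - (n:ℤ) by push_cast; ring]
      ring

lemma coeff_one_add_X_sq_pow (j : ℕ) :
    ((1 + X^2 : ℝ[X])^j).coeff j = if j % 2 = 0 then (j.choose (j/2) : ℝ) else 0 := by
  rw [show (1 + X^2 : ℝ[X]) = X^2 + 1 by ring, add_pow]
  simp only [one_pow, mul_one, ← pow_mul]
  rw [finset_sum_coeff]
  have hterm : ∀ s, ((X^(2*s) * (↑(j.choose s) : ℝ[X])).coeff j)
      = (if j = 2*s then (1:ℝ) else 0) * (j.choose s : ℝ) := by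
    intro s
    rw [← C_eq_natCast, coeff_mul_C, coeff_X_pow]
  simp only [hterm]
  by_cases hj : j % 2 = 0
  · rw [if_pos hj]
    rw [Finset.sum_eq_single (j/2)]
    · rw [if_pos (by omega), one_mul]
    · intro s _ hs
      rw [if_neg (by omega), zero_mul]
    · intro h
      exact absurd (Finset.mem_range.2 (by omega)) h
  · rw [if_neg hj]
    apply Finset.sum_eq_zero
    intro s _
    rw [if_neg (by omega), zero_mul]

lemma gJ_closed (x y : ℝ) (n : ℕ) :
    gJ x y n 0 = ∑ j ∈ range (n/2+1),
      (n.factorial : ℝ) / ((j.factorial : ℝ)^2 * ((n - 2*j).factorial : ℝ))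
        * (x^(n-2*j) * y^(2*j)) := by
  have h0 : gJ x y n 0 = ((C y + C x * X + C y * X^2 : ℝ[X])^n).coeff n := by
    rw [gJ_coeff x y n n, sub_self]
  rw [h0, show (C y + C x * X + C y * X^2 : ℝ[X]) = C y * (1+X^2) + C x * X by ring,
    add_pow]
  have hterm : ∀ j, ((C y * (1+X^2))^j * (C x * X)^(n-j) * (↑(n.choose j) : ℝ[X]))
      = C (y^j * x^(n-j) * (n.choose j : ℝ)) * ((1+X^2)^j * X^(n-j)) := by
    intro j
    rw [mul_pow, mul_pow, map_mul, map_mul, map_pow, map_pow, C_eq_natCast]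
    ring
  rw [finset_sum_coeff]
  simp only [hterm, coeff_C_mul, coeff_mul_X_pow']
  have hmain : ∀ j ∈ range (n+1),
      y^j * x^(n-j) * (n.choose j : ℝ) * (if n - j ≤ n then ((1+X^2:ℝ[X])^j).coeff (n - (n-j)) else 0)
      = y^j * x^(n-j) * (n.choose j : ℝ)
          * (if j % 2 = 0 then (j.choose (j/2) : ℝ) else 0) := by
    intro j hj
    rw [if_pos (by omega), show n - (n - j) = j by
      have := Finset.mem_range.1 hj; omega, coeff_one_add_X_sq_pow]
  rw [Finset.sum_congr rfl hmain]
  rw [← Finset.sum_filter_of_ne (p := fun j => j % 2 = 0)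
    (by intro j _ hne; by_contra h; rw [if_neg h, mul_zero] at hne; exact hne rfl)]
  refine Finset.sum_nbij' (i := fun j => j / 2) (j := fun t => 2 * t) ?_ ?_ ?_ ?_ ?_
  · intro j hj
    simp only [Finset.mem_filter, Finset.mem_range] at hj ⊢
    omega
  · intro t ht
    simp only [Finset.mem_filter, Finset.mem_range] at ht ⊢
    omega
  · intro j hj
    simp only [Finset.mem_filter] at hj
    show 2 * (j / 2) = j
    omega
  · intro t _
    show (2 * t) / 2 = t
    omega
  · intro j hj
    simp only [Finset.mem_filter, Finset.mem_range] at hj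
    obtain ⟨hjn, hje⟩ := hj
    rw [if_pos hje]
    have h1 : 2 * (j / 2) = j := by omega
    rw [h1]
    have h2t : 2 * (j/2) ≤ n := by omega
    have e1 := Nat.choose_mul_factorial_mul_factorial h2t
    have e2 : (2*(j/2)).choose (j/2) * (j/2).factorial * (j/2).factorial
        = (2*(j/2)).factorial := by
      have := Nat.choose_mul_factorial_mul_factorial (show j/2 ≤ 2*(j/2) by omega)
      rwa [show 2*(j/2) - j/2 = j/2 by omega] at this
    rw [h1] at h2t e1 e2
    have e3 : (n.factorial : ℝ)
        = (n.choose j : ℝ) * ((j.choose (j/2)) : ℝ) * ((j/2).factorial : ℝ)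
          * ((j/2).factorial : ℝ) * ((n - j).factorial : ℝ) := by
      rw [← e1, ← e2]
      push_cast
      ring
    have hne : ((j/2).factorial : ℝ) ≠ 0 := Nat.cast_ne_zero.2 (Nat.factorial_ne_zero _)
    have hne2 : ((n - j).factorial : ℝ) ≠ 0 := Nat.cast_ne_zero.2 (Nat.factorial_ne_zero _)
    try dsimp only
    rw [e3]
    field_simp

lemma pow_band {k : ℕ} {A : Matrix (Fin k) (Fin k) ℝ}
    (hband : ∀ p q : Fin k, (p:ℕ)+1 < (q:ℕ) ∨ (q:ℕ)+1 < (p:ℕ) → A p q = 0) :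
    ∀ (l : ℕ) (p q : Fin k), ((p:ℕ) + l < (q:ℕ) ∨ (q:ℕ) + l < (p:ℕ)) → (A^l) p q = 0 := by
  intro l
  induction l with
  | zero =>
    intro p q h
    rw [pow_zero, Matrix.one_apply_ne]
    intro he; subst he; omega
  | succ l ih =>
    intro p q h
    rw [pow_succ, Matrix.mul_apply]
    apply Finset.sum_eq_zero
    intro r _
    by_cases hr : (p:ℕ) + l < (r:ℕ) ∨ (r:ℕ) + l < (p:ℕ)
    · rw [ih p r hr, zero_mul]
    · rw [hband r q (by omega), mul_zero]

lemma pow_bound {k : ℕ} {A : Matrix (Fin k) (Fin k) ℝ} {L : ℝ} (hL : 0 ≤ L)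
    (hband : ∀ p q : Fin k, (p:ℕ)+1 < (q:ℕ) ∨ (q:ℕ)+1 < (p:ℕ) → A p q = 0)
    (hbd : ∀ p q : Fin k, |A p q| ≤ L) :
    ∀ (l : ℕ) (p q : Fin k), |(A^l) p q| ≤ 3^l * L^l := by
  intro l
  induction l with
  | zero =>
    intro p q
    rw [pow_zero]
    by_cases h : p = q <;> simp [Matrix.one_apply, h]
  | succ l ih =>
    intro p q
    rw [pow_succ, Matrix.mul_apply]
    have hc : (0:ℝ) ≤ 3^l * L^l * L := by positivity
    have := sum_fin_abs_le (fun r => (A^l) p r * A r q)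
      ({(q:ℕ)-1, (q:ℕ), (q:ℕ)+1} : Finset ℕ) (3^l * L^l * L) hc
      (by intro r hr
          simp only [Finset.mem_insert, Finset.mem_singleton] at hr
          push_neg at hr
          show (A^l) p r * A r q = 0
          rw [hband r q (by omega), mul_zero])
      (by intro r _
          show |(A^l) p r * A r q| ≤ _
          rw [abs_mul]
          exact mul_le_mul (ih p r) (hbd r q) (abs_nonneg _) (by positivity))
    refine this.trans ?_
    have hcard : ({(q:ℕ)-1, (q:ℕ), (q:ℕ)+1} : Finset ℕ).card ≤ 3 := by
      have h1 := Finset.card_insert_le ((q:ℕ)-1) ({(q:ℕ), (q:ℕ)+1} : Finset ℕ)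
      have h2 := Finset.card_insert_le ((q:ℕ)) ({(q:ℕ)+1} : Finset ℕ)
      have h3 : ({(q:ℕ)+1} : Finset ℕ).card = 1 := Finset.card_singleton _
      omega
    calc (({(q:ℕ)-1, (q:ℕ), (q:ℕ)+1} : Finset ℕ).card : ℝ) * (3^l * L^l * L)
        ≤ 3 * (3^l * L^l * L) := by
          apply mul_le_mul_of_nonneg_right _ hc
          exact_mod_cast hcard
      _ = 3^(l+1) * L^(l+1) := by ring

lemma const_pow (x y : ℝ) (k : ℕ) :
    ∀ (n : ℕ) (i : Fin k), n ≤ (i:ℕ) → (i:ℕ) + n < k →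
      ∀ j : Fin k, ((jacobiMatrix k (fun _ => x) (fun _ => y))^n) i j
        = gJ x y n ((j:ℤ) - (i:ℤ)) := by
  intro n
  induction n with
  | zero =>
    intro i _ _ j
    rw [pow_zero, gJ_zero, Matrix.one_apply]
    by_cases h : i = j
    · rw [if_pos h, if_pos (by subst h; ring)]
    · rw [if_neg h, if_neg (by
        intro hc
        apply h
        have : (i:ℕ) = (j:ℕ) := by omega
        exact Fin.ext this)]
  | succ n ih =>
    intro i hni hik j
    set M := jacobiMatrix k (fun _ => x) (fun _ => y) with hMdef
    have hM : ∀ p q : Fin k, M p q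
        = (if (p:ℕ) = (q:ℕ) then x else 0) + (if (p:ℕ)+1 = (q:ℕ) then y else 0)
          + (if (q:ℕ)+1 = (p:ℕ) then y else 0) := by
      intro p q
      show (jacobiMatrix k (fun _ => x) (fun _ => y)) p q = _
      simp only [jacobiMatrix, Matrix.of_apply]
      split_ifs <;> first | (exfalso; omega) | ring
    have ihp : ∀ p : Fin k, (M^n) i p = gJ x y n ((p:ℤ) - (i:ℤ)) :=
      ih i (by omega) (by omega)
    rw [pow_succ, Matrix.mul_apply, gJ_succ]
    simp only [ihp, hM, mul_add, mul_ite, mul_zero]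
    rw [Finset.sum_add_distrib, Finset.sum_add_distrib]
    have hS1 : ∑ p : Fin k, (if (p:ℕ) = (j:ℕ) then gJ x y n ((p:ℤ) - (i:ℤ)) * x else 0)
        = x * gJ x y n ((j:ℤ) - (i:ℤ)) := by
      rw [Finset.sum_eq_single j]
      · rw [if_pos rfl]; ring
      · intro p _ hp
        rw [if_neg (fun hc => hp (Fin.ext hc))]
      · simp
    have hS2 : ∑ p : Fin k, (if (p:ℕ)+1 = (j:ℕ) then gJ x y n ((p:ℤ) - (i:ℤ)) * y else 0)
        = y * gJ x y n ((j:ℤ) - (i:ℤ) - 1) := by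
      by_cases hj : (j:ℕ) = 0
      · rw [Finset.sum_eq_zero (fun p _ => by rw [if_neg (by omega)])]
        rw [gJ_vanish x y n _ (by right; omega)]
        ring
      · have hjk : (j:ℕ) - 1 < k := by omega
        rw [Finset.sum_eq_single (⟨(j:ℕ)-1, hjk⟩ : Fin k)]
        · rw [if_pos (by simp; omega)]
          have : ((⟨(j:ℕ)-1, hjk⟩ : Fin k) : ℤ) = (j:ℤ) - 1 := by simp; omega
          rw [this]; ring
        · intro p _ hp
          rw [if_neg (fun hc => hp (Fin.ext (by simp; omega)))]
        · simp
    have hS3 : ∑ p : Fin k, (if (j:ℕ)+1 = (p:ℕ) then gJ x y n ((p:ℤ) - (i:ℤ)) * y else 0)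
        = y * gJ x y n ((j:ℤ) - (i:ℤ) + 1) := by
      by_cases hj : (j:ℕ)+1 = k
      · rw [Finset.sum_eq_zero (fun p _ => by rw [if_neg (by omega)])]
        rw [gJ_vanish x y n _ (by left; omega)]
        ring
      · have hjk : (j:ℕ) + 1 < k := by have := j.isLt; omega
        rw [Finset.sum_eq_single (⟨(j:ℕ)+1, hjk⟩ : Fin k)]
        · rw [if_pos (by simp)]
          have : ((⟨(j:ℕ)+1, hjk⟩ : Fin k) : ℤ) = (j:ℤ) + 1 := by simp
          rw [this]; ring
        · intro p _ hp
          rw [if_neg (fun hc => hp (Fin.ext (by simp; omega)))]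
        · simp
    rw [hS1, hS2, hS3]


lemma pow_sub_pow_ring {R : Type*} [Ring R] (A B : R) (n : ℕ) :
    A^n - B^n = ∑ l ∈ Finset.range n, A^l * (A - B) * B^(n-1-l) := by
  induction n with
  | zero => simp
  | succ n ih =>
    have hterm : ∀ l, A * (A^l * (A - B) * B^(n-1-l)) = A^(l+1) * (A - B) * B^(n-(l+1)) := by
      intro l
      rw [show n - (l+1) = n - 1 - l from by omega, pow_succ']
      noncomm_ring
    calc A^(n+1) - B^(n+1) = A * (A^n - B^n) + (A - B) * B^n := by
          rw [pow_succ' A, pow_succ' B]; noncomm_ring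
      _ = (∑ l ∈ Finset.range n, A^(l+1) * (A - B) * B^(n-(l+1))) + A^0 * (A - B) * B^(n-0) := by
          rw [ih, Finset.mul_sum, pow_zero, one_mul, Nat.sub_zero]
          exact congrArg₂ (· + ·) (Finset.sum_congr rfl fun l _ => hterm l) rfl
      _ = ∑ l ∈ Finset.range (n+1), A^l * (A - B) * B^(n-l) := by
          rw [Finset.sum_range_succ']
      _ = ∑ l ∈ Finset.range (n+1), A^l * (A - B) * B^(n+1-1-l) := rfl

theorem fixedk (k n : ℕ) (a b : ℕ → ℝ) (L : ℝ) (hL : 1 ≤ L)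
    (hA : ∀ i < k, |a i| ≤ L) (hB : ∀ i < k, |b i| ≤ L) :
    |Matrix.trace ((jacobiMatrix k a b)^n) - ∑ i : Fin k, gJ (a i) (b i) n 0|
      ≤ (4*n) * (3*L)^n
        + (3 * (n*(2*n+1)) * ((3*L)^n)^2) * ((2*(n+1)) *
            ((∑ m ∈ Finset.range (k-1), |a (m+1) - a m|)
              + ∑ m ∈ Finset.range (k-1), |b (m+1) - b m|)) := by
  have hL0 : (0:ℝ) ≤ L := le_trans zero_le_one hL
  have h3L : (1:ℝ) ≤ 3*L := by linarith
  set J := jacobiMatrix k a b with hJdef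
  have hbandJ : ∀ p q : Fin k, (p:ℕ)+1 < (q:ℕ) ∨ (q:ℕ)+1 < (p:ℕ) → J p q = 0 := by
    intro p q h
    show jacobiMatrix k a b p q = 0
    simp only [jacobiMatrix, Matrix.of_apply]
    rw [if_neg (by omega), if_neg (by omega), if_neg (by omega)]
  have hbdJ : ∀ p q : Fin k, |J p q| ≤ L := by
    intro p q
    show |jacobiMatrix k a b p q| ≤ L
    simp only [jacobiMatrix, Matrix.of_apply]
    split_ifs
    · exact hA p p.isLt
    · exact hB p p.isLt
    · exact hB q q.isLt
    · simpa using hL0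
  set c : ℕ → ℝ := fun m => |a (m+1) - a m| + |b (m+1) - b m| with hcdef
  have hc0 : ∀ m, 0 ≤ c m := fun m => add_nonneg (abs_nonneg _) (abs_nonneg _)
  set W : Fin k → ℝ := fun i =>
    ∑ m ∈ Finset.range (k-1), if (i:ℕ) ≤ m + (n+1) ∧ m < (i:ℕ) + (n+1) then c m else 0
    with hWdef
  have hW0 : ∀ i, 0 ≤ W i := by
    intro i
    apply Finset.sum_nonneg
    intro m _
    split_ifs
    · exact hc0 m
    · exact le_refl 0
  -- telescoping bound
  have tele : ∀ (f : ℕ → ℝ) (u v : ℕ), u ≤ v →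
      |f v - f u| ≤ ∑ m ∈ Finset.Ico u v, |f (m+1) - f m| := by
    intro f u v huv
    have h1 : ∑ l ∈ Finset.range (v-u), (f (u+l+1) - f (u+l)) = f (u+(v-u)) - f u := by
      exact Finset.sum_range_sub (fun l => f (u+l)) (v-u)
    rw [show u + (v-u) = v from by omega] at h1
    rw [← h1, Finset.sum_Ico_eq_sum_range]
    exact Finset.abs_sum_le_sum_abs _ _
  have diffbd : ∀ (i p : Fin k), (p:ℕ) ≤ (i:ℕ) + (n+1) → (i:ℕ) ≤ (p:ℕ) + (n+1) →
      |a p - a i| ≤ W i ∧ |b p - b i| ≤ W i := by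
    intro i p hp1 hp2
    have main : ∀ f : ℕ → ℝ, (∀ m, |f (m+1) - f m| ≤ c m) → |f p - f i| ≤ W i := by
      intro f hf
      rcases le_total (i:ℕ) (p:ℕ) with h | h
      · calc |f p - f i| ≤ ∑ m ∈ Finset.Ico (i:ℕ) (p:ℕ), |f (m+1) - f m| := tele f i p h
          _ ≤ ∑ m ∈ Finset.Ico (i:ℕ) (p:ℕ), c m := Finset.sum_le_sum (fun m _ => hf m)
          _ ≤ W i := by
            rw [hWdef]; dsimp only; rw [← Finset.sum_filter]
            apply Finset.sum_le_sum_of_subset_of_nonneg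
            · intro m hm
              simp only [Finset.mem_Ico, Finset.mem_filter, Finset.mem_range] at hm ⊢
              have := p.isLt
              omega
            · intro m _ _; exact hc0 m
      · rw [abs_sub_comm]
        calc |f i - f p| ≤ ∑ m ∈ Finset.Ico (p:ℕ) (i:ℕ), |f (m+1) - f m| := tele f p i h
          _ ≤ ∑ m ∈ Finset.Ico (p:ℕ) (i:ℕ), c m := Finset.sum_le_sum (fun m _ => hf m)
          _ ≤ W i := by
            rw [hWdef]; dsimp only; rw [← Finset.sum_filter]
            apply Finset.sum_le_sum_of_subset_of_nonneg
            · intro m hm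
              simp only [Finset.mem_Ico, Finset.mem_filter, Finset.mem_range] at hm ⊢
              have := i.isLt
              omega
            · intro m _ _; exact hc0 m
    constructor
    · exact main a (fun m => le_add_of_nonneg_right (abs_nonneg _))
    · exact main b (fun m => le_add_of_nonneg_left (abs_nonneg _))
  set B0 : ℝ := (3*L)^n with hB0def
  have hB0 : (1:ℝ) ≤ B0 := one_le_pow₀ h3L
  have hB00 : (0:ℝ) ≤ B0 := le_trans zero_le_one hB0
  have hpowle : ∀ l ≤ n, (3:ℝ)^l * L^l ≤ B0 := by
    intro l hl
    rw [hB0def, ← mul_pow]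
    exact pow_le_pow_right₀ h3L hl
  have key : ∀ i : Fin k, |(J^n) i i - gJ (a i) (b i) n 0|
      ≤ (if n ≤ (i:ℕ) ∧ (i:ℕ)+n < k then 0 else 2*B0)
        + (3 * ((n:ℝ)*(2*n+1)) * B0^2) * W i := by
    intro i
    have hDW : 0 ≤ (3 * ((n:ℝ)*(2*n+1)) * B0^2) * W i := by
      apply mul_nonneg _ (hW0 i)
      positivity
    by_cases hi : n ≤ (i:ℕ) ∧ (i:ℕ)+n < k
    · rw [if_pos hi, zero_add]
      set Mi := jacobiMatrix k (fun _ => a (i:ℕ)) (fun _ => b (i:ℕ)) with hMidef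
      have hbandM : ∀ p q : Fin k, (p:ℕ)+1 < (q:ℕ) ∨ (q:ℕ)+1 < (p:ℕ) → Mi p q = 0 := by
        intro p q h
        show jacobiMatrix k _ _ p q = 0
        simp only [jacobiMatrix, Matrix.of_apply]
        rw [if_neg (by omega), if_neg (by omega), if_neg (by omega)]
      have hbdM : ∀ p q : Fin k, |Mi p q| ≤ L := by
        intro p q
        show |jacobiMatrix k _ _ p q| ≤ L
        simp only [jacobiMatrix, Matrix.of_apply]
        split_ifs
        · exact hA i i.isLt
        · exact hB i i.isLt
        · exact hB i i.isLt
        · simpa using hL0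
      have hdiag : (Mi^n) i i = gJ (a i) (b i) n 0 := by
        have h := const_pow (a i) (b i) k n i hi.1 hi.2 i
        rwa [sub_self] at h
      rw [← hdiag]
      have hsub : (J^n) i i - (Mi^n) i i
          = ∑ l ∈ Finset.range n, (J^l * (J - Mi) * Mi^(n-1-l)) i i := by
        rw [← Matrix.sub_apply, pow_sub_pow_ring, Matrix.sum_apply]
      rw [hsub]
      refine le_trans (Finset.abs_sum_le_sum_abs _ _) ?_
      have hX : ∀ p q : Fin k, (p:ℕ) ≤ (i:ℕ)+(n+1) → (i:ℕ) ≤ (p:ℕ)+(n+1) →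
          (q:ℕ) ≤ (i:ℕ)+(n+1) → (i:ℕ) ≤ (q:ℕ)+(n+1) → |(J - Mi) p q| ≤ W i := by
        intro p q h1 h2 h3 h4
        have hXval : (J - Mi) p q
            = (if (p:ℕ)=(q:ℕ) then a p - a i else if (p:ℕ)+1=(q:ℕ) then b p - b i
                else if (q:ℕ)+1=(p:ℕ) then b q - b i else 0) := by
          rw [Matrix.sub_apply]
          show jacobiMatrix k a b p q - jacobiMatrix k _ _ p q = _
          simp only [jacobiMatrix, Matrix.of_apply]
          split_ifs <;> ring
        rw [hXval]
        split_ifs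
        · exact (diffbd i p h1 h2).1
        · exact (diffbd i p h1 h2).2
        · exact (diffbd i q h3 h4).2
        · simpa using hW0 i
      have hXband : ∀ p q : Fin k, (p:ℕ)+1 < (q:ℕ) ∨ (q:ℕ)+1 < (p:ℕ) → (J - Mi) p q = 0 := by
        intro p q h
        rw [Matrix.sub_apply, hbandJ p q h, hbandM p q h, sub_zero]
      have hterm : ∀ l ∈ Finset.range n, |(J^l * (J - Mi) * Mi^(n-1-l)) i i|
          ≤ ((2*n+1:ℕ):ℝ) * (3 * (B0 * W i) * B0) := by
        intro l hl
        have hln : l ≤ n := le_of_lt (Finset.mem_range.1 hl)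
        have hln' : n-1-l ≤ n := by omega
        have hPbd : ∀ p, |(J^l) i p| ≤ B0 :=
          fun p => (pow_bound hL0 hbandJ hbdJ l i p).trans (hpowle l hln)
        have hQbd : ∀ q, |(Mi^(n-1-l)) q i| ≤ B0 :=
          fun q => (pow_bound hL0 hbandM hbdM (n-1-l) q i).trans (hpowle _ hln')
        have hinner : ∀ q : Fin k, (q:ℕ) ∈ Finset.Icc ((i:ℕ)-n) ((i:ℕ)+n) →
            |(J^l * (J - Mi)) i q| ≤ 3 * (B0 * W i) := by
          intro q hq
          simp only [Finset.mem_Icc] at hq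
          rw [Matrix.mul_apply]
          have happ := sum_fin_abs_le (fun p => (J^l) i p * (J - Mi) p q)
            ({(q:ℕ)-1, (q:ℕ), (q:ℕ)+1} : Finset ℕ) (B0 * W i)
            (mul_nonneg hB00 (hW0 i))
            (by intro p hp
                simp only [Finset.mem_insert, Finset.mem_singleton] at hp
                push_neg at hp
                show (J^l) i p * (J - Mi) p q = 0
                rw [hXband p q (by omega), mul_zero])
            (by intro p hp
                simp only [Finset.mem_insert, Finset.mem_singleton] at hp
                show |(J^l) i p * (J - Mi) p q| ≤ B0 * W i
                rw [abs_mul]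
                exact mul_le_mul (hPbd p)
                  (hX p q (by omega) (by omega) (by omega) (by omega))
                  (abs_nonneg _) hB00)
          refine happ.trans ?_
          have hcard : ({(q:ℕ)-1, (q:ℕ), (q:ℕ)+1} : Finset ℕ).card ≤ 3 := by
            have h1 := Finset.card_insert_le ((q:ℕ)-1) ({(q:ℕ), (q:ℕ)+1} : Finset ℕ)
            have h2 := Finset.card_insert_le ((q:ℕ)) ({(q:ℕ)+1} : Finset ℕ)
            have h3 : ({(q:ℕ)+1} : Finset ℕ).card = 1 := Finset.card_singleton _
            omega
          apply mul_le_mul_of_nonneg_right _ (mul_nonneg hB00 (hW0 i))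
          exact_mod_cast hcard
        rw [Matrix.mul_apply]
        have happ2 := sum_fin_abs_le (fun q => (J^l * (J - Mi)) i q * (Mi^(n-1-l)) q i)
          (Finset.Icc ((i:ℕ)-n) ((i:ℕ)+n)) (3 * (B0 * W i) * B0)
          (by positivity)
          (by intro q hq
              simp only [Finset.mem_Icc] at hq
              push_neg at hq
              show (J^l * (J - Mi)) i q * (Mi^(n-1-l)) q i = 0
              rw [pow_band hbandM (n-1-l) q i (by omega), mul_zero])
          (by intro q hq
              show |(J^l * (J - Mi)) i q * (Mi^(n-1-l)) q i| ≤ 3 * (B0 * W i) * B0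
              rw [abs_mul]
              exact mul_le_mul (hinner q hq) (hQbd q) (abs_nonneg _) (by positivity))
        refine happ2.trans ?_
        apply mul_le_mul_of_nonneg_right _ (by positivity)
        have hcard2 : (Finset.Icc ((i:ℕ)-n) ((i:ℕ)+n)).card ≤ 2*n+1 := by
          rw [Nat.card_Icc]
          omega
        exact_mod_cast hcard2
      calc ∑ l ∈ Finset.range n, |(J^l * (J - Mi) * Mi^(n-1-l)) i i|
          ≤ ∑ _l ∈ Finset.range n, ((2*n+1:ℕ):ℝ) * (3 * (B0 * W i) * B0) :=
            Finset.sum_le_sum hterm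
        _ = (n:ℝ) * (((2*n+1:ℕ):ℝ) * (3 * (B0 * W i) * B0)) := by
            rw [Finset.sum_const, Finset.card_range, nsmul_eq_mul]
        _ = (3 * ((n:ℝ)*(2*n+1)) * B0^2) * W i := by
            push_cast
            ring
    · rw [if_neg hi]
      have h1 : |(J^n) i i| ≤ B0 :=
        (pow_bound hL0 hbandJ hbdJ n i i).trans (hpowle n le_rfl)
      have h2 : |gJ (a i) (b i) n 0| ≤ B0 := by
        refine (gJ_bound (hA i i.isLt) (hB i i.isLt) n 0).trans ?_
        exact hpowle n le_rfl
      calc |(J^n) i i - gJ (a i) (b i) n 0| ≤ |(J^n) i i| + |gJ (a i) (b i) n 0| :=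
            abs_sub _ _
        _ ≤ 2*B0 := by linarith
        _ ≤ 2*B0 + (3 * ((n:ℝ)*(2*n+1)) * B0^2) * W i := by linarith
  -- global assembly
  have htr : Matrix.trace (J^n) = ∑ i : Fin k, (J^n) i i := rfl
  rw [htr, ← Finset.sum_sub_distrib]
  refine le_trans (Finset.abs_sum_le_sum_abs _ _) ?_
  refine le_trans (Finset.sum_le_sum (fun i _ => key i)) ?_
  rw [Finset.sum_add_distrib, ← Finset.mul_sum]
  have hbd1 : ∑ i : Fin k, (if n ≤ (i:ℕ) ∧ (i:ℕ)+n < k then (0:ℝ) else 2*B0)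
      ≤ ((2*n:ℕ):ℝ) * (2*B0) := by
    have hrw : ∀ i : Fin k, (if n ≤ (i:ℕ) ∧ (i:ℕ)+n < k then (0:ℝ) else 2*B0)
        = (if ¬(n ≤ (i:ℕ) ∧ (i:ℕ)+n < k) then 2*B0 else 0) := by
      intro i
      by_cases h : n ≤ (i:ℕ) ∧ (i:ℕ)+n < k <;> simp [h]
    rw [Finset.sum_congr rfl (fun i _ => hrw i), ← Finset.sum_filter, Finset.sum_const,
      nsmul_eq_mul]
    apply mul_le_mul_of_nonneg_right _ (by linarith)
    have hcard : (Finset.univ.filter (fun i : Fin k => ¬(n ≤ (i:ℕ) ∧ (i:ℕ)+n < k))).card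
        ≤ 2*n := by
      have hsub := Finset.card_le_card_of_injOn (s := Finset.univ.filter
          (fun i : Fin k => ¬(n ≤ (i:ℕ) ∧ (i:ℕ)+n < k)))
        (t := Finset.range n ∪ Finset.Ico (k-n) k) Fin.val
        (by intro i hi
            simp only [Finset.coe_filter, Finset.mem_coe, Finset.mem_filter, Finset.mem_univ, true_and, Set.mem_setOf_eq] at hi
            simp only [Finset.coe_union, Finset.coe_range, Finset.coe_Ico, Set.mem_union, Set.mem_Iio, Set.mem_Ico, Finset.mem_coe, Finset.mem_union, Finset.mem_range, Finset.mem_Ico]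
            have := i.isLt
            omega)
        (Fin.val_injective.injOn)
      refine hsub.trans ?_
      refine (Finset.card_union_le _ _).trans ?_
      rw [Finset.card_range, Nat.card_Ico]
      omega
    exact_mod_cast hcard
  have hbd2 : ∑ i : Fin k, W i
      ≤ ((2*(n+1):ℕ):ℝ) * ((∑ m ∈ Finset.range (k-1), |a (m+1) - a m|)
          + ∑ m ∈ Finset.range (k-1), |b (m+1) - b m|) := by
    have hswap : ∑ i : Fin k, W i = ∑ m ∈ Finset.range (k-1),
        ∑ i : Fin k, (if (i:ℕ) ≤ m + (n+1) ∧ m < (i:ℕ) + (n+1) then c m else 0) := by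
      rw [hWdef]
      exact Finset.sum_comm
    rw [hswap]
    have hper : ∀ m ∈ Finset.range (k-1),
        ∑ i : Fin k, (if (i:ℕ) ≤ m + (n+1) ∧ m < (i:ℕ) + (n+1) then c m else 0)
          ≤ ((2*(n+1):ℕ):ℝ) * c m := by
      intro m _
      rw [← Finset.sum_filter, Finset.sum_const, nsmul_eq_mul]
      apply mul_le_mul_of_nonneg_right _ (hc0 m)
      have hcard := Finset.card_le_card_of_injOn (s := Finset.univ.filter
          (fun i : Fin k => (i:ℕ) ≤ m + (n+1) ∧ m < (i:ℕ) + (n+1)))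
        (t := Finset.Icc (m-n) (m+n+1)) Fin.val
        (by intro i hi
            simp only [Finset.coe_filter, Finset.mem_coe, Finset.mem_filter, Finset.mem_univ, true_and, Set.mem_setOf_eq] at hi
            simp only [Finset.coe_Icc, Set.mem_Icc, Finset.mem_coe, Finset.mem_Icc]
            omega)
        (Fin.val_injective.injOn)
      have : (Finset.Icc (m-n) (m+n+1)).card ≤ 2*(n+1) := by
        rw [Nat.card_Icc]
        omega
      exact_mod_cast le_trans hcard this
    refine le_trans (Finset.sum_le_sum hper) ?_
    rw [← Finset.mul_sum]
    apply mul_le_mul_of_nonneg_left _ (by positivity)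
    refine le_of_eq ?_
    rw [hcdef]
    dsimp only
    rw [Finset.sum_add_distrib]
  have hSnn : (0:ℝ) ≤ (∑ m ∈ Finset.range (k-1), |a (m+1) - a m|)
      + ∑ m ∈ Finset.range (k-1), |b (m+1) - b m| := by positivity
  have hfin2 : (3 * ((n:ℝ)*(2*n+1)) * B0^2) * (∑ i : Fin k, W i)
      ≤ (3 * ((n:ℝ)*(2*n+1)) * B0^2) * (((2*(n+1):ℕ):ℝ)
          * ((∑ m ∈ Finset.range (k-1), |a (m+1) - a m|)
            + ∑ m ∈ Finset.range (k-1), |b (m+1) - b m|)) := by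
    apply mul_le_mul_of_nonneg_left hbd2 (by positivity)
  refine le_trans (add_le_add hbd1 hfin2) ?_
  rw [hB0def]
  push_cast
  ring_nf
  exact le_refl _

lemma polylog (c₁ c₂ : ℝ) (m : ℕ) {s : ℝ} (hs : 0 < s) :
    (fun k : ℕ => (c₁ + c₂ * Real.log k)^m) =o[atTop] fun k : ℕ => (k:ℝ)^s := by
  have h1 : (fun x : ℝ => Real.log x ^ (m:ℝ)) =o[atTop] fun x : ℝ => x ^ s :=
    isLittleO_log_rpow_rpow_atTop (m:ℝ) hs
  have h2 := h1.comp_tendsto tendsto_natCast_atTop_atTop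
  refine IsBigO.trans_isLittleO ?_ h2
  rw [Asymptotics.isBigO_iff]
  refine ⟨(|c₁| + |c₂|)^m, ?_⟩
  have hev : ∀ᶠ k : ℕ in atTop, 1 ≤ Real.log k :=
    (Real.tendsto_log_atTop.comp tendsto_natCast_atTop_atTop).eventually_ge_atTop 1
  filter_upwards [hev] with k hk
  have hlog0 : (0:ℝ) ≤ Real.log k := by linarith
  have hb : |c₁ + c₂ * Real.log k| ≤ (|c₁| + |c₂|) * Real.log k := by
    refine (abs_add_le _ _).trans ?_
    rw [abs_mul, abs_of_nonneg hlog0]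
    have h3 : |c₁| ≤ |c₁| * Real.log k := le_mul_of_one_le_right (abs_nonneg _) hk
    linarith
  have hcomp : ‖Real.log (k:ℝ) ^ ((m:ℕ):ℝ)‖ = Real.log (k:ℝ) ^ m := by
    rw [Real.rpow_natCast, Real.norm_eq_abs, abs_pow, abs_of_nonneg hlog0]
  show ‖(c₁ + c₂ * Real.log k)^m‖ ≤ (|c₁| + |c₂|)^m * ‖(fun x : ℝ => Real.log x ^ (m:ℝ)) ((k:ℕ):ℝ)‖
  rw [Real.norm_eq_abs, abs_pow]
  calc |c₁ + c₂ * Real.log k|^m ≤ ((|c₁| + |c₂|) * Real.log k)^m :=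
        pow_le_pow_left₀ (abs_nonneg _) hb m
    _ = (|c₁| + |c₂|)^m * (Real.log k)^m := mul_pow _ _ _
    _ = (|c₁| + |c₂|)^m * ‖(fun x : ℝ => Real.log x ^ (m:ℝ)) ((k:ℕ):ℝ)‖ := by
        rw [hcomp]


/-- For `(a^k)ₖ, (b^k)ₖ ∈ 𝒮′` and every `n`,
`Trace[J(a^k,b^k)^n] = ∑_{j=0}^{⌊n/2⌋} n!/((j!)²(n−2j)!) ∑ᵢ (aᵢ^k)^{n−2j}(bᵢ^k)^{2j} + o(k)`. -/
theorem trace_pow_memS' (a b : ℕ → ℕ → ℝ) (ha : MemS' a) (hb : MemS' b) (n : ℕ) :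
    (fun k : ℕ =>
        Matrix.trace ((jacobiMatrix k (a k) (b k)) ^ n) -
          ∑ j ∈ Finset.range (n / 2 + 1),
            (n.factorial : ℝ) / (((j.factorial : ℝ)) ^ 2 * ((n - 2 * j).factorial : ℝ)) *
              ∑ i ∈ Finset.range k, a k i ^ (n - 2 * j) * b k i ^ (2 * j))
      =o[Filter.atTop] fun k : ℕ => (k : ℝ) := by
  obtain ⟨Ca, hCa⟩ := ha.2
  obtain ⟨Cb, hCb⟩ := hb.2
  set L : ℕ → ℝ := fun k => 1 + (|Ca| + |Cb|) * Real.log k with hLdef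
  set Sa : ℕ → ℝ := fun k => ∑ m ∈ Finset.range (k-1), |a k (m+1) - a k m| with hSadef
  set Sb : ℕ → ℝ := fun k => ∑ m ∈ Finset.range (k-1), |b k (m+1) - b k m| with hSbdef
  set u : ℕ → ℝ := fun k => (4*n) * (3*L k)^n
    + (3 * (n*(2*n+1)) * ((3*L k)^n)^2) * ((2*(n+1)) * (Sa k + Sb k)) with hudef
  -- main term rewriting
  have hmain : ∀ k : ℕ, ∑ j ∈ Finset.range (n / 2 + 1),
      (n.factorial : ℝ) / (((j.factorial : ℝ)) ^ 2 * ((n - 2 * j).factorial : ℝ)) *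
        ∑ i ∈ Finset.range k, a k i ^ (n - 2 * j) * b k i ^ (2 * j)
      = ∑ i : Fin k, gJ (a k i) (b k i) n 0 := by
    intro k
    rw [Fin.sum_univ_eq_sum_range (fun i => gJ (a k i) (b k i) n 0) k]
    simp only [Finset.mul_sum]
    rw [Finset.sum_comm]
    apply Finset.sum_congr rfl
    intro i _
    rw [gJ_closed]
  -- eventual bound
  have hevlog : ∀ᶠ k : ℕ in atTop, 1 ≤ Real.log k :=
    (Real.tendsto_log_atTop.comp tendsto_natCast_atTop_atTop).eventually_ge_atTop 1
  have hevbd : ∀ᶠ k : ℕ in atTop,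
      |Matrix.trace ((jacobiMatrix k (a k) (b k)) ^ n) -
        ∑ j ∈ Finset.range (n / 2 + 1),
          (n.factorial : ℝ) / (((j.factorial : ℝ)) ^ 2 * ((n - 2 * j).factorial : ℝ)) *
            ∑ i ∈ Finset.range k, a k i ^ (n - 2 * j) * b k i ^ (2 * j)| ≤ u k := by
    filter_upwards [hCa, hCb, hevlog] with k hka hkb hkl
    have hlog0 : (0:ℝ) ≤ Real.log k := by linarith
    have hL1 : 1 ≤ L k := by
      rw [hLdef]
      have : 0 ≤ (|Ca| + |Cb|) * Real.log k := by positivity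
      dsimp only
      linarith
    have hA' : ∀ i < k, |a k i| ≤ L k := by
      intro i hi
      refine (hka i hi).trans ?_
      rw [hLdef]
      dsimp only
      nlinarith [abs_nonneg Ca, abs_nonneg Cb, le_abs_self Ca, abs_nonneg (a k i)]
    have hB' : ∀ i < k, |b k i| ≤ L k := by
      intro i hi
      refine (hkb i hi).trans ?_
      rw [hLdef]
      dsimp only
      nlinarith [abs_nonneg Ca, abs_nonneg Cb, le_abs_self Cb]
    have := fixedk k n (a k) (b k) (L k) hL1 hA' hB'
    rw [hmain k]
    exact this
  -- little-o of the bound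
  have hT1 : (fun k : ℕ => (4*(n:ℝ)) * (3*L k)^n) =o[atTop] fun k : ℕ => (k:ℝ) := by
    have hp := polylog 3 (3*(|Ca| + |Cb|)) n (by norm_num : (0:ℝ) < 1)
    have hp2 : (fun k : ℕ => (3*L k)^n) =o[atTop] fun k : ℕ => (k:ℝ)^(1:ℝ) := by
      refine hp.congr' ?_ EventuallyEq.rfl
      apply Filter.Eventually.of_forall
      intro k
      rw [hLdef]
      dsimp only
      ring_nf
    have hp3 : (fun k : ℕ => (3*L k)^n) =o[atTop] fun k : ℕ => (k:ℝ) := by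
      refine hp2.congr' EventuallyEq.rfl ?_
      apply Filter.Eventually.of_forall
      intro k
      exact Real.rpow_one _
    exact hp3.const_mul_left _
  have hOa := ha.1 (1/2) (by constructor <;> norm_num)
  have hOb := hb.1 (1/2) (by constructor <;> norm_num)
  have hexp : (1 - 1/2 : ℝ) = 1/2 := by norm_num
  rw [hexp] at hOa hOb
  have hOS2 : (fun k : ℕ => Sa k + Sb k) =O[atTop] fun k : ℕ => (k:ℝ)^(1/2:ℝ) := by
    exact hOa.add hOb
  have hp2n : (fun k : ℕ => (3*L k)^(2*n)) =o[atTop] fun k : ℕ => (k:ℝ)^(1/2:ℝ) := by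
    have hp := polylog 3 (3*(|Ca| + |Cb|)) (2*n) (by norm_num : (0:ℝ) < 1/2)
    refine hp.congr' ?_ EventuallyEq.rfl
    apply Filter.Eventually.of_forall
    intro k
    rw [hLdef]
    dsimp only
    ring_nf
  have hmul : (fun k : ℕ => (3*L k)^(2*n) * (Sa k + Sb k)) =o[atTop]
      fun k : ℕ => (k:ℝ)^(1/2:ℝ) * (k:ℝ)^(1/2:ℝ) := hp2n.mul_isBigO hOS2
  have hmul2 : (fun k : ℕ => (3*L k)^(2*n) * (Sa k + Sb k)) =o[atTop]
      fun k : ℕ => (k:ℝ) := by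
    refine hmul.trans_isBigO (IsBigO.of_bound 1 ?_)
    filter_upwards [eventually_ge_atTop 1] with k hk
    have hk0 : (0:ℝ) < (k:ℝ) := by exact_mod_cast hk
    rw [Real.norm_eq_abs, Real.norm_eq_abs, ← Real.rpow_add hk0]
    norm_num
  have hT2 : (fun k : ℕ => (3 * ((n:ℝ)*(2*n+1)) * ((3*L k)^n)^2) * ((2*((n:ℝ)+1)) * (Sa k + Sb k)))
      =o[atTop] fun k : ℕ => (k:ℝ) := by
    have := (hmul2.const_mul_left ((3 * ((n:ℝ)*(2*n+1))) * (2*((n:ℝ)+1))))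
    refine this.congr' ?_ EventuallyEq.rfl
    apply Filter.Eventually.of_forall
    intro k
    dsimp only
    rw [show (3*L k)^(2*n) = ((3*L k)^n)^2 from pow_mul' _ 2 n]
    ring
  have hu : u =o[atTop] fun k : ℕ => (k:ℝ) := by
    have := hT1.add hT2
    refine this.congr' ?_ EventuallyEq.rfl
    apply Filter.Eventually.of_forall
    intro k
    rw [hudef]
  refine IsBigO.trans_isLittleO ?_ hu
  rw [Asymptotics.isBigO_iff]
  refine ⟨1, ?_⟩
  filter_upwards [hevbd] with k hk
  rw [one_mul, Real.norm_eq_abs, Real.norm_eq_abs]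
  exact hk.trans (le_abs_self _)

end JacobiAux
end
end

section
/- Let (a^k)_k and (b^k)_k be two sequences of vectors belonging to the class 𝒮. For each k let D_k = diag(a_1^k,…,a_k^k) and let L_k be the k×k lower shift matrix whose only nonzero entries are (L_k)_{i+1,i} = b_i^k for i = 1,…,k−1. Fix n ∈ ℕ, a word w = (w_1,…,w_n) with each w_m ∈ {L, D, T}, and an index 1 ≤ i < n; for each k let A_m^k = L_k if w_m = L, A_m^k = D_k if w_m = D, and A_m^k = L_k^T if w_m = T. Then (1/k)·Trace[A_1^k ⋯ A_i^k A_{i+1}^k ⋯ A_n^k] = (1/k)·Trace[A_1^k ⋯ A_{i+1}^k A_i^k ⋯ A_n^k] + o(1) as k → ∞; i.e., swapping two consecutive factors changes the normalized trace by o(1). -/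
open Filter MeasureTheory

noncomputable section

/-- The lower shift matrix `L_k` with `(L_k)_{i+1,i} = b i` (0-indexed). -/
def lowerMat (k : ℕ) (b : ℕ → ℝ) : Matrix (Fin k) (Fin k) ℝ :=
  Matrix.of fun i j => if (j : ℕ) + 1 = (i : ℕ) then b j else 0

/-- The diagonal matrix `D_k = diag(a 0, …, a (k-1))`. -/
def diagMat (k : ℕ) (a : ℕ → ℝ) : Matrix (Fin k) (Fin k) ℝ :=
  Matrix.diagonal fun i : Fin k => a i

/-- The matrix associated to a letter of the alphabet `{L, D, Lᵀ}` (encoded as `Fin 3`). -/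
def letterMat (k : ℕ) (a b : ℕ → ℝ) : Fin 3 → Matrix (Fin k) (Fin k) ℝ
  | 0 => lowerMat k b
  | 1 => diagMat k a
  | 2 => (lowerMat k b).transpose

/-- The matrix product `A_1 ⋯ A_n` associated to a word `w` in the letters `{L, D, Lᵀ}`. -/
def wordProd (k n : ℕ) (a b : ℕ → ℝ) (w : ℕ → Fin 3) : Matrix (Fin k) (Fin k) ℝ :=
  ((List.range n).map fun m => letterMat k a b (w m)).prod


namespace TraceSwapAux

/-- A matrix all of whose column and row `ℓ¹`-norms are at most 1. -/
def Good {k : ℕ} (M : Matrix (Fin k) (Fin k) ℝ) : Prop :=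
  (∀ q, ∑ p, |M p q| ≤ 1) ∧ (∀ p, ∑ q, |M p q| ≤ 1)

lemma good_entry {k : ℕ} {M : Matrix (Fin k) (Fin k) ℝ} (h : Good M) (p q : Fin k) :
    |M p q| ≤ 1 :=
  le_trans (Finset.single_le_sum (f := fun p => |M p q|) (fun i _ => abs_nonneg _)
    (Finset.mem_univ p)) (h.1 q)

lemma good_transpose {k : ℕ} {M : Matrix (Fin k) (Fin k) ℝ} (h : Good M) :
    Good M.transpose := ⟨h.2, h.1⟩

lemma good_one {k : ℕ} : Good (1 : Matrix (Fin k) (Fin k) ℝ) := by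
  constructor <;> intro q <;>
    simp [Matrix.one_apply, apply_ite abs, Finset.sum_ite_eq, Finset.sum_ite_eq']

lemma good_mul {k : ℕ} {M N : Matrix (Fin k) (Fin k) ℝ} (hM : Good M) (hN : Good N) :
    Good (M * N) := by
  have key : ∀ p q, |(M * N) p q| ≤ ∑ l, |M p l| * |N l q| := by
    intro p q
    rw [Matrix.mul_apply]
    refine (Finset.abs_sum_le_sum_abs _ _).trans ?_
    exact le_of_eq (Finset.sum_congr rfl fun l _ => abs_mul _ _)
  constructor
  · intro q
    calc ∑ p, |(M * N) p q| ≤ ∑ p, ∑ l, |M p l| * |N l q| :=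
          Finset.sum_le_sum fun p _ => key p q
      _ = ∑ l, (∑ p, |M p l|) * |N l q| := by
          rw [Finset.sum_comm]
          exact Finset.sum_congr rfl fun l _ => (Finset.sum_mul _ _ _).symm
      _ ≤ ∑ l, 1 * |N l q| :=
          Finset.sum_le_sum fun l _ => mul_le_mul_of_nonneg_right (hM.1 l) (abs_nonneg _)
      _ = ∑ l, |N l q| := by simp
      _ ≤ 1 := hN.1 q
  · intro p
    calc ∑ q, |(M * N) p q| ≤ ∑ q, ∑ l, |M p l| * |N l q| :=
          Finset.sum_le_sum fun q _ => key p q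
      _ = ∑ l, |M p l| * (∑ q, |N l q|) := by
          rw [Finset.sum_comm]
          exact Finset.sum_congr rfl fun l _ => (Finset.mul_sum _ _ _).symm
      _ ≤ ∑ l, |M p l| * 1 :=
          Finset.sum_le_sum fun l _ => mul_le_mul_of_nonneg_left (hN.2 l) (abs_nonneg _)
      _ = ∑ l, |M p l| := by simp
      _ ≤ 1 := hM.2 p

lemma good_prod {k : ℕ} : ∀ L : List (Matrix (Fin k) (Fin k) ℝ),
    (∀ M ∈ L, Good M) → Good L.prod
  | [], _ => by simpa using good_one
  | M :: L, h => by
    rw [List.prod_cons]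
    exact good_mul (h M (by simp)) (good_prod L fun N hN => h N (by simp [hN]))

lemma sum_ite_nat_le {k : ℕ} (j : ℕ) (c : ℝ) (hc : 0 ≤ c) :
    (∑ p : Fin k, if (p : ℕ) = j then c else 0) ≤ c := by
  by_cases h : j < k
  · have e : (∑ p : Fin k, if (p : ℕ) = j then c else 0)
        = ∑ p : Fin k, if p = (⟨j, h⟩ : Fin k) then c else 0 :=
      Finset.sum_congr rfl fun p _ => if_congr (by simp [Fin.ext_iff]) rfl rfl
    rw [e, Finset.sum_ite_eq' Finset.univ (⟨j, h⟩ : Fin k) (fun _ => c)]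
    simp
  · have e : (∑ p : Fin k, if (p : ℕ) = j then c else 0) = 0 :=
      Finset.sum_eq_zero fun p _ => if_neg (fun hpj => h (by rw [← hpj]; exact p.isLt))
    rw [e]; exact hc

lemma sum_ite_succ {k : ℕ} (j : ℕ) (c : ℝ) :
    (∑ l : Fin k, if j + 1 = (l : ℕ) then c else 0) = if j + 1 < k then c else 0 := by
  by_cases h : j + 1 < k
  · rw [if_pos h]
    have e : (∑ l : Fin k, if j + 1 = (l : ℕ) then c else 0)
        = ∑ l : Fin k, if l = (⟨j + 1, h⟩ : Fin k) then c else 0 :=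
      Finset.sum_congr rfl fun l _ => if_congr (by rw [Fin.ext_iff]; simp; omega) rfl rfl
    rw [e, Finset.sum_ite_eq' Finset.univ (⟨j + 1, h⟩ : Fin k) (fun _ => c)]
    simp
  · rw [if_neg h]
    exact Finset.sum_eq_zero fun l _ => if_neg fun hl => h (by rw [hl]; exact l.isLt)

lemma sum_ite_pred {k : ℕ} {j : ℕ} (hj : j < k) (f : ℕ → ℝ) :
    (∑ l : Fin k, if (l : ℕ) + 1 = j then f (l : ℕ) else 0)
      = if 1 ≤ j then f (j - 1) else 0 := by
  by_cases h1 : 1 ≤ j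
  · rw [if_pos h1]
    have hl : j - 1 < k := by omega
    have e : (∑ l : Fin k, if (l : ℕ) + 1 = j then f (l : ℕ) else 0)
        = ∑ l : Fin k, if l = (⟨j - 1, hl⟩ : Fin k) then f (l : ℕ) else 0 :=
      Finset.sum_congr rfl fun l _ => if_congr (by rw [Fin.ext_iff]; simp; omega) rfl rfl
    rw [e, Finset.sum_ite_eq' Finset.univ (⟨j - 1, hl⟩ : Fin k) (fun l : Fin k => f (l : ℕ))]
    simp
  · rw [if_neg h1]
    exact Finset.sum_eq_zero fun l _ => if_neg (by omega)

lemma sum_sub_diag_le {k : ℕ} (d : ℕ → ℝ) (hd : ∀ j, 0 ≤ d j) :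
    (∑ x : Fin k, ∑ y : Fin k, if (x : ℕ) + 1 = (y : ℕ) then d (x : ℕ) else 0)
      ≤ ∑ j ∈ Finset.range (k - 1), d j := by
  have inner : ∀ x : Fin k, (∑ y : Fin k, if (x : ℕ) + 1 = (y : ℕ) then d (x : ℕ) else 0)
      = if (x : ℕ) + 1 < k then d (x : ℕ) else 0 := fun x => sum_ite_succ _ _
  rw [Finset.sum_congr rfl fun x _ => inner x]
  rw [Fin.sum_univ_eq_sum_range (fun j => if j + 1 < k then d j else 0) k]
  have e2 : (∑ j ∈ Finset.range k, if j + 1 < k then d j else 0)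
      = ∑ j ∈ Finset.range (k - 1), if j + 1 < k then d j else 0 :=
    (Finset.sum_subset (Finset.range_subset_range.2 (by omega)) (fun j hj hj' => by
      simp only [Finset.mem_range] at hj hj'
      exact if_neg (by omega))).symm
  rw [e2]
  refine le_of_eq (Finset.sum_congr rfl fun j hj => ?_)
  simp only [Finset.mem_range] at hj
  exact if_pos (by omega)

lemma sum_diag_le {k : ℕ} (d : ℕ → ℝ) (hd : ∀ j, 0 ≤ d j) :
    (∑ j ∈ Finset.range k, if 1 ≤ j ∧ j + 1 < k then d (j - 1) else (1 : ℝ))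
      ≤ (∑ j ∈ Finset.range (k - 1), d j) + 2 := by
  rcases Nat.eq_zero_or_pos k with hk | hk
  · subst hk
    simp only [Finset.range_zero, Finset.sum_empty, Nat.zero_sub]
    positivity
  · obtain ⟨m, rfl⟩ : ∃ m, k = m + 1 := ⟨k - 1, by omega⟩
    rw [Finset.sum_range_succ']
    have f0 : (if 1 ≤ 0 ∧ 0 + 1 < m + 1 then d (0 - 1) else (1 : ℝ)) = 1 := by norm_num
    rw [f0]
    have hstep : ∀ j ∈ Finset.range m,
        (if 1 ≤ j + 1 ∧ j + 1 + 1 < m + 1 then d (j + 1 - 1) else (1 : ℝ))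
          ≤ d j + (if j = m - 1 then (1 : ℝ) else 0) := by
      intro j hj
      simp only [Finset.mem_range] at hj
      by_cases h : 1 ≤ j + 1 ∧ j + 1 + 1 < m + 1
      · rw [if_pos h]
        simp only [Nat.add_sub_cancel]
        have : (0 : ℝ) ≤ if j = m - 1 then (1 : ℝ) else 0 := by positivity
        linarith
      · rw [if_neg h, if_pos (by omega)]
        linarith [hd j]
    calc (∑ j ∈ Finset.range m,
            if 1 ≤ j + 1 ∧ j + 1 + 1 < m + 1 then d (j + 1 - 1) else (1 : ℝ)) + 1
        ≤ (∑ j ∈ Finset.range m, (d j + if j = m - 1 then (1 : ℝ) else 0)) + 1 := by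
          linarith [Finset.sum_le_sum hstep]
      _ = (∑ j ∈ Finset.range m, d j)
            + (∑ j ∈ Finset.range m, if j = m - 1 then (1 : ℝ) else 0) + 1 := by
          rw [Finset.sum_add_distrib]
      _ ≤ (∑ j ∈ Finset.range m, d j) + 1 + 1 := by
          have := Finset.sum_ite_eq' (Finset.range m) (m - 1) (fun _ => (1 : ℝ))
          rw [this]
          split_ifs <;> norm_num
      _ = (∑ j ∈ Finset.range ((m + 1) - 1), d j) + 2 := by simp; ring

lemma good_lower {k : ℕ} {b : ℕ → ℝ} (hb : ∀ j < k, |b j| ≤ 1) : Good (lowerMat k b) := by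
  constructor
  · intro q
    have hterm : ∀ p : Fin k, |lowerMat k b p q| ≤ (if (p : ℕ) = (q : ℕ) + 1 then (1:ℝ) else 0) := by
      intro p
      simp only [lowerMat, Matrix.of_apply]
      split_ifs with h1 h2 h2
      · exact hb _ q.isLt
      · omega
      · norm_num
      · norm_num
    exact (Finset.sum_le_sum fun p _ => hterm p).trans (sum_ite_nat_le _ _ (by norm_num))
  · intro p
    have hterm : ∀ q : Fin k, |lowerMat k b p q| ≤ (if (q : ℕ) = (p : ℕ) - 1 then (1:ℝ) else 0) := by
      intro q
      simp only [lowerMat, Matrix.of_apply]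
      split_ifs with h1 h2 h2
      · exact hb _ q.isLt
      · omega
      · norm_num
      · norm_num
    exact (Finset.sum_le_sum fun q _ => hterm q).trans (sum_ite_nat_le _ _ (by norm_num))

lemma good_diag {k : ℕ} {a : ℕ → ℝ} (ha : ∀ j < k, |a j| ≤ 1) : Good (diagMat k a) := by
  have hterm : ∀ p q : Fin k, |diagMat k a p q| ≤ (if (p : ℕ) = (q : ℕ) then (1:ℝ) else 0) := by
    intro p q
    simp only [diagMat, Matrix.diagonal_apply]
    split_ifs with h1 h2 h2
    · exact ha _ p.isLt
    · exact absurd (congrArg Fin.val h1) h2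
    · norm_num
    · norm_num
  constructor
  · intro q
    refine (Finset.sum_le_sum fun p _ => hterm p q).trans ?_
    exact sum_ite_nat_le _ _ (by norm_num)
  · intro p
    have hterm2 : ∀ q : Fin k, |diagMat k a p q| ≤ (if (q : ℕ) = (p : ℕ) then (1:ℝ) else 0) := by
      intro q
      simp only [diagMat, Matrix.diagonal_apply]
      split_ifs with h1 h2 h2
      · exact ha _ p.isLt
      · exact absurd (congrArg Fin.val h1) (fun hh => h2 hh.symm)
      · norm_num
      · norm_num
    refine (Finset.sum_le_sum fun q _ => hterm2 q).trans ?_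
    exact sum_ite_nat_le _ _ (by norm_num)

lemma good_letter {k : ℕ} {a b : ℕ → ℝ} (ha : ∀ j < k, |a j| ≤ 1) (hb : ∀ j < k, |b j| ≤ 1)
    (t : Fin 3) : Good (letterMat k a b t) := by
  fin_cases t
  · exact good_lower hb
  · exact good_diag ha
  · exact good_transpose (good_lower hb)

lemma trace_le {k : ℕ} (X C T : Matrix (Fin k) (Fin k) ℝ) (hX : Good X) (hT : Good T) :
    |Matrix.trace (X * (C * T))| ≤ ∑ q, ∑ r, |C q r| := by
  rw [Matrix.trace_mul_comm, mul_assoc]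
  have hZ : Good (T * X) := good_mul hT hX
  rw [Matrix.trace]
  calc |∑ q, (C * (T * X)).diag q| ≤ ∑ q, |(C * (T * X)).diag q| :=
        Finset.abs_sum_le_sum_abs _ _
    _ ≤ ∑ q, ∑ r, |C q r| := by
        refine Finset.sum_le_sum fun q _ => ?_
        show |(C * (T * X)) q q| ≤ _
        rw [Matrix.mul_apply]
        refine (Finset.abs_sum_le_sum_abs _ _).trans (Finset.sum_le_sum fun r _ => ?_)
        rw [abs_mul]
        exact mul_le_of_le_one_right (abs_nonneg _) (good_entry hZ r q)

lemma comm_LD {k : ℕ} {a b : ℕ → ℝ} (hb : ∀ j < k, |b j| ≤ 1) :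
    (∑ q : Fin k, ∑ r : Fin k,
      |(lowerMat k b * diagMat k a - diagMat k a * lowerMat k b) q r|)
      ≤ ∑ j ∈ Finset.range (k - 1), |a (j + 1) - a j| := by
  have hterm : ∀ q r : Fin k,
      |(lowerMat k b * diagMat k a - diagMat k a * lowerMat k b) q r|
        ≤ (if (r : ℕ) + 1 = (q : ℕ) then |a ((r : ℕ) + 1) - a (r : ℕ)| else 0) := by
    intro q r
    have e : (lowerMat k b * diagMat k a - diagMat k a * lowerMat k b) q r
        = lowerMat k b q r * (a (r : ℕ) - a (q : ℕ)) := by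
      simp only [Matrix.sub_apply, diagMat, Matrix.mul_diagonal, Matrix.diagonal_mul]
      ring
    rw [e]
    simp only [lowerMat, Matrix.of_apply]
    split_ifs with h1
    · rw [abs_mul, ← h1, abs_sub_comm (a (r : ℕ)) (a ((r : ℕ) + 1))]
      exact mul_le_of_le_one_left (abs_nonneg _) (hb _ r.isLt)
    · simp
  calc (∑ q : Fin k, ∑ r : Fin k, |_|)
      ≤ ∑ q : Fin k, ∑ r : Fin k,
          (if (r : ℕ) + 1 = (q : ℕ) then |a ((r : ℕ) + 1) - a (r : ℕ)| else 0) :=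
        Finset.sum_le_sum fun q _ => Finset.sum_le_sum fun r _ => hterm q r
    _ = ∑ r : Fin k, ∑ q : Fin k,
          (if (r : ℕ) + 1 = (q : ℕ) then |a ((r : ℕ) + 1) - a (r : ℕ)| else 0) :=
        Finset.sum_comm
    _ ≤ ∑ j ∈ Finset.range (k - 1), |a (j + 1) - a j| :=
        sum_sub_diag_le (fun j => |a (j + 1) - a j|) (fun j => abs_nonneg _)

lemma comm_DT {k : ℕ} {a b : ℕ → ℝ} (hb : ∀ j < k, |b j| ≤ 1) :
    (∑ q : Fin k, ∑ r : Fin k,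
      |(diagMat k a * (lowerMat k b).transpose - (lowerMat k b).transpose * diagMat k a) q r|)
      ≤ ∑ j ∈ Finset.range (k - 1), |a (j + 1) - a j| := by
  have hterm : ∀ q r : Fin k,
      |(diagMat k a * (lowerMat k b).transpose - (lowerMat k b).transpose * diagMat k a) q r|
        ≤ (if (q : ℕ) + 1 = (r : ℕ) then |a ((q : ℕ) + 1) - a (q : ℕ)| else 0) := by
    intro q r
    have e : (diagMat k a * (lowerMat k b).transpose
          - (lowerMat k b).transpose * diagMat k a) q r
        = lowerMat k b r q * (a (q : ℕ) - a (r : ℕ)) := by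
      simp only [Matrix.sub_apply, diagMat, Matrix.mul_diagonal, Matrix.diagonal_mul,
        Matrix.transpose_apply]
      ring
    rw [e]
    simp only [lowerMat, Matrix.of_apply]
    split_ifs with h1
    · rw [abs_mul, ← h1, abs_sub_comm (a (q : ℕ)) (a ((q : ℕ) + 1))]
      exact mul_le_of_le_one_left (abs_nonneg _) (hb _ q.isLt)
    · simp
  calc (∑ q : Fin k, ∑ r : Fin k, |_|)
      ≤ ∑ q : Fin k, ∑ r : Fin k,
          (if (q : ℕ) + 1 = (r : ℕ) then |a ((q : ℕ) + 1) - a (q : ℕ)| else 0) :=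
        Finset.sum_le_sum fun q _ => Finset.sum_le_sum fun r _ => hterm q r
    _ ≤ ∑ j ∈ Finset.range (k - 1), |a (j + 1) - a j| :=
        sum_sub_diag_le (fun j => |a (j + 1) - a j|) (fun j => abs_nonneg _)

lemma comm_LT {k : ℕ} {b : ℕ → ℝ} (hb : ∀ j < k, |b j| ≤ 1) :
    (∑ q : Fin k, ∑ r : Fin k,
      |(lowerMat k b * (lowerMat k b).transpose
          - (lowerMat k b).transpose * lowerMat k b) q r|)
      ≤ 2 * (∑ j ∈ Finset.range (k - 1), |b (j + 1) - b j|) + 2 := by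
  set L := lowerMat k b with hL
  set C := L * L.transpose - L.transpose * L with hC
  have hdiag : ∀ q r : Fin k, (q : ℕ) ≠ (r : ℕ) → C q r = 0 := by
    intro q r hqr
    have e1 : (L * L.transpose) q r = 0 := by
      rw [Matrix.mul_apply]
      refine Finset.sum_eq_zero fun l _ => ?_
      simp only [Matrix.transpose_apply, hL, lowerMat, Matrix.of_apply]
      split_ifs with h1 h2 <;> first | omega | ring
    have e2 : (L.transpose * L) q r = 0 := by
      rw [Matrix.mul_apply]
      refine Finset.sum_eq_zero fun l _ => ?_
      simp only [Matrix.transpose_apply, hL, lowerMat, Matrix.of_apply]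
      split_ifs with h1 h2 <;> first | omega | ring
    simp [hC, Matrix.sub_apply, e1, e2]
  have hdval : ∀ q : Fin k, |C q q|
      ≤ (if 1 ≤ (q : ℕ) ∧ (q : ℕ) + 1 < k
          then (fun j => 2 * |b (j + 1) - b j|) ((q : ℕ) - 1) else (1 : ℝ)) := by
    intro q
    have e1 : (L * L.transpose) q q
        = if 1 ≤ (q : ℕ) then b ((q : ℕ) - 1) * b ((q : ℕ) - 1) else 0 := by
      rw [Matrix.mul_apply]
      rw [show (∑ l, L q l * L.transpose l q)
          = ∑ l : Fin k, if (l : ℕ) + 1 = (q : ℕ) then b (l : ℕ) * b (l : ℕ) else 0 from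
        Finset.sum_congr rfl fun l _ => by
          simp only [Matrix.transpose_apply, hL, lowerMat, Matrix.of_apply]
          split_ifs <;> ring]
      exact sum_ite_pred q.isLt (fun j => b j * b j)
    have e2 : (L.transpose * L) q q
        = if (q : ℕ) + 1 < k then b (q : ℕ) * b (q : ℕ) else 0 := by
      rw [Matrix.mul_apply]
      rw [show (∑ l, L.transpose q l * L l q)
          = ∑ l : Fin k, if (q : ℕ) + 1 = (l : ℕ) then b (q : ℕ) * b (q : ℕ) else 0 from
        Finset.sum_congr rfl fun l _ => by
          simp only [Matrix.transpose_apply, hL, lowerMat, Matrix.of_apply]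
          split_ifs <;> ring]
      exact sum_ite_succ _ _
    have eC : C q q = (if 1 ≤ (q : ℕ) then b ((q : ℕ) - 1) * b ((q : ℕ) - 1) else 0)
        - (if (q : ℕ) + 1 < k then b (q : ℕ) * b (q : ℕ) else 0) := by
      rw [hC, Matrix.sub_apply, e1, e2]
    rw [eC]
    by_cases h1 : 1 ≤ (q : ℕ) <;> by_cases h2 : (q : ℕ) + 1 < k
    · rw [if_pos h1, if_pos h2, if_pos ⟨h1, h2⟩]
      have hq : (q : ℕ) - 1 + 1 = (q : ℕ) := by omega
      show |b ((q : ℕ) - 1) * b ((q : ℕ) - 1) - b (q : ℕ) * b (q : ℕ)|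
        ≤ 2 * |b ((q : ℕ) - 1 + 1) - b ((q : ℕ) - 1)|
      rw [hq]
      have key : b ((q : ℕ) - 1) * b ((q : ℕ) - 1) - b (q : ℕ) * b (q : ℕ)
          = (b ((q : ℕ) - 1) + b (q : ℕ)) * (b ((q : ℕ) - 1) - b (q : ℕ)) := by ring
      rw [key, abs_mul, abs_sub_comm (b ((q : ℕ) - 1)) (b (q : ℕ))]
      have h3 : |b ((q : ℕ) - 1) + b (q : ℕ)| ≤ 2 :=
        (abs_add_le _ _).trans (by
          have := hb _ (show (q : ℕ) - 1 < k by omega)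
          have := hb _ q.isLt
          linarith)
      exact mul_le_mul h3 le_rfl (abs_nonneg _) (by norm_num)
    · rw [if_pos h1, if_neg h2, if_neg (by tauto), sub_zero]
      calc |b ((q : ℕ) - 1) * b ((q : ℕ) - 1)| = |b ((q : ℕ) - 1)| * |b ((q : ℕ) - 1)| :=
            abs_mul _ _
        _ ≤ 1 * 1 := mul_le_mul (hb _ (by omega)) (hb _ (by omega)) (abs_nonneg _) (by norm_num)
        _ = 1 := by norm_num
    · rw [if_neg h1, if_pos h2, if_neg (by tauto), zero_sub, abs_neg]
      calc |b (q : ℕ) * b (q : ℕ)| = |b (q : ℕ)| * |b (q : ℕ)| := abs_mul _ _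
        _ ≤ 1 * 1 := mul_le_mul (hb _ q.isLt) (hb _ q.isLt) (abs_nonneg _) (by norm_num)
        _ = 1 := by norm_num
    · rw [if_neg h1, if_neg h2, if_neg (by tauto)]
      simp
  have hinner : ∀ q : Fin k, (∑ r : Fin k, |C q r|) = |C q q| := by
    intro q
    refine Finset.sum_eq_single_of_mem q (Finset.mem_univ q) fun r _ hrq => ?_
    rw [hdiag q r (fun hh => hrq (Fin.ext hh.symm)), abs_zero]
  calc (∑ q : Fin k, ∑ r : Fin k, |C q r|) = ∑ q : Fin k, |C q q| :=
        Finset.sum_congr rfl fun q _ => hinner q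
    _ ≤ ∑ q : Fin k, (if 1 ≤ (q : ℕ) ∧ (q : ℕ) + 1 < k
          then (fun j => 2 * |b (j + 1) - b j|) ((q : ℕ) - 1) else (1 : ℝ)) :=
        Finset.sum_le_sum fun q _ => hdval q
    _ = ∑ j ∈ Finset.range k, (if 1 ≤ j ∧ j + 1 < k
          then (fun j => 2 * |b (j + 1) - b j|) (j - 1) else (1 : ℝ)) :=
        Fin.sum_univ_eq_sum_range
          (fun j => if 1 ≤ j ∧ j + 1 < k then (fun j => 2 * |b (j + 1) - b j|) (j - 1) else (1 : ℝ)) k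
    _ ≤ (∑ j ∈ Finset.range (k - 1), 2 * |b (j + 1) - b j|) + 2 :=
        sum_diag_le (fun j => 2 * |b (j + 1) - b j|) (fun j => by positivity)
    _ = 2 * (∑ j ∈ Finset.range (k - 1), |b (j + 1) - b j|) + 2 := by
        rw [Finset.mul_sum]

lemma comm_bound {k : ℕ} {a b : ℕ → ℝ} (ha : ∀ j < k, |a j| ≤ 1) (hb : ∀ j < k, |b j| ≤ 1)
    (s t : Fin 3) :
    (∑ q : Fin k, ∑ r : Fin k, |(letterMat k a b s * letterMat k a b t
        - letterMat k a b t * letterMat k a b s) q r|)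
      ≤ (∑ j ∈ Finset.range (k - 1), |a (j + 1) - a j|)
        + (2 * (∑ j ∈ Finset.range (k - 1), |b (j + 1) - b j|) + 2) := by
  have hSa : 0 ≤ ∑ j ∈ Finset.range (k - 1), |a (j + 1) - a j| :=
    Finset.sum_nonneg fun _ _ => abs_nonneg _
  have hSb : 0 ≤ ∑ j ∈ Finset.range (k - 1), |b (j + 1) - b j| :=
    Finset.sum_nonneg fun _ _ => abs_nonneg _
  have hswap : ∀ M N : Matrix (Fin k) (Fin k) ℝ,
      (∑ q : Fin k, ∑ r : Fin k, |(M * N - N * M) q r|)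
        = ∑ q : Fin k, ∑ r : Fin k, |(N * M - M * N) q r| := fun M N =>
    Finset.sum_congr rfl fun q _ => Finset.sum_congr rfl fun r _ => by
      rw [Matrix.sub_apply, Matrix.sub_apply, abs_sub_comm]
  fin_cases s <;> fin_cases t <;> simp only [letterMat]
  · simp only [sub_self, Matrix.zero_apply, abs_zero, Finset.sum_const_zero]; linarith
  · exact (comm_LD hb).trans (by linarith)
  · exact (comm_LT hb).trans (by linarith)
  · rw [hswap]; exact (comm_LD hb).trans (by linarith)
  · simp only [sub_self, Matrix.zero_apply, abs_zero, Finset.sum_const_zero]; linarith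
  · exact (comm_DT hb).trans (by linarith)
  · rw [hswap]; exact (comm_LT hb).trans (by linarith)
  · rw [hswap]; exact (comm_DT hb).trans (by linarith)
  · simp only [sub_self, Matrix.zero_apply, abs_zero, Finset.sum_const_zero]; linarith

lemma wordProd_congr (k n : ℕ) (a b : ℕ → ℝ) (w w' : ℕ → Fin 3)
    (h : ∀ m < n, w m = w' m) : wordProd k n a b w = wordProd k n a b w' := by
  unfold wordProd
  congr 1
  exact List.map_congr_left fun m hm => by rw [h m (List.mem_range.1 hm)]

lemma wordProd_split (k n : ℕ) (a b : ℕ → ℝ) (w : ℕ → Fin 3) (i : ℕ) (h : i + 2 ≤ n) :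
    wordProd k n a b w
      = wordProd k i a b w *
          (letterMat k a b (w i) *
            (letterMat k a b (w (i + 1)) *
              ((List.range (n - (i + 2))).map fun m => letterMat k a b (w (i + 2 + m))).prod)) := by
  unfold wordProd
  conv_lhs => rw [show n = i + 2 + (n - (i + 2)) by omega]
  rw [List.range_add, List.map_append, List.prod_append, List.map_map,
    List.range_add (n := i) (m := 2), List.map_append, List.prod_append, List.map_map]
  have hr2 : List.range 2 = [0, 1] := by decide
  rw [hr2]
  simp only [List.map_cons, List.map_nil, List.prod_cons, List.prod_nil, Function.comp_def,
    Nat.add_zero, mul_one, mul_assoc]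

end TraceSwapAux

/-- for `(a^k)ₖ, (b^k)ₖ ∈ 𝒮`, swapping two consecutive factors in a word in
`{L_k, D_k, L_kᵀ}` changes the normalized trace by `o(1)`. -/
theorem trace_word_swap (a b : ℕ → ℕ → ℝ) (ha : MemS a) (hb : MemS b)
    (n : ℕ) (w : ℕ → Fin 3) (i : ℕ) (hi : i + 1 < n) :
    Filter.Tendsto
      (fun k : ℕ =>
        (1 / (k : ℝ)) * Matrix.trace (wordProd k n (a k) (b k) w) -
          (1 / (k : ℝ)) * Matrix.trace (wordProd k n (a k) (b k)
            (fun m => if m = i then w (i + 1) else if m = i + 1 then w i else w m)))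
      Filter.atTop (nhds 0) := by
  classical
  set w' : ℕ → Fin 3 := fun m => if m = i then w (i + 1) else if m = i + 1 then w i else w m
    with hw'
  have ha1 : ∀ k : ℕ, ∀ j < k, |a k j| ≤ 1 := fun k j hj =>
    abs_le.2 ⟨by linarith [(ha.2 k j hj).1], (ha.2 k j hj).2⟩
  have hb1 : ∀ k : ℕ, ∀ j < k, |b k j| ≤ 1 := fun k j hj =>
    abs_le.2 ⟨by linarith [(hb.2 k j hj).1], (hb.2 k j hj).2⟩
  have h2 : i + 2 ≤ n := hi
  have key : ∀ k : ℕ,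
      |(1 / (k : ℝ)) * Matrix.trace (wordProd k n (a k) (b k) w) -
        (1 / (k : ℝ)) * Matrix.trace (wordProd k n (a k) (b k) w')|
      ≤ (1 / (k : ℝ)) * ((∑ j ∈ Finset.range (k - 1), |a k (j + 1) - a k j|)
          + (2 * (∑ j ∈ Finset.range (k - 1), |b k (j + 1) - b k j|) + 2)) := by
    intro k
    have e1 := TraceSwapAux.wordProd_split k n (a k) (b k) w i h2
    have e2 := TraceSwapAux.wordProd_split k n (a k) (b k) w' i h2
    have eX : wordProd k i (a k) (b k) w' = wordProd k i (a k) (b k) w :=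
      TraceSwapAux.wordProd_congr k i (a k) (b k) w' w fun m hm => by
        simp only [hw']
        rw [if_neg (by omega), if_neg (by omega)]
    have eT : ((List.range (n - (i + 2))).map
          fun m => letterMat k (a k) (b k) (w' (i + 2 + m)))
        = (List.range (n - (i + 2))).map fun m => letterMat k (a k) (b k) (w (i + 2 + m)) :=
      List.map_congr_left fun m hm => by
        simp only [hw']
        rw [if_neg (by omega), if_neg (by omega)]
    have eA : w' i = w (i + 1) := by simp [hw']
    have eB : w' (i + 1) = w i := by simp [hw']
    rw [e1, e2, eX, eT, eA, eB]
    set X := wordProd k i (a k) (b k) w with hX'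
    set A := letterMat k (a k) (b k) (w i) with hA'
    set B := letterMat k (a k) (b k) (w (i + 1)) with hB'
    set T := ((List.range (n - (i + 2))).map
      fun m => letterMat k (a k) (b k) (w (i + 2 + m))).prod with hT'
    have etr : (1 / (k : ℝ)) * Matrix.trace (X * (A * (B * T)))
          - (1 / (k : ℝ)) * Matrix.trace (X * (B * (A * T)))
        = (1 / (k : ℝ)) * Matrix.trace (X * ((A * B - B * A) * T)) := by
      rw [← mul_sub, ← Matrix.trace_sub]
      congr 2
      noncomm_ring
    rw [etr, abs_mul]
    have hGX : TraceSwapAux.Good X := by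
      rw [hX']
      unfold wordProd
      exact TraceSwapAux.good_prod _ fun M hM => by
        obtain ⟨m, _, rfl⟩ := List.mem_map.1 hM
        exact TraceSwapAux.good_letter (ha1 k) (hb1 k) _
    have hGT : TraceSwapAux.Good T := by
      rw [hT']
      exact TraceSwapAux.good_prod _ fun M hM => by
        obtain ⟨m, _, rfl⟩ := List.mem_map.1 hM
        exact TraceSwapAux.good_letter (ha1 k) (hb1 k) _
    have htr : |Matrix.trace (X * ((A * B - B * A) * T))|
        ≤ (∑ j ∈ Finset.range (k - 1), |a k (j + 1) - a k j|)
          + (2 * (∑ j ∈ Finset.range (k - 1), |b k (j + 1) - b k j|) + 2) :=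
      (TraceSwapAux.trace_le X _ T hGX hGT).trans
        (TraceSwapAux.comm_bound (ha1 k) (hb1 k) (w i) (w (i + 1)))
    have h1k : (0 : ℝ) ≤ 1 / (k : ℝ) := by positivity
    rw [abs_of_nonneg h1k]
    exact mul_le_mul_of_nonneg_left htr h1k
  have hg : Filter.Tendsto (fun k : ℕ =>
      (1 / (k : ℝ)) * ((∑ j ∈ Finset.range (k - 1), |a k (j + 1) - a k j|)
        + (2 * (∑ j ∈ Finset.range (k - 1), |b k (j + 1) - b k j|) + 2)))
      Filter.atTop (nhds 0) := by
    have t1 : Filter.Tendsto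
        (fun k : ℕ => (∑ j ∈ Finset.range (k - 1), |a k (j + 1) - a k j|) / (k : ℝ))
        Filter.atTop (nhds 0) := ha.1.tendsto_div_nhds_zero
    have t2 : Filter.Tendsto
        (fun k : ℕ => (∑ j ∈ Finset.range (k - 1), |b k (j + 1) - b k j|) / (k : ℝ))
        Filter.atTop (nhds 0) := hb.1.tendsto_div_nhds_zero
    have t3 : Filter.Tendsto (fun k : ℕ => 1 / (k : ℝ)) Filter.atTop (nhds 0) :=
      tendsto_one_div_atTop_nhds_zero_nat
    have heq : (fun k : ℕ =>
        (1 / (k : ℝ)) * ((∑ j ∈ Finset.range (k - 1), |a k (j + 1) - a k j|)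
          + (2 * (∑ j ∈ Finset.range (k - 1), |b k (j + 1) - b k j|) + 2)))
        = fun k : ℕ =>
          (∑ j ∈ Finset.range (k - 1), |a k (j + 1) - a k j|) / (k : ℝ)
            + (2 * ((∑ j ∈ Finset.range (k - 1), |b k (j + 1) - b k j|) / (k : ℝ))
              + 2 * (1 / (k : ℝ))) := by
      funext k
      ring
    rw [heq]
    have := t1.add ((t2.const_mul 2).add (t3.const_mul 2))
    simpa using this
  exact squeeze_zero_norm (fun k => by rw [Real.norm_eq_abs]; exact key k) hg
end
end

section
/- Let μ be a probability measure on I² = [0,1]². Suppose (a^k, b^k)_k is a μ-distributed sequence with (a^k)_k and (b^k)_k in the class 𝒮. Then for every continuous function φ on [−3,3], lim_{k→∞} (1/k)·Trace[φ(J(a^k,b^k))] = (1/π) ∫_{I²} ∫_0^π φ(x + 2y·cos t) dt dμ(x,y). -/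
open Filter MeasureTheory

noncomputable section

open Matrix

lemma sum_eigenvalues_pow {k : ℕ} {A : Matrix (Fin k) (Fin k) ℝ} (hA : A.IsHermitian) (m : ℕ) :
    ∑ i, hA.eigenvalues i ^ m = Matrix.trace (A ^ m) := by
  classical
  set U : Matrix (Fin k) (Fin k) ℝ := (hA.eigenvectorUnitary : Matrix (Fin k) (Fin k) ℝ) with hU
  set D : Matrix (Fin k) (Fin k) ℝ := Matrix.diagonal (RCLike.ofReal ∘ hA.eigenvalues) with hD
  have hUs : star U * U = 1 := Unitary.coe_star_mul_self hA.eigenvectorUnitary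
  have hsp : A = U * D * star U := hA.spectral_theorem
  have hpow : A ^ m = U * D ^ m * star U := by
    induction m with
    | zero =>
      rw [pow_zero, pow_zero, Matrix.mul_one]
      exact (Unitary.coe_mul_star_self hA.eigenvectorUnitary).symm
    | succ n ih =>
      calc A ^ (n+1) = A ^ n * A := pow_succ A n
        _ = U * D ^ n * star U * (U * D * star U) := by rw [ih, ← hsp]
        _ = U * D ^ n * (star U * U) * D * star U := by
            simp only [Matrix.mul_assoc]
        _ = U * D ^ (n+1) * star U := by
            rw [hUs, Matrix.mul_one, pow_succ]; simp only [Matrix.mul_assoc]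
  rw [hpow, Matrix.trace_mul_cycle]
  rw [hUs, Matrix.one_mul, hD, Matrix.diagonal_pow, Matrix.trace_diagonal]
  simp

open Matrix

lemma jacobi_entry_eq_zero {k : ℕ} (a b : ℕ → ℝ) {i j : Fin k}
    (h : ¬((i:ℕ) = j ∨ (i:ℕ) + 1 = j ∨ (j:ℕ) + 1 = i)) :
    jacobiMatrix k a b i j = 0 := by
  push_neg at h
  unfold jacobiMatrix
  simp only [Matrix.of_apply, h.1, h.2.1, h.2.2, if_false]

lemma jacobi_row_sum_le_local {k : ℕ} (a b : ℕ → ℝ) (i : Fin k) {c M : ℝ}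
    (hM0 : 0 ≤ M)
    (hai : |a (i:ℕ)| ≤ c) (hbi : |b (i:ℕ)| ≤ c) (hbm : |b ((i:ℕ) - 1)| ≤ c)
    (g : Fin k → ℝ)
    (hM : ∀ t : Fin k, ((i:ℕ) = (t:ℕ) ∨ (i:ℕ) + 1 = (t:ℕ) ∨ (t:ℕ) + 1 = (i:ℕ)) → |g t| ≤ M) :
    ∑ t, |jacobiMatrix k a b i t * g t| ≤ 3 * (c * M) := by
  classical
  have hc0 : 0 ≤ c := le_trans (abs_nonneg _) hai
  set P : Fin k → Prop := fun t => (i:ℕ) = t ∨ (i:ℕ) + 1 = t ∨ (t:ℕ) + 1 = i with hP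
  have hentry : ∀ t : Fin k, P t → |jacobiMatrix k a b i t| ≤ c := by
    intro t ht
    unfold jacobiMatrix
    simp only [Matrix.of_apply]
    split_ifs with hA hB hC
    · exact hai
    · exact hbi
    · have : (t:ℕ) = (i:ℕ) - 1 := by omega
      rw [this]; exact hbm
    · rcases ht with h | h | h <;> [exact absurd h hA; exact absurd h hB; exact absurd h hC]
  have hsub : ∑ t, |jacobiMatrix k a b i t * g t|
      = ∑ t ∈ Finset.univ.filter P, |jacobiMatrix k a b i t * g t| := by
    refine (Finset.sum_filter_of_ne ?_).symm
    intro t _ hne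
    by_contra hPt
    exact hne (by rw [jacobi_entry_eq_zero a b hPt, zero_mul, abs_zero])
  have hcard : (Finset.univ.filter P).card ≤ 3 := by
    have hmap : ∀ t ∈ Finset.univ.filter P,
        (t : ℕ) ∈ ({(i:ℕ) - 1, (i:ℕ), (i:ℕ) + 1} : Finset ℕ) := by
      intro t ht
      rw [Finset.mem_filter] at ht
      simp only [Finset.mem_insert, Finset.mem_singleton]
      rcases ht.2 with h | h | h <;> omega
    calc (Finset.univ.filter P).card
        ≤ ({(i:ℕ) - 1, (i:ℕ), (i:ℕ) + 1} : Finset ℕ).card :=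
          Finset.card_le_card_of_injOn (fun t => (t : ℕ)) hmap
            (fun x _ y _ h => Fin.ext h)
      _ ≤ 3 := by
          refine le_trans (Finset.card_insert_le _ _) ?_
          refine le_trans (Nat.succ_le_succ (Finset.card_insert_le _ _)) ?_
          simp
  rw [hsub]
  calc ∑ t ∈ Finset.univ.filter P, |jacobiMatrix k a b i t * g t|
      ≤ ∑ _t ∈ Finset.univ.filter P, c * M := by
        refine Finset.sum_le_sum fun t ht => ?_
        rw [abs_mul]
        exact mul_le_mul (hentry t (Finset.mem_filter.mp ht).2)
          (hM t (Finset.mem_filter.mp ht).2) (abs_nonneg _) hc0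
    _ = (Finset.univ.filter P).card * (c * M) := by rw [Finset.sum_const, nsmul_eq_mul]
    _ ≤ 3 * (c * M) := by
        apply mul_le_mul_of_nonneg_right _ (mul_nonneg hc0 hM0)
        exact_mod_cast hcard

lemma jacobi_row_sum_le {k : ℕ} {a b : ℕ → ℝ}
    (ha : ∀ i < k, |a i| ≤ 1) (hb : ∀ i < k, |b i| ≤ 1) (i : Fin k)
    (g : Fin k → ℝ) {M : ℝ} (hM : ∀ t, |g t| ≤ M) :
    ∑ t, |jacobiMatrix k a b i t * g t| ≤ 3 * M := by
  have hM0 : 0 ≤ M := le_trans (abs_nonneg _) (hM i)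
  have := jacobi_row_sum_le_local a b i hM0 (ha i i.isLt) (hb i i.isLt)
    (hb ((i:ℕ) - 1) (by omega)) g (fun t _ => hM t)
  rwa [one_mul] at this

lemma jacobi_pow_abs_le {k : ℕ} {a b : ℕ → ℝ}
    (ha : ∀ i < k, |a i| ≤ 1) (hb : ∀ i < k, |b i| ≤ 1) (n : ℕ) (i j : Fin k) :
    |((jacobiMatrix k a b) ^ n) i j| ≤ 3 ^ n := by
  induction n generalizing i j with
  | zero =>
    simp only [pow_zero, Matrix.one_apply]
    split_ifs <;> simp
  | succ n ih =>
    rw [pow_succ', Matrix.mul_apply]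
    calc |∑ t, jacobiMatrix k a b i t * ((jacobiMatrix k a b) ^ n) t j|
        ≤ ∑ t, |jacobiMatrix k a b i t * ((jacobiMatrix k a b) ^ n) t j| :=
          Finset.abs_sum_le_sum_abs _ _
      _ ≤ 3 * 3 ^ n := jacobi_row_sum_le ha hb i _ (fun t => ih t j)
      _ = 3 ^ (n+1) := (pow_succ' 3 n).symm

lemma jacobi_eigenvalues_abs_le {k : ℕ} {a b : ℕ → ℝ}
    (ha : ∀ i < k, |a i| ≤ 1) (hb : ∀ i < k, |b i| ≤ 1) (i : Fin k) :
    |(jacobiMatrix_isHermitian k a b).eigenvalues i| ≤ 3 := by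
  classical
  set hA := jacobiMatrix_isHermitian k a b
  set v : Fin k → ℝ := ⇑(hA.eigenvectorBasis i) with hv
  have hmv : jacobiMatrix k a b *ᵥ v = hA.eigenvalues i • v := hA.mulVec_eigenvectorBasis i
  have hvne : v ≠ 0 := fun h => hA.eigenvectorBasis.orthonormal.ne_zero i
    (by ext j; simpa [hv] using congrFun h j)
  obtain ⟨s, _, hs⟩ := Finset.exists_max_image Finset.univ (fun t => |v t|) ⟨i, Finset.mem_univ i⟩
  have hvs : 0 < |v s| := by
    rcases Function.ne_iff.mp hvne with ⟨t, ht⟩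
    exact lt_of_lt_of_le (abs_pos.mpr ht) (hs t (Finset.mem_univ t))
  have hrow : |hA.eigenvalues i * v s| ≤ 3 * |v s| := by
    have : (jacobiMatrix k a b *ᵥ v) s = hA.eigenvalues i * v s := by
      rw [hmv]; simp [Pi.smul_apply]
    rw [← this, Matrix.mulVec, dotProduct]
    calc |∑ t, jacobiMatrix k a b s t * v t|
        ≤ ∑ t, |jacobiMatrix k a b s t * v t| := Finset.abs_sum_le_sum_abs _ _
      _ ≤ 3 * |v s| := jacobi_row_sum_le ha hb s v (fun t => hs t (Finset.mem_univ t))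
  rw [abs_mul] at hrow
  exact le_of_mul_le_mul_right hrow hvs

/-- Recursive kernel: `H n d x y = (1/π) ∫₀^π (x + 2y cos t)^n cos(dt) dt`. -/
def jacH : ℕ → ℤ → ℝ → ℝ → ℝ
  | 0, d, _, _ => if d = 0 then 1 else 0
  | (n+1), d, x, y => x * jacH n d x y + y * (jacH n (d-1) x y + jacH n (d+1) x y)

lemma integral_cos_int_mul (d : ℤ) :
    ∫ t in (0:ℝ)..Real.pi, Real.cos ((d:ℝ) * t) = if d = 0 then Real.pi else 0 := by
  rcases eq_or_ne d 0 with h | h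
  · simp [h]
  · have hd : (d:ℝ) ≠ 0 := Int.cast_ne_zero.mpr h
    rw [if_neg h]
    have := intervalIntegral.integral_comp_mul_left (a := (0:ℝ)) (b := Real.pi)
      (fun x => Real.cos x) hd
    rw [this]
    simp [Real.sin_int_mul_pi]

lemma jacH_eq_integral (n : ℕ) (d : ℤ) (x y : ℝ) :
    jacH n d x y
      = (1 / Real.pi) * ∫ t in (0:ℝ)..Real.pi, (x + 2*y*Real.cos t)^n * Real.cos ((d:ℝ) * t) := by
  induction n generalizing d with
  | zero =>
    simp only [jacH, pow_zero, one_mul, integral_cos_int_mul]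
    rcases eq_or_ne d 0 with h | h
    · rw [if_pos h, if_pos h, one_div, inv_mul_cancel₀ Real.pi_ne_zero]
    · rw [if_neg h, if_neg h, mul_zero]
  | succ n ih =>
    have hint : ∀ d' : ℤ, IntervalIntegrable
        (fun t => (x + 2*y*Real.cos t)^n * Real.cos ((d':ℝ) * t)) MeasureTheory.volume 0 Real.pi :=
      fun d' => (Continuous.mul (by continuity) (by continuity)).intervalIntegrable _ _
    have key : ∀ t : ℝ, (x + 2*y*Real.cos t)^(n+1) * Real.cos ((d:ℝ) * t)
        = x * ((x + 2*y*Real.cos t)^n * Real.cos ((d:ℝ) * t))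
          + y * ((x + 2*y*Real.cos t)^n * Real.cos (((d-1 : ℤ):ℝ) * t)
            + (x + 2*y*Real.cos t)^n * Real.cos (((d+1 : ℤ):ℝ) * t)) := by
      intro t
      have h1 : Real.cos (((d-1 : ℤ):ℝ) * t) = Real.cos ((d:ℝ)*t) * Real.cos t
          + Real.sin ((d:ℝ)*t) * Real.sin t := by
        push_cast
        rw [sub_mul, one_mul, Real.cos_sub]
      have h2 : Real.cos (((d+1 : ℤ):ℝ) * t) = Real.cos ((d:ℝ)*t) * Real.cos t
          - Real.sin ((d:ℝ)*t) * Real.sin t := by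
        push_cast
        rw [add_mul, one_mul, Real.cos_add]
      rw [h1, h2, pow_succ]
      ring
    rw [jacH, ih d, ih (d-1), ih (d+1)]
    rw [intervalIntegral.integral_congr (g := fun t =>
      x * ((x + 2*y*Real.cos t)^n * Real.cos ((d:ℝ) * t))
          + y * ((x + 2*y*Real.cos t)^n * Real.cos (((d-1 : ℤ):ℝ) * t)
            + (x + 2*y*Real.cos t)^n * Real.cos (((d+1 : ℤ):ℝ) * t))) (fun t _ => key t)]
    rw [intervalIntegral.integral_add ((hint d).const_mul x)
      (((hint (d-1)).add (hint (d+1))).const_mul y),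
      intervalIntegral.integral_const_mul, intervalIntegral.integral_const_mul,
      intervalIntegral.integral_add (hint (d-1)) (hint (d+1))]
    ring

lemma jacH_abs_le {x y : ℝ} (hx : |x| ≤ 1) (hy : |y| ≤ 1) (n : ℕ) (d : ℤ) :
    |jacH n d x y| ≤ 3 ^ n := by
  induction n generalizing d with
  | zero =>
    simp only [jacH, pow_zero]
    split_ifs <;> simp
  | succ n ih =>
    rw [jacH]
    calc |x * jacH n d x y + y * (jacH n (d-1) x y + jacH n (d+1) x y)|
        ≤ |x * jacH n d x y| + |y * (jacH n (d-1) x y + jacH n (d+1) x y)| := abs_add_le _ _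
      _ ≤ 1 * 3^n + 1 * (3^n + 3^n) := by
          refine add_le_add ?_ ?_
          · rw [abs_mul]
            exact mul_le_mul hx (ih d) (abs_nonneg _) zero_le_one
          · rw [abs_mul]
            refine mul_le_mul hy (le_trans (abs_add_le _ _)
              (add_le_add (ih (d-1)) (ih (d+1)))) (abs_nonneg _) zero_le_one
      _ = 3 ^ (n+1) := by ring

lemma jacH_continuous (n : ℕ) (d : ℤ) :
    Continuous (fun p : ℝ × ℝ => jacH n d p.1 p.2) := by
  induction n generalizing d with
  | zero =>
    simp only [jacH]
    exact continuous_const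
  | succ n ih =>
    simp only [jacH]
    exact (continuous_fst.mul (ih d)).add
      (continuous_snd.mul ((ih (d-1)).add (ih (d+1))))

lemma jacobi_row_expand {k : ℕ} (a b : ℕ → ℝ) (g : Fin k → ℝ) {i : Fin k}
    (h1 : 1 ≤ (i:ℕ)) (h2 : (i:ℕ) + 1 < k) :
    ∑ t, jacobiMatrix k a b i t * g t
      = a i * g i + b ((i:ℕ) - 1) * g ⟨(i:ℕ) - 1, by omega⟩
        + b i * g ⟨(i:ℕ) + 1, h2⟩ := by
  classical
  have him : ((⟨(i:ℕ) - 1, by omega⟩ : Fin k) : ℕ) = (i:ℕ) - 1 := rfl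
  have hip : ((⟨(i:ℕ) + 1, h2⟩ : Fin k) : ℕ) = (i:ℕ) + 1 := rfl
  have hpt : ∀ t : Fin k, jacobiMatrix k a b i t * g t
      = (if t = i then a i * g i else 0)
        + (if t = (⟨(i:ℕ) - 1, by omega⟩ : Fin k) then b ((i:ℕ)-1) * g ⟨(i:ℕ) - 1, by omega⟩ else 0)
        + (if t = (⟨(i:ℕ) + 1, h2⟩ : Fin k) then b i * g ⟨(i:ℕ) + 1, h2⟩ else 0) := by
    intro t
    unfold jacobiMatrix
    by_cases hA : (i:ℕ) = (t:ℕ)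
    · have ht : t = i := Fin.ext hA.symm
      rw [ht]
      rw [if_pos rfl, if_neg (by intro h; apply_fun Fin.val at h; rw [him] at h; omega),
        if_neg (by intro h; apply_fun Fin.val at h; rw [hip] at h; omega)]
      simp
    · by_cases hB : (i:ℕ) + 1 = (t:ℕ)
      · have ht : t = (⟨(i:ℕ) + 1, h2⟩ : Fin k) := Fin.ext (by omega)
        rw [ht]
        rw [if_neg (by intro h; apply_fun Fin.val at h; rw [hip] at h; omega),
          if_neg (by intro h; apply_fun Fin.val at h; rw [him, hip] at h; omega),
          if_pos rfl]
        simp only [Matrix.of_apply, hip, hA, if_false, hB, if_true]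
        rw [him] at *
        simp
      · by_cases hC : (t:ℕ) + 1 = (i:ℕ)
        · have ht : t = (⟨(i:ℕ) - 1, by omega⟩ : Fin k) := Fin.ext (by omega)
          rw [ht]
          rw [if_neg (by intro h; apply_fun Fin.val at h; rw [him] at h; omega),
            if_pos rfl,
            if_neg (by intro h; apply_fun Fin.val at h; rw [him, hip] at h; omega)]
          simp only [Matrix.of_apply, him, if_false]
          rw [if_neg (by omega), if_neg (by omega), if_pos (by omega)]
          simp
        · rw [if_neg (by intro h; apply_fun Fin.val at h; omega),
            if_neg (by intro h; apply_fun Fin.val at h; rw [him] at h; omega),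
            if_neg (by intro h; apply_fun Fin.val at h; rw [hip] at h; omega)]
          simp only [Matrix.of_apply, hA, hB, hC, if_false]
          simp
  rw [Finset.sum_congr rfl (fun t _ => hpt t)]
  rw [Finset.sum_add_distrib, Finset.sum_add_distrib]
  simp [Finset.sum_ite_eq']

lemma const_jacobi_pow_apply {k : ℕ} (x y : ℝ) (n : ℕ) (i l : Fin k)
    (h1 : n ≤ (i:ℕ)) (h2 : (i:ℕ) + n < k) :
    ((jacobiMatrix k (fun _ => x) (fun _ => y)) ^ n) i l
      = jacH n ((l:ℕ) - (i:ℕ) : ℤ) x y := by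
  induction n generalizing i with
  | zero =>
    simp only [pow_zero, Matrix.one_apply, jacH]
    by_cases h : i = l
    · subst h; simp
    · rw [if_neg h, if_neg (by
        intro hc
        exact h (Fin.ext (by omega)))]
  | succ n ih =>
    have hi1 : 1 ≤ (i:ℕ) := by omega
    have hi2 : (i:ℕ) + 1 < k := by omega
    rw [pow_succ', Matrix.mul_apply,
      jacobi_row_expand (fun _ => x) (fun _ => y)
        (fun t => ((jacobiMatrix k (fun _ => x) (fun _ => y)) ^ n) t l) hi1 hi2]
    rw [ih i (by omega) (by omega),
      ih ⟨(i:ℕ) - 1, by omega⟩ (by simp; omega) (by simp; omega),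
      ih ⟨(i:ℕ) + 1, hi2⟩ (by simp; omega) (by simp; omega)]
    show x * _ + y * _ + y * _ = jacH (n+1) _ x y
    rw [jacH]
    have e1 : ((l:ℕ) - ((⟨(i:ℕ) - 1, by omega⟩ : Fin k):ℕ) : ℤ) = ((l:ℕ) - (i:ℕ) : ℤ) + 1 := by
      simp; omega
    have e2 : ((l:ℕ) - ((⟨(i:ℕ) + 1, hi2⟩ : Fin k):ℕ) : ℤ) = ((l:ℕ) - (i:ℕ) : ℤ) - 1 := by
      simp; omega
    rw [e1, e2]
    ring

lemma jacobi_sub_entry {k : ℕ} (a b a' b' : ℕ → ℝ) (i t : Fin k) :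
    jacobiMatrix k a b i t - jacobiMatrix k a' b' i t
      = jacobiMatrix k (fun s => a s - a' s) (fun s => b s - b' s) i t := by
  unfold jacobiMatrix
  simp only [Matrix.of_apply]
  split_ifs <;> ring

lemma jacobi_pow_sub_const {k : ℕ} {a b : ℕ → ℝ} {x y ε : ℝ}
    (ha : ∀ i < k, |a i| ≤ 1) (hb : ∀ i < k, |b i| ≤ 1)
    (hx : |x| ≤ 1) (hy : |y| ≤ 1) (hε : 0 ≤ ε) (j : Fin k) (m : ℕ)
    (hloc : ∀ s : ℕ, s < k → ((j:ℕ):ℤ) - (m+1) ≤ (s:ℤ) → (s:ℤ) ≤ ((j:ℕ):ℤ) + (m+1) →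
      |a s - x| ≤ ε ∧ |b s - y| ≤ ε) :
    ∀ n, n ≤ m → ∀ i l : Fin k, |((i:ℕ):ℤ) - ((j:ℕ):ℤ)| ≤ (m:ℤ) - n →
      |((jacobiMatrix k a b) ^ n) i l - ((jacobiMatrix k (fun _ => x) (fun _ => y)) ^ n) i l|
        ≤ n * 3 ^ n * ε := by
  intro n
  induction n with
  | zero =>
    intro _ i l _
    simp
  | succ n ih =>
    intro hnm i l hij
    rw [abs_le] at hij
    obtain ⟨hij1, hij2⟩ := hij
    set A := jacobiMatrix k a b with hA
    set B := jacobiMatrix k (fun _ => x) (fun _ => y) with hB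
    have hxy : ∀ s < k, |(fun _ : ℕ => x) s| ≤ 1 ∧ |(fun _ : ℕ => y) s| ≤ 1 :=
      fun s _ => ⟨hx, hy⟩
    have hsplit : (A ^ (n+1)) i l - (B ^ (n+1)) i l
        = ∑ t, ((A i t - B i t) * (A ^ n) t l + B i t * ((A ^ n) t l - (B ^ n) t l)) := by
      rw [pow_succ', pow_succ', Matrix.mul_apply, Matrix.mul_apply, ← Finset.sum_sub_distrib]
      congr 1
      ext t
      ring
    rw [hsplit]
    have hrow_i : ((j:ℕ):ℤ) - (m+1) ≤ ((i:ℕ):ℤ) ∧ ((i:ℕ):ℤ) ≤ ((j:ℕ):ℤ) + (m+1) := by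
      constructor <;> omega
    have hbound1 : ∑ t, |(A i t - B i t) * (A ^ n) t l| ≤ 3 * (ε * 3 ^ n) := by
      have hD : ∀ t, A i t - B i t
          = jacobiMatrix k (fun s => a s - x) (fun s => b s - y) i t :=
        fun t => jacobi_sub_entry a b _ _ i t
      rw [Finset.sum_congr rfl (fun t _ => by rw [hD t])]
      refine jacobi_row_sum_le_local _ _ i (by positivity) ?_ ?_ ?_ _
        (fun t _ => jacobi_pow_abs_le ha hb n t l)
      · exact (hloc (i:ℕ) i.isLt hrow_i.1 hrow_i.2).1
      · exact (hloc (i:ℕ) i.isLt hrow_i.1 hrow_i.2).2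
      · refine (hloc ((i:ℕ) - 1) (by omega) (by omega) (by omega)).2
    have hbound2 : ∑ t, |B i t * ((A ^ n) t l - (B ^ n) t l)| ≤ 3 * (1 * (n * 3 ^ n * ε)) := by
      refine jacobi_row_sum_le_local _ _ i (by positivity) (by simpa using hx)
        (by simpa using hy) (by simpa using hy) _ ?_
      intro t ht
      refine ih (by omega) t l ?_
      rw [abs_le]
      rcases ht with h | h | h <;> constructor <;> omega
    calc |∑ t, ((A i t - B i t) * (A ^ n) t l + B i t * ((A ^ n) t l - (B ^ n) t l))|
        ≤ ∑ t, |(A i t - B i t) * (A ^ n) t l + B i t * ((A ^ n) t l - (B ^ n) t l)| :=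
          Finset.abs_sum_le_sum_abs _ _
      _ ≤ ∑ t, (|(A i t - B i t) * (A ^ n) t l| + |B i t * ((A ^ n) t l - (B ^ n) t l)|) :=
          Finset.sum_le_sum (fun t _ => abs_add_le _ _)
      _ = ∑ t, |(A i t - B i t) * (A ^ n) t l|
            + ∑ t, |B i t * ((A ^ n) t l - (B ^ n) t l)| := Finset.sum_add_distrib
      _ ≤ 3 * (ε * 3 ^ n) + 3 * (1 * (n * 3 ^ n * ε)) := add_le_add hbound1 hbound2
      _ = (↑(n+1)) * 3 ^ (n+1) * ε := by push_cast; ring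

lemma abs_sub_le_sum_Ico (f : ℕ → ℝ) {p q : ℕ} (h : p ≤ q) :
    |f q - f p| ≤ ∑ i ∈ Finset.Ico p q, |f (i+1) - f i| := by
  induction q, h using Nat.le_induction with
  | base => simp
  | succ q hpq ih =>
    rw [Finset.sum_Ico_succ_top (by omega)]
    calc |f (q+1) - f p| ≤ |f (q+1) - f q| + |f q - f p| := by
          have := abs_add_le (f (q+1) - f q) (f q - f p)
          rw [sub_add_sub_cancel] at this
          exact this
      _ ≤ ∑ i ∈ Finset.Ico p q, |f (i+1) - f i| + |f (q+1) - f q| := by linarith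
      _ = _ := by ring

lemma abs_sub_le_window_sum (f g : ℕ → ℝ) (hg : ∀ i, |f (i+1) - f i| ≤ g i)
    (hg0 : ∀ i, 0 ≤ g i) {k m j s : ℕ} (hj : j < k) (hs : s < k)
    (h1 : (j:ℤ) ≤ (s:ℤ) + (m+1)) (h2 : (s:ℤ) ≤ (j:ℤ) + (m+1)) :
    |f s - f j| ≤ ∑ i ∈ (Finset.range (k-1)).filter (fun i => j ≤ i + (m+1) ∧ i ≤ j + m), g i := by
  have key : ∀ p q : ℕ, p ≤ q → q < k → (j:ℤ) - (m+1) ≤ p → (q:ℤ) ≤ (j:ℤ) + (m+1) →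
      p = j ∨ q = j →
      |f q - f p| ≤ ∑ i ∈ (Finset.range (k-1)).filter (fun i => j ≤ i + (m+1) ∧ i ≤ j + m), g i := by
    intro p q hpq hq hp1 hq2 hpq'
    calc |f q - f p| ≤ ∑ i ∈ Finset.Ico p q, |f (i+1) - f i| := abs_sub_le_sum_Ico f hpq
      _ ≤ ∑ i ∈ Finset.Ico p q, g i := Finset.sum_le_sum (fun i _ => hg i)
      _ ≤ _ := by
          refine Finset.sum_le_sum_of_subset_of_nonneg ?_ (fun i _ _ => hg0 i)
          intro i hi
          rw [Finset.mem_Ico] at hi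
          rw [Finset.mem_filter, Finset.mem_range]
          rcases hpq' with h | h <;> [skip; skip] <;>
            exact ⟨by omega, by omega, by omega⟩
  rcases le_total s j with h | h
  · have := key s j h hj (by omega) (by omega) (Or.inr rfl)
    rwa [show |f j - f s| = |f s - f j| from abs_sub_comm _ _] at this
  · exact key j s h hs (by omega) (by omega) (Or.inl rfl)

lemma trace_pow_sub_sum_le {k m : ℕ} {a b : ℕ → ℝ}
    (ha : ∀ i < k, |a i| ≤ 1) (hb : ∀ i < k, |b i| ≤ 1) :
    |Matrix.trace ((jacobiMatrix k a b) ^ m) - ∑ j ∈ Finset.range k, jacH m 0 (a j) (b j)|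
      ≤ 2*m * (2*3^m) + (m*3^m) * ((2*m+2) *
          ∑ i ∈ Finset.range (k-1), (|a (i+1) - a i| + |b (i+1) - b i|)) := by
  classical
  set w : ℕ → ℝ := fun i => |a (i+1) - a i| + |b (i+1) - b i| with hw
  have hw0 : ∀ i, 0 ≤ w i := fun i => add_nonneg (abs_nonneg _) (abs_nonneg _)
  set V : ℕ → ℝ := fun j =>
    ∑ i ∈ (Finset.range (k-1)).filter (fun i => j ≤ i + (m+1) ∧ i ≤ j + m), w i with hV
  have hV0 : ∀ j, 0 ≤ V j := fun j => Finset.sum_nonneg (fun i _ => hw0 i)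
  set A := jacobiMatrix k a b with hA
  -- termwise bound
  have hterm : ∀ j : Fin k, |(A ^ m) j j - jacH m 0 (a j) (b j)|
      ≤ if m ≤ (j:ℕ) ∧ (j:ℕ) + m < k then m * 3^m * V (j:ℕ) else 2 * 3^m := by
    intro j
    split_ifs with hjint
    · have hconst := const_jacobi_pow_apply (a j) (b j) m j j hjint.1 hjint.2
      have h0 : (((j:ℕ):ℤ) - ((j:ℕ):ℤ)) = (0:ℤ) := sub_self _
      rw [h0] at hconst
      rw [← hconst]
      have hloc : ∀ s : ℕ, s < k → ((j:ℕ):ℤ) - (m+1) ≤ (s:ℤ) → (s:ℤ) ≤ ((j:ℕ):ℤ) + (m+1) →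
          |a s - a j| ≤ V (j:ℕ) ∧ |b s - b j| ≤ V (j:ℕ) := by
        intro s hs hs1 hs2
        constructor
        · exact abs_sub_le_window_sum a w (fun i => le_add_of_le_of_nonneg le_rfl (abs_nonneg _))
            hw0 j.isLt hs (by omega) (by omega)
        · exact abs_sub_le_window_sum b w (fun i => le_add_of_nonneg_of_le (abs_nonneg _) le_rfl)
            hw0 j.isLt hs (by omega) (by omega)
      exact jacobi_pow_sub_const ha hb (ha j j.isLt) (hb j j.isLt) (hV0 j) j m hloc m le_rfl j j
        (by simp)
    · calc |(A ^ m) j j - jacH m 0 (a j) (b j)|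
          ≤ |(A ^ m) j j| + |jacH m 0 (a j) (b j)| := abs_sub _ _
        _ ≤ 3^m + 3^m := add_le_add (jacobi_pow_abs_le ha hb m j j)
            (jacH_abs_le (ha j j.isLt) (hb j j.isLt) m 0)
        _ = 2 * 3^m := by ring
  -- boundary count
  have hcard : ((Finset.univ : Finset (Fin k)).filter
      (fun j : Fin k => ¬(m ≤ (j:ℕ) ∧ (j:ℕ) + m < k))).card ≤ 2 * m := by
    have hmap : ∀ j ∈ (Finset.univ : Finset (Fin k)).filter
        (fun j : Fin k => ¬(m ≤ (j:ℕ) ∧ (j:ℕ) + m < k)),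
        (j:ℕ) ∈ Finset.range m ∪ Finset.Ico (k - m) k := by
      intro j hj
      rw [Finset.mem_filter] at hj
      rw [Finset.mem_union, Finset.mem_range, Finset.mem_Ico]
      have := j.isLt
      omega
    refine le_trans (Finset.card_le_card_of_injOn (fun j => (j:ℕ)) hmap
      (fun x _ y _ h => Fin.ext h)) ?_
    refine le_trans (Finset.card_union_le _ _) ?_
    rw [Finset.card_range, Nat.card_Ico]
    omega
  -- sum of windows
  have hVsum : ∑ j ∈ Finset.range k, V j ≤ (2*m+2) * ∑ i ∈ Finset.range (k-1), w i := by
    have : ∀ j, V j = ∑ i ∈ Finset.range (k-1),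
        (if j ≤ i + (m+1) ∧ i ≤ j + m then w i else 0) := by
      intro j
      rw [hV]
      exact (Finset.sum_filter _ _)
    rw [Finset.sum_congr rfl (fun j _ => this j), Finset.sum_comm]
    have inner : ∀ i, ∑ j ∈ Finset.range k, (if j ≤ i + (m+1) ∧ i ≤ j + m then w i else 0)
        ≤ (2*m+2) * w i := by
      intro i
      rw [← Finset.sum_filter]
      rw [Finset.sum_const, nsmul_eq_mul]
      have hsub : (Finset.range k).filter (fun j => j ≤ i + (m+1) ∧ i ≤ j + m)
          ⊆ Finset.Icc (i - m) (i + m + 1) := by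
        intro j hj
        rw [Finset.mem_filter] at hj
        rw [Finset.mem_Icc]
        omega
      have hc : ((Finset.range k).filter (fun j => j ≤ i + (m+1) ∧ i ≤ j + m)).card
          ≤ 2*m+2 := by
        calc _ ≤ (Finset.Icc (i - m) (i + m + 1)).card := Finset.card_le_card hsub
          _ ≤ 2*m+2 := by rw [Nat.card_Icc]; omega
      refine mul_le_mul_of_nonneg_right ?_ (hw0 i)
      exact_mod_cast hc
    calc _ ≤ ∑ i ∈ Finset.range (k-1), (2*m+2) * w i := Finset.sum_le_sum (fun i _ => inner i)
      _ = (2*m+2) * ∑ i ∈ Finset.range (k-1), w i := by rw [Finset.mul_sum]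
  -- put together
  have htr : Matrix.trace (A ^ m) = ∑ j : Fin k, (A ^ m) j j := rfl
  have hsum2 : ∑ j ∈ Finset.range k, jacH m 0 (a j) (b j)
      = ∑ j : Fin k, jacH m 0 (a (j:ℕ)) (b (j:ℕ)) :=
    (Fin.sum_univ_eq_sum_range (fun j => jacH m 0 (a j) (b j)) k).symm
  rw [htr, hsum2, ← Finset.sum_sub_distrib]
  calc |∑ j : Fin k, ((A ^ m) j j - jacH m 0 (a (j:ℕ)) (b (j:ℕ)))|
      ≤ ∑ j : Fin k, |(A ^ m) j j - jacH m 0 (a (j:ℕ)) (b (j:ℕ))| :=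
        Finset.abs_sum_le_sum_abs _ _
    _ ≤ ∑ j : Fin k, ((if ¬(m ≤ (j:ℕ) ∧ (j:ℕ) + m < k) then 2 * 3^m else 0)
          + m * 3^m * V (j:ℕ)) := by
        refine Finset.sum_le_sum (fun j _ => ?_)
        have := hterm j
        split_ifs at this ⊢ with h
        · exact le_trans this (le_add_of_nonneg_left (le_refl 0 |>.trans (by norm_num)))
        · refine le_trans this ?_
          have : (0:ℝ) ≤ m * 3^m * V (j:ℕ) :=
            mul_nonneg (by positivity) (hV0 _)
          linarith
    _ = ∑ j : Fin k, (if ¬(m ≤ (j:ℕ) ∧ (j:ℕ) + m < k) then 2 * 3^m else 0)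
          + ∑ j : Fin k, m * 3^m * V (j:ℕ) := Finset.sum_add_distrib
    _ ≤ 2*m * (2*3^m) + (m*3^m) * ((2*m+2) * ∑ i ∈ Finset.range (k-1), w i) := by
        refine add_le_add ?_ ?_
        · rw [← Finset.sum_filter, Finset.sum_const, nsmul_eq_mul]
          refine mul_le_mul_of_nonneg_right ?_ (by positivity)
          exact_mod_cast hcard
        · rw [← Finset.mul_sum]
          refine mul_le_mul_of_nonneg_left ?_ (by positivity)
          calc ∑ j : Fin k, V (j:ℕ) = ∑ j ∈ Finset.range k, V j :=
              Fin.sum_univ_eq_sum_range (fun j => V j) k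
            _ ≤ _ := hVsum

lemma memS_abs_le_one {a : ℕ → ℕ → ℝ} (ha : MemS a) (k i : ℕ) (hik : i < k) :
    |a k i| ≤ 1 := by
  obtain ⟨h0, h1⟩ := (ha.2 k i hik)
  rw [abs_le]
  constructor <;> linarith

lemma monomial_tendsto (a b : ℕ → ℕ → ℝ) (ha : MemS a) (hb : MemS b)
    (μ : Measure (ℝ × ℝ)) [IsProbabilityMeasure μ] (hμ : MuDistributedI a b μ) (m : ℕ) :
    Filter.Tendsto
      (fun k : ℕ => (1 / (k : ℝ)) * Matrix.trace ((jacobiMatrix k (a k) (b k)) ^ m))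
      Filter.atTop (nhds (∫ p, jacH m 0 p.1 p.2 ∂μ)) := by
  have hsums := hμ (fun p => jacH m 0 p.1 p.2) ((jacH_continuous m 0).continuousOn)
  have hdiff : Filter.Tendsto
      (fun k : ℕ => (1 / (k : ℝ)) * Matrix.trace ((jacobiMatrix k (a k) (b k)) ^ m)
        - (1 / (k : ℝ)) * ∑ j ∈ Finset.range k, jacH m 0 (a k j) (b k j))
      Filter.atTop (nhds 0) := by
    set TV : ℕ → ℝ := fun k =>
      ∑ i ∈ Finset.range (k-1), (|a k (i+1) - a k i| + |b k (i+1) - b k i|) with hTV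
    have hTVk : Filter.Tendsto (fun k : ℕ => TV k / (k:ℝ)) Filter.atTop (nhds 0) := by
      have := (ha.1.add hb.1).tendsto_div_nhds_zero
      refine this.congr (fun k => ?_)
      simp only [Pi.add_apply, hTV, Finset.sum_add_distrib]
    have hbound : ∀ k : ℕ,
        ‖(1 / (k : ℝ)) * Matrix.trace ((jacobiMatrix k (a k) (b k)) ^ m)
          - (1 / (k : ℝ)) * ∑ j ∈ Finset.range k, jacH m 0 (a k j) (b k j)‖
        ≤ (2*m * (2*3^m)) / k + (m*3^m) * (2*m+2) * (TV k / k) := by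
      intro k
      have hest := trace_pow_sub_sum_le (k := k) (m := m)
        (fun i hik => memS_abs_le_one ha k i hik) (fun i hik => memS_abs_le_one hb k i hik)
      rw [Real.norm_eq_abs, ← mul_sub, abs_mul]
      have h1k : |1/(k:ℝ)| = 1/(k:ℝ) := abs_of_nonneg (by positivity)
      rw [h1k]
      calc (1/(k:ℝ)) * |Matrix.trace ((jacobiMatrix k (a k) (b k)) ^ m)
              - ∑ j ∈ Finset.range k, jacH m 0 (a k j) (b k j)|
          ≤ (1/(k:ℝ)) * (2*m * (2*3^m) + (m*3^m) * ((2*m+2) * TV k)) :=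
            mul_le_mul_of_nonneg_left hest (by positivity)
        _ = (2*m * (2*3^m)) / k + (m*3^m) * (2*m+2) * (TV k / k) := by
            field_simp
    refine squeeze_zero_norm hbound ?_
    have h1 : Filter.Tendsto (fun k : ℕ => (2*(m:ℝ) * (2*3^m)) / k) Filter.atTop (nhds 0) :=
      tendsto_const_div_atTop_nhds_zero_nat _
    have h2 : Filter.Tendsto (fun k : ℕ => ((m:ℝ)*3^m) * (2*m+2) * (TV k / k))
        Filter.atTop (nhds 0) := by
      have := hTVk.const_mul (((m:ℝ)*3^m) * (2*m+2))
      simpa using this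
    simpa using h1.add h2
  have := hdiff.add hsums
  rw [zero_add] at this
  refine this.congr (fun k => ?_)
  ring

lemma ae_mem_square {μ : Measure (ℝ × ℝ)}
    (hsupp : μ ((Set.Icc (0 : ℝ) 1 ×ˢ Set.Icc (0 : ℝ) 1)ᶜ) = 0) :
    ∀ᵐ q ∂μ, q ∈ (Set.Icc (0 : ℝ) 1 ×ˢ Set.Icc (0 : ℝ) 1) := by
  rw [MeasureTheory.ae_iff]
  convert hsupp using 2
  rfl

lemma jacH_integrable {μ : Measure (ℝ × ℝ)} [IsProbabilityMeasure μ]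
    (hsupp : μ ((Set.Icc (0 : ℝ) 1 ×ˢ Set.Icc (0 : ℝ) 1)ᶜ) = 0) (n : ℕ) :
    MeasureTheory.Integrable (fun q : ℝ × ℝ => jacH n 0 q.1 q.2) μ := by
  refine MeasureTheory.Integrable.mono' (MeasureTheory.integrable_const ((3:ℝ)^n))
    ((jacH_continuous n 0).aestronglyMeasurable) ?_
  filter_upwards [ae_mem_square hsupp] with q hq
  rw [Real.norm_eq_abs]
  obtain ⟨hq1, hq2⟩ := hq
  exact jacH_abs_le (abs_le.mpr ⟨by linarith [hq1.1], hq1.2⟩)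
    (abs_le.mpr ⟨by linarith [hq2.1], hq2.2⟩) n 0

lemma poly_eval_sum_jacH (p : Polynomial ℝ) (x y : ℝ) :
    ∑ n ∈ Finset.range (p.natDegree + 1), p.coeff n * jacH n 0 x y
      = (1 / Real.pi) * ∫ t in (0:ℝ)..Real.pi, p.eval (x + 2*y*Real.cos t) := by
  have h1 : ∀ n, jacH n 0 x y
      = (1 / Real.pi) * ∫ t in (0:ℝ)..Real.pi, (x + 2*y*Real.cos t)^n := by
    intro n
    have := jacH_eq_integral n 0 x y
    simpa using this
  have h2 : ∀ t : ℝ, p.eval (x + 2*y*Real.cos t)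
      = ∑ n ∈ Finset.range (p.natDegree + 1), p.coeff n * (x + 2*y*Real.cos t)^n := by
    intro t
    exact p.eval_eq_sum_range _
  rw [intervalIntegral.integral_congr (g := fun t =>
      ∑ n ∈ Finset.range (p.natDegree + 1), p.coeff n * (x + 2*y*Real.cos t)^n)
    (fun t _ => h2 t)]
  rw [intervalIntegral.integral_finset_sum (f := fun n t => p.coeff n * (x + 2*y*Real.cos t)^n) (fun n _ =>
    (continuous_const.mul
      ((continuous_const.add (continuous_const.mul Real.continuous_cos)).pow n)).intervalIntegrable _ _)]
  rw [Finset.mul_sum]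
  refine Finset.sum_congr rfl (fun n _ => ?_)
  rw [h1 n, intervalIntegral.integral_const_mul]
  ring

lemma poly_tendsto (a b : ℕ → ℕ → ℝ) (ha : MemS a) (hb : MemS b)
    (μ : Measure (ℝ × ℝ)) [IsProbabilityMeasure μ]
    (hsupp : μ ((Set.Icc (0 : ℝ) 1 ×ˢ Set.Icc (0 : ℝ) 1)ᶜ) = 0)
    (hμ : MuDistributedI a b μ) (p : Polynomial ℝ) :
    Filter.Tendsto (fun k : ℕ => (1 / (k : ℝ)) * jacobiTrace k (a k) (b k) (fun x => p.eval x))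
      Filter.atTop
      (nhds ((1 / Real.pi) *
        ∫ q, (∫ t in (0 : ℝ)..Real.pi, p.eval (q.1 + 2 * q.2 * Real.cos t)) ∂μ)) := by
  -- rewrite jacobiTrace as linear combination of traces of powers
  have htr : ∀ k : ℕ, jacobiTrace k (a k) (b k) (fun x => p.eval x)
      = ∑ n ∈ Finset.range (p.natDegree + 1),
          p.coeff n * Matrix.trace ((jacobiMatrix k (a k) (b k)) ^ n) := by
    intro k
    unfold jacobiTrace
    have : ∀ i : Fin k, p.eval ((jacobiMatrix_isHermitian k (a k) (b k)).eigenvalues i)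
        = ∑ n ∈ Finset.range (p.natDegree + 1),
            p.coeff n * ((jacobiMatrix_isHermitian k (a k) (b k)).eigenvalues i) ^ n :=
      fun i => p.eval_eq_sum_range _
    rw [Finset.sum_congr rfl (fun i _ => this i), Finset.sum_comm]
    refine Finset.sum_congr rfl (fun n _ => ?_)
    rw [← Finset.mul_sum, sum_eigenvalues_pow]
  have hlim : Filter.Tendsto
      (fun k : ℕ => ∑ n ∈ Finset.range (p.natDegree + 1),
        p.coeff n * ((1 / (k : ℝ)) * Matrix.trace ((jacobiMatrix k (a k) (b k)) ^ n)))
      Filter.atTop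
      (nhds (∑ n ∈ Finset.range (p.natDegree + 1),
        p.coeff n * ∫ q, jacH n 0 q.1 q.2 ∂μ)) := by
    refine tendsto_finset_sum _ (fun n _ => ?_)
    exact (monomial_tendsto a b ha hb μ hμ n).const_mul _
  have hL : (∑ n ∈ Finset.range (p.natDegree + 1), p.coeff n * ∫ q, jacH n 0 q.1 q.2 ∂μ)
      = (1 / Real.pi) *
        ∫ q, (∫ t in (0 : ℝ)..Real.pi, p.eval (q.1 + 2 * q.2 * Real.cos t)) ∂μ := by
    have h1 : ∀ n, p.coeff n * ∫ q, jacH n 0 q.1 q.2 ∂μ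
        = ∫ q, p.coeff n * jacH n 0 q.1 q.2 ∂μ :=
      fun n => (MeasureTheory.integral_const_mul _ _).symm
    rw [Finset.sum_congr rfl (fun n _ => h1 n),
      ← MeasureTheory.integral_finset_sum _ (fun n _ => ((jacH_integrable hsupp n).const_mul _))]
    rw [show (fun q : ℝ × ℝ => ∑ n ∈ Finset.range (p.natDegree + 1),
        p.coeff n * jacH n 0 q.1 q.2)
      = fun q : ℝ × ℝ => (1 / Real.pi) *
          ∫ t in (0:ℝ)..Real.pi, p.eval (q.1 + 2*q.2*Real.cos t) from
      funext (fun q => poly_eval_sum_jacH p q.1 q.2)]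
    rw [MeasureTheory.integral_const_mul]
  rw [← hL]
  refine hlim.congr (fun k => ?_)
  rw [htr k, Finset.mul_sum]
  refine Finset.sum_congr rfl (fun n _ => ?_)
  ring

/-- Theorem 1: if `(a^k)ₖ, (b^k)ₖ ∈ 𝒮` and `(a^k,b^k)ₖ` is `μ`-distributed for a
probability measure `μ` on `I² = [0,1]²`, then for every `φ ∈ C[-3,3]`,
`lim (1/k)·Trace[φ(J(a^k,b^k))] = (1/π) ∫_{I²} ∫_0^π φ(x+2y cos t) dt dμ(x,y)`. -/
theorem trace_formula_memS (a b : ℕ → ℕ → ℝ) (ha : MemS a) (hb : MemS b)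
    (μ : Measure (ℝ × ℝ)) [IsProbabilityMeasure μ]
    (hsupp : μ ((Set.Icc (0 : ℝ) 1 ×ˢ Set.Icc (0 : ℝ) 1)ᶜ) = 0)
    (hμ : MuDistributedI a b μ)
    (φ : ℝ → ℝ) (hφ : ContinuousOn φ (Set.Icc (-3 : ℝ) 3)) :
    Filter.Tendsto (fun k : ℕ => (1 / (k : ℝ)) * jacobiTrace k (a k) (b k) φ)
      Filter.atTop
      (nhds ((1 / Real.pi) *
        ∫ p, (∫ t in (0 : ℝ)..Real.pi, φ (p.1 + 2 * p.2 * Real.cos t)) ∂μ)) := by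
  classical
  have h33 : (-3:ℝ) ≤ 3 := by norm_num
  set φ' : ℝ → ℝ := Set.IccExtend h33 ((Set.Icc (-3:ℝ) 3).restrict φ) with hφ'def
  have hres : Continuous ((Set.Icc (-3:ℝ) 3).restrict φ) :=
    continuousOn_iff_continuous_restrict.mp hφ
  have hφ'c : Continuous φ' := hres.Icc_extend'
  have hφ'eq : ∀ x ∈ Set.Icc (-3:ℝ) 3, φ' x = φ x := by
    intro x hx
    rw [hφ'def, Set.IccExtend_of_mem h33 _ hx]
    rfl
  obtain ⟨C, hC⟩ := isCompact_Icc.exists_bound_of_continuousOn hφ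
  have hφ'bd : ∀ x, |φ' x| ≤ C := by
    intro x
    have hmem := (Set.projIcc (-3:ℝ) 3 h33 x).2
    calc |φ' x| = ‖φ ((Set.projIcc (-3:ℝ) 3 h33 x) : ℝ)‖ := by
          rw [hφ'def]; rfl
      _ ≤ C := hC _ hmem
  have heig : ∀ k (i : Fin k),
      (jacobiMatrix_isHermitian k (a k) (b k)).eigenvalues i ∈ Set.Icc (-3:ℝ) 3 := by
    intro k i
    have := jacobi_eigenvalues_abs_le (fun s hs => memS_abs_le_one ha k s hs)
      (fun s hs => memS_abs_le_one hb k s hs) i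
    rw [abs_le] at this
    exact ⟨this.1, this.2⟩
  have hLHS : ∀ k, jacobiTrace k (a k) (b k) φ = jacobiTrace k (a k) (b k) φ' := by
    intro k
    unfold jacobiTrace
    exact Finset.sum_congr rfl (fun i _ => (hφ'eq _ (heig k i)).symm)
  have hargmem : ∀ q : ℝ×ℝ, q ∈ Set.Icc (0:ℝ) 1 ×ˢ Set.Icc (0:ℝ) 1 →
      ∀ t : ℝ, q.1 + 2*q.2*Real.cos t ∈ Set.Icc (-3:ℝ) 3 := by
    intro q hq t
    obtain ⟨⟨h1,h2⟩,⟨h3,h4⟩⟩ := hq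
    have hc1 := Real.neg_one_le_cos t
    have hc2 := Real.cos_le_one t
    constructor <;> nlinarith
  have hRHS : (∫ q : ℝ × ℝ, (∫ t in (0:ℝ)..Real.pi, φ (q.1 + 2*q.2*Real.cos t)) ∂μ)
      = ∫ q : ℝ × ℝ, (∫ t in (0:ℝ)..Real.pi, φ' (q.1 + 2*q.2*Real.cos t)) ∂μ := by
    refine MeasureTheory.integral_congr_ae ?_
    filter_upwards [ae_mem_square hsupp] with q hq
    exact intervalIntegral.integral_congr (fun t _ => (hφ'eq _ (hargmem q hq t)).symm)
  simp only [hLHS]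
  rw [hRHS]
  -- integrability of the parametric integral of φ'
  have hFcont : Continuous (fun q : ℝ×ℝ => ∫ t in (0:ℝ)..Real.pi, φ' (q.1 + 2*q.2*Real.cos t)) := by
    refine intervalIntegral.continuous_of_dominated_interval (bound := fun _ => C) ?_ ?_ ?_ ?_
    · intro q
      exact ((hφ'c.comp (continuous_const.add (continuous_const.mul Real.continuous_cos))).aestronglyMeasurable)
    · intro q
      filter_upwards with t _
      exact (Real.norm_eq_abs _) ▸ hφ'bd _
    · exact intervalIntegrable_const
    · filter_upwards with t _
      exact hφ'c.comp (continuous_fst.add ((continuous_const.mul continuous_snd).mul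
        continuous_const))
  have hFint : MeasureTheory.Integrable
      (fun q : ℝ×ℝ => ∫ t in (0:ℝ)..Real.pi, φ' (q.1 + 2*q.2*Real.cos t)) μ := by
    refine MeasureTheory.Integrable.mono'
      (MeasureTheory.integrable_const (C * |Real.pi - 0|))
      hFcont.aestronglyMeasurable ?_
    filter_upwards with q
    exact intervalIntegral.norm_integral_le_of_norm_le_const
      (fun t _ => (Real.norm_eq_abs _) ▸ hφ'bd _)
  -- main approximation argument
  rw [Metric.tendsto_atTop]
  intro ε hε
  obtain ⟨P, hP⟩ := exists_polynomial_near_of_continuousOn (-3) 3 φ' hφ'c.continuousOn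
    (ε/4) (by linarith)
  have hPtend := poly_tendsto a b ha hb μ hsupp hμ P
  rw [Metric.tendsto_atTop] at hPtend
  obtain ⟨N, hN⟩ := hPtend (ε/4) (by linarith)
  -- integrability of the parametric integral of P
  have hFP : (fun q : ℝ×ℝ => ∫ t in (0:ℝ)..Real.pi, P.eval (q.1 + 2*q.2*Real.cos t))
      = fun q : ℝ×ℝ => Real.pi *
          ∑ n ∈ Finset.range (P.natDegree + 1), P.coeff n * jacH n 0 q.1 q.2 := by
    funext q
    have h := poly_eval_sum_jacH P q.1 q.2
    rw [h]
    field_simp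
  have hFPint : MeasureTheory.Integrable
      (fun q : ℝ×ℝ => ∫ t in (0:ℝ)..Real.pi, P.eval (q.1 + 2*q.2*Real.cos t)) μ := by
    rw [hFP]
    exact (MeasureTheory.integrable_finset_sum _
      (fun n _ => (jacH_integrable hsupp n).const_mul _)).const_mul _
  refine ⟨max N 1, fun k hk => ?_⟩
  have hk1 : 1 ≤ k := le_trans (le_max_right N 1) hk
  have hkN : N ≤ k := le_trans (le_max_left N 1) hk
  have hk0 : ((k:ℝ)) ≠ 0 := by
    exact_mod_cast Nat.one_le_iff_ne_zero.mp hk1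
  have hFq := hN k hkN
  rw [Real.dist_eq] at hFq
  rw [Real.dist_eq]
  set X := (1/(k:ℝ)) * jacobiTrace k (a k) (b k) φ' with hX
  set Y := (1/(k:ℝ)) * jacobiTrace k (a k) (b k) (fun x => P.eval x) with hY
  set Z := (1/Real.pi) * ∫ q : ℝ × ℝ,
      (∫ t in (0:ℝ)..Real.pi, P.eval (q.1 + 2*q.2*Real.cos t)) ∂μ with hZ
  set W := (1/Real.pi) * ∫ q : ℝ × ℝ,
      (∫ t in (0:ℝ)..Real.pi, φ' (q.1 + 2*q.2*Real.cos t)) ∂μ with hW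
  have h1 : |X - Y| ≤ ε/4 := by
    rw [hX, hY, ← mul_sub, abs_mul, abs_of_nonneg (show (0:ℝ) ≤ 1/(k:ℝ) by positivity)]
    unfold jacobiTrace
    rw [← Finset.sum_sub_distrib]
    have hsum : |∑ i : Fin k, (φ' ((jacobiMatrix_isHermitian k (a k) (b k)).eigenvalues i)
        - P.eval ((jacobiMatrix_isHermitian k (a k) (b k)).eigenvalues i))|
        ≤ (k:ℝ) * (ε/4) := by
      refine le_trans (Finset.abs_sum_le_sum_abs _ _) ?_
      refine le_trans (Finset.sum_le_sum (g := fun _ : Fin k => ε/4) (fun i _ => ?_)) ?_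
      · rw [abs_sub_comm]
        exact le_of_lt (hP _ (heig k i))
      · rw [Finset.sum_const, Finset.card_univ, Fintype.card_fin, nsmul_eq_mul]
    refine le_trans (mul_le_mul_of_nonneg_left hsum (by positivity)) ?_
    rw [← mul_assoc]
    rw [show (1/(k:ℝ)) * (k:ℝ) = 1 by field_simp]
    rw [one_mul]
  have h3 : |Z - W| ≤ ε/4 := by
    rw [hZ, hW, ← mul_sub, abs_mul, abs_of_nonneg (show (0:ℝ) ≤ 1/Real.pi by positivity)]
    rw [← MeasureTheory.integral_sub hFPint hFint]
    have hbnd : ‖∫ q : ℝ × ℝ, ((∫ t in (0:ℝ)..Real.pi, P.eval (q.1 + 2*q.2*Real.cos t))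
        - (∫ t in (0:ℝ)..Real.pi, φ' (q.1 + 2*q.2*Real.cos t))) ∂μ‖
        ≤ (ε/4) * |Real.pi - 0| := by
      have hgint : MeasureTheory.Integrable (fun _ : ℝ × ℝ => (ε/4) * |Real.pi - 0|) μ :=
        MeasureTheory.integrable_const _
      refine le_trans (MeasureTheory.norm_integral_le_of_norm_le hgint ?_) ?_
      · filter_upwards [ae_mem_square hsupp] with q hq
        have hsub : (∫ t in (0:ℝ)..Real.pi, P.eval (q.1 + 2*q.2*Real.cos t))
            - (∫ t in (0:ℝ)..Real.pi, φ' (q.1 + 2*q.2*Real.cos t))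
            = ∫ t in (0:ℝ)..Real.pi,
                (P.eval (q.1 + 2*q.2*Real.cos t) - φ' (q.1 + 2*q.2*Real.cos t)) := by
          refine (intervalIntegral.integral_sub ?_ ?_).symm
          · exact ((P.continuous.comp (continuous_const.add (continuous_const.mul Real.continuous_cos))).intervalIntegrable _ _)
          · exact ((hφ'c.comp (continuous_const.add (continuous_const.mul Real.continuous_cos))).intervalIntegrable _ _)
        rw [hsub]
        refine intervalIntegral.norm_integral_le_of_norm_le_const (C := ε/4) (fun t _ => ?_)
        rw [Real.norm_eq_abs]
        exact le_of_lt (hP _ (hargmem q hq t))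
      · rw [MeasureTheory.integral_const]
        simp [measure_univ]
    rw [Real.norm_eq_abs] at hbnd
    refine le_trans (mul_le_mul_of_nonneg_left hbnd (by positivity)) ?_
    rw [sub_zero, abs_of_nonneg (le_of_lt Real.pi_pos)]
    rw [show (1/Real.pi) * ((ε/4) * Real.pi) = ε/4 * (Real.pi / Real.pi) by ring,
      div_self Real.pi_ne_zero, mul_one]
  calc |X - W| ≤ |X - Y| + |Y - W| := abs_sub_le _ _ _
    _ ≤ |X - Y| + (|Y - Z| + |Z - W|) := by
        have := abs_sub_le Y Z W
        linarith
    _ < ε := by linarith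
end
end
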